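/- arXiv:2604.19044 — 5 statements merged into one kernel-verified Lean document; each statement's English description precedes it below -/
import Mathlib

section
/- Let F and G be Borel probability measures on the rectangle R = [a1,b1] × [a2,b2] ⊂ ℝ² that have the same marginal distributions (the pushforwards of F and G under each coordinate projection coincide). Then the following are equivalent: (i) F dominates G in the supermodular order, i.e. ∫ h dF ≥ ∫ h dG for every bounded measurable supermodular h : R → ℝ; (ii) for every (x,y) ∈ R, F({(s,t) ∈ R : s ≤ x, t ≤ y}) ≥ G({(s,t) ∈ R : s ≤ x, t ≤ y}). -/
open MeasureTheory Filter Set Topology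

namespace SMaux

noncomputable def clampI (a b u : ℝ) : ℝ := max a (min b u)

lemma clampI_mem {a b : ℝ} (hab : a ≤ b) (u : ℝ) : clampI a b u ∈ Set.Icc a b :=
  ⟨le_max_left _ _, max_le hab (min_le_left _ _)⟩

lemma clampI_eq_self {a b u : ℝ} (hu : u ∈ Set.Icc a b) : clampI a b u = u := by
  unfold clampI
  rw [min_eq_right hu.2, max_eq_right hu.1]

lemma monotone_clampI (a b : ℝ) : Monotone (clampI a b) := fun x y h => by
  unfold clampI
  exact max_le_max le_rfl (min_le_min le_rfl h)

noncomputable def sgrid (a b : ℝ) (d : ℕ → ℝ) (m : ℕ) : Finset ℝ :=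
  insert b ((Finset.range m).image fun k => clampI a b (d k))

lemma b_mem_sgrid (a b : ℝ) (d : ℕ → ℝ) (m : ℕ) : b ∈ sgrid a b d m :=
  Finset.mem_insert_self _ _

lemma sgrid_subset_Icc {a b : ℝ} (hab : a ≤ b) (d : ℕ → ℝ) (m : ℕ) :
    ∀ u ∈ sgrid a b d m, u ∈ Set.Icc a b := by
  intro u hu
  rcases Finset.mem_insert.1 hu with h | h
  · rw [h]; exact ⟨hab, le_rfl⟩
  · obtain ⟨k, _, hk⟩ := Finset.mem_image.1 h
    exact hk ▸ clampI_mem hab (d k)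

lemma mem_sgrid_of_d {a b : ℝ} (d : ℕ → ℝ) {k m : ℕ} (hkm : k < m)
    (hd : d k ∈ Set.Icc a b) : d k ∈ sgrid a b d m := by
  refine Finset.mem_insert_of_mem (Finset.mem_image.2 ⟨k, Finset.mem_range.2 hkm, ?_⟩)
  exact clampI_eq_self hd

noncomputable def gT (S : Finset ℝ) (b : ℝ) : ℕ → ℝ := fun i => (S.sort (· ≤ ·)).getD i b

lemma gT_mem {S : Finset ℝ} {b : ℝ} (hb : b ∈ S) (i : ℕ) : gT S b i ∈ S := by
  unfold gT
  by_cases h : i < (S.sort (· ≤ ·)).length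
  · rw [List.getD_eq_getElem _ _ h]
    exact (Finset.mem_sort _).1 (List.getElem_mem _)
  · rw [List.getD_eq_default _ _ (not_lt.1 h)]
    exact hb

lemma gT_last (S : Finset ℝ) (b : ℝ) : gT S b (S.sort (· ≤ ·)).length = b := by
  unfold gT
  exact List.getD_eq_default _ _ le_rfl

lemma gT_monotone {S : Finset ℝ} {b : ℝ} (hub : ∀ u ∈ S, u ≤ b) : Monotone (gT S b) := by
  intro i j hij
  unfold gT
  by_cases hj : j < (S.sort (· ≤ ·)).length
  · have hi : i < (S.sort (· ≤ ·)).length := lt_of_le_of_lt hij hj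
    rw [List.getD_eq_getElem _ _ hi, List.getD_eq_getElem _ _ hj]
    rcases eq_or_lt_of_le hij with h | h
    · subst h; exact le_rfl
    · exact List.pairwise_iff_getElem.1 (Finset.pairwise_sort S (· ≤ ·)) i j hi hj h
  · rw [List.getD_eq_default _ _ (not_lt.1 hj)]
    by_cases hi : i < (S.sort (· ≤ ·)).length
    · rw [List.getD_eq_getElem _ _ hi]
      exact hub _ ((Finset.mem_sort _).1 (List.getElem_mem _))
    · rw [List.getD_eq_default _ _ (not_lt.1 hi)]

lemma gT_surj {S : Finset ℝ} {b : ℝ} {u : ℝ} (hu : u ∈ S) : ∃ j, gT S b j = u := by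
  have hu' : u ∈ S.sort (· ≤ ·) := (Finset.mem_sort _).2 hu
  obtain ⟨j, hj, hget⟩ := List.mem_iff_getElem.1 hu'
  exact ⟨j, by unfold gT; rw [List.getD_eq_getElem _ _ hj]; exact hget⟩

noncomputable def gSnap (S : Finset ℝ) (b x : ℝ) : ℝ :=
  (insert b (S.filter (fun u => x ≤ u))).min' (Finset.insert_nonempty _ _)

lemma gSnap_mem {S : Finset ℝ} {b : ℝ} (hb : b ∈ S) (x : ℝ) : gSnap S b x ∈ S := by
  have := Finset.min'_mem (insert b (S.filter (fun u => x ≤ u))) (Finset.insert_nonempty _ _)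
  rcases Finset.mem_insert.1 this with h | h
  · rw [gSnap, h]; exact hb
  · exact (Finset.mem_filter.1 h).1

lemma le_gSnap {S : Finset ℝ} {b x : ℝ} (hx : x ≤ b) : x ≤ gSnap S b x := by
  have := Finset.min'_mem (insert b (S.filter (fun u => x ≤ u))) (Finset.insert_nonempty _ _)
  rcases Finset.mem_insert.1 this with h | h
  · rw [gSnap, h]; exact hx
  · exact (Finset.mem_filter.1 h).2

lemma gSnap_le {S : Finset ℝ} {b x u : ℝ} (hu : u ∈ S) (hxu : x ≤ u) : gSnap S b x ≤ u :=
  Finset.min'_le _ _ (Finset.mem_insert_of_mem (Finset.mem_filter.2 ⟨hu, hxu⟩))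

lemma gSnap_eq_self {S : Finset ℝ} {b x : ℝ} (hx : x ∈ S) (hxb : x ≤ b) : gSnap S b x = x :=
  le_antisymm (gSnap_le hx le_rfl) (le_gSnap hxb)

lemma abel1d (t : ℕ → ℝ) (ht : Monotone t) (K : ℕ) (v : ℕ → ℝ) (hv : v K = 0)
    (x : ℝ) (i₀ : ℕ) (hi₀ : i₀ ≤ K) (hx : x ≤ t i₀) (hmin : ∀ j, x ≤ t j → i₀ ≤ j) :
    ∑ i ∈ Finset.range K, (v i - v (i + 1)) * (if x ≤ t i then (1 : ℝ) else 0) = v i₀ := by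
  have hiff : ∀ i, (if x ≤ t i then (1 : ℝ) else 0) = if i₀ ≤ i then 1 else 0 := by
    intro i
    by_cases h : i₀ ≤ i
    · rw [if_pos h, if_pos (hx.trans (ht h))]
    · rw [if_neg h, if_neg (fun hc => h (hmin i hc))]
  calc ∑ i ∈ Finset.range K, (v i - v (i + 1)) * (if x ≤ t i then (1 : ℝ) else 0)
      = ∑ i ∈ Finset.range K, (if i₀ ≤ i then v i - v (i + 1) else 0) := by
        refine Finset.sum_congr rfl fun i _ => ?_
        rw [hiff i]
        by_cases h : i₀ ≤ i <;> simp [h]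
    _ = ∑ i ∈ (Finset.range K).filter (fun i => i₀ ≤ i), (v i - v (i + 1)) :=
        (Finset.sum_filter _ _).symm
    _ = ∑ i ∈ Finset.Ico i₀ K, (v i - v (i + 1)) := by
        congr 1
        ext i
        simp [Finset.mem_filter, Finset.mem_range, Finset.mem_Ico, and_comm]
    _ = v i₀ := by
        rw [Finset.sum_Ico_eq_sub _ hi₀, Finset.sum_range_sub' v, Finset.sum_range_sub' v]
        rw [hv]; ring

lemma abel2d (tX tY : ℕ → ℝ) (KX KY : ℕ) (W : ℝ → ℝ → ℝ)
    (hWright : ∀ j, W (tX KX) (tY j) = 0) (hWtop : ∀ i, W (tX i) (tY KY) = 0)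
    (htX : Monotone tX) (htY : Monotone tY)
    (x y : ℝ) (i₀ j₀ : ℕ) (hi₀ : i₀ ≤ KX) (hj₀ : j₀ ≤ KY)
    (hxi : x ≤ tX i₀) (hmini : ∀ j, x ≤ tX j → i₀ ≤ j)
    (hyj : y ≤ tY j₀) (hminj : ∀ j, y ≤ tY j → j₀ ≤ j) :
    ∑ i ∈ Finset.range KX, ∑ j ∈ Finset.range KY,
      (W (tX i) (tY j) - W (tX (i + 1)) (tY j) - W (tX i) (tY (j + 1))
        + W (tX (i + 1)) (tY (j + 1)))
        * (if x ≤ tX i then (1 : ℝ) else 0) * (if y ≤ tY j then (1 : ℝ) else 0)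
      = W (tX i₀) (tY j₀) := by
  have inner : ∀ i ∈ Finset.range KX,
      ∑ j ∈ Finset.range KY,
        (W (tX i) (tY j) - W (tX (i + 1)) (tY j) - W (tX i) (tY (j + 1))
          + W (tX (i + 1)) (tY (j + 1)))
          * (if x ≤ tX i then (1 : ℝ) else 0) * (if y ≤ tY j then (1 : ℝ) else 0)
      = (W (tX i) (tY j₀) - W (tX (i + 1)) (tY j₀)) * (if x ≤ tX i then (1 : ℝ) else 0) := by
    intro i _
    have e1 : ∑ j ∈ Finset.range KY,
        ((fun j => W (tX i) (tY j) - W (tX (i + 1)) (tY j)) j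
          - (fun j => W (tX i) (tY j) - W (tX (i + 1)) (tY j)) (j + 1))
          * (if y ≤ tY j then (1 : ℝ) else 0)
        = W (tX i) (tY j₀) - W (tX (i + 1)) (tY j₀) := by
      refine abel1d tY htY KY _ ?_ y j₀ hj₀ hyj hminj
      simp [hWtop i, hWtop (i + 1)]
    calc ∑ j ∈ Finset.range KY,
        (W (tX i) (tY j) - W (tX (i + 1)) (tY j) - W (tX i) (tY (j + 1))
          + W (tX (i + 1)) (tY (j + 1)))
          * (if x ≤ tX i then (1 : ℝ) else 0) * (if y ≤ tY j then (1 : ℝ) else 0)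
        = (∑ j ∈ Finset.range KY,
            ((fun j => W (tX i) (tY j) - W (tX (i + 1)) (tY j)) j
              - (fun j => W (tX i) (tY j) - W (tX (i + 1)) (tY j)) (j + 1))
              * (if y ≤ tY j then (1 : ℝ) else 0)) * (if x ≤ tX i then (1 : ℝ) else 0) := by
          rw [Finset.sum_mul]
          refine Finset.sum_congr rfl fun j _ => ?_
          ring
      _ = (W (tX i) (tY j₀) - W (tX (i + 1)) (tY j₀)) * (if x ≤ tX i then (1 : ℝ) else 0) := by
          rw [e1]
  rw [Finset.sum_congr rfl inner]
  exact abel1d tX htX KX (fun i => W (tX i) (tY j₀)) (hWright j₀) x i₀ hi₀ hxi hmini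

lemma grid_idx {S : Finset ℝ} {b x : ℝ} (hb : b ∈ S) (hub : ∀ u ∈ S, u ≤ b) (hx : x ≤ b) :
    ∃ i₀, i₀ ≤ (S.sort (· ≤ ·)).length ∧ x ≤ gT S b i₀ ∧ (∀ j, x ≤ gT S b j → i₀ ≤ j)
      ∧ gT S b i₀ = gSnap S b x := by
  have hex : ∃ i, x ≤ gT S b i := ⟨(S.sort (· ≤ ·)).length, by rw [gT_last]; exact hx⟩
  refine ⟨Nat.find hex, ?_, Nat.find_spec hex, fun j hj => Nat.find_min' hex hj, ?_⟩
  · exact Nat.find_min' hex (by rw [gT_last]; exact hx)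
  · refine le_antisymm ?_ (gSnap_le (gT_mem hb _) (Nat.find_spec hex))
    obtain ⟨j, hj⟩ := gT_surj (b := b) (gSnap_mem hb x)
    have hle : Nat.find hex ≤ j := Nat.find_min' hex (by rw [hj]; exact le_gSnap hx)
    calc gT S b (Nat.find hex) ≤ gT S b j := gT_monotone hub hle
      _ = _ := hj

lemma tendsto_gSnap {a b : ℝ} (d : ℕ → ℝ) {x : ℝ} (hax : a ≤ x) (hxb : x ≤ b)
    (hdense : ∀ ε, 0 < ε → x + ε ≤ b → ∃ k, x < d k ∧ d k < x + ε) :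
    Tendsto (fun m => gSnap (sgrid a b d m) b x) atTop (𝓝 x) := by
  rw [Metric.tendsto_atTop]
  intro ε hε
  by_cases hbb : x + ε ≤ b
  · obtain ⟨k, hk1, hk2⟩ := hdense ε hε hbb
    have hdIcc : d k ∈ Set.Icc a b := ⟨hax.trans hk1.le, hk2.le.trans hbb⟩
    refine ⟨k + 1, fun m hm => ?_⟩
    have hmem : d k ∈ sgrid a b d m := mem_sgrid_of_d d (lt_of_lt_of_le (Nat.lt_succ_self k) hm) hdIcc
    have h1 : gSnap (sgrid a b d m) b x ≤ d k := gSnap_le hmem hk1.le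
    have h2 : x ≤ gSnap (sgrid a b d m) b x := le_gSnap hxb
    rw [Real.dist_eq, abs_of_nonneg (by linarith)]
    linarith
  · refine ⟨0, fun m _ => ?_⟩
    have h2 : x ≤ gSnap (sgrid a b d m) b x := le_gSnap hxb
    have h3 : gSnap (sgrid a b d m) b x ≤ b := gSnap_le (b_mem_sgrid a b d m) hxb
    rw [Real.dist_eq, abs_of_nonneg (by linarith)]
    push_neg at hbb
    linarith

lemma gSnap_eventually {a b : ℝ} (d : ℕ → ℝ) {x : ℝ} (k : ℕ) (hdk : d k = x)
    (hx : x ∈ Set.Icc a b) : ∀ m, k + 1 ≤ m → gSnap (sgrid a b d m) b x = x := by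
  intro m hm
  have hmem : x ∈ sgrid a b d m := by
    have := mem_sgrid_of_d d (lt_of_lt_of_le (Nat.lt_succ_self k) hm) (hdk ▸ hx)
    rwa [hdk] at this
  exact gSnap_eq_self hmem hx.2

lemma integrable_of_bdd {μ : Measure (ℝ × ℝ)} [IsFiniteMeasure μ] {f : ℝ × ℝ → ℝ}
    (hf : Measurable f) {C : ℝ} (hC : ∀ p, |f p| ≤ C) : Integrable f μ :=
  Integrable.mono' (integrable_const C) hf.aestronglyMeasurable
    (ae_of_all _ fun p => by simpa [Real.norm_eq_abs] using hC p)

noncomputable def gK (a b : ℝ) (d : ℕ → ℝ) (m : ℕ) : ℕ := ((sgrid a b d m).sort (· ≤ ·)).length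

noncomputable def gTT (a b : ℝ) (d : ℕ → ℝ) (m : ℕ) : ℕ → ℝ := gT (sgrid a b d m) b

noncomputable def gSn (a b : ℝ) (d : ℕ → ℝ) (m : ℕ) (x : ℝ) : ℝ := gSnap (sgrid a b d m) b x

lemma gTT_mem {a b : ℝ} (hab : a ≤ b) (d : ℕ → ℝ) (m i : ℕ) : gTT a b d m i ∈ Set.Icc a b :=
  sgrid_subset_Icc hab d m _ (gT_mem (b_mem_sgrid a b d m) i)

lemma gTT_mono {a b : ℝ} (hab : a ≤ b) (d : ℕ → ℝ) (m : ℕ) : Monotone (gTT a b d m) :=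
  gT_monotone (fun u hu => (sgrid_subset_Icc hab d m u hu).2)

lemma gTT_last (a b : ℝ) (d : ℕ → ℝ) (m : ℕ) : gTT a b d m (gK a b d m) = b := gT_last _ _

lemma gSn_mem {a b : ℝ} (hab : a ≤ b) (d : ℕ → ℝ) (m : ℕ) (x : ℝ) :
    gSn a b d m x ∈ Set.Icc a b :=
  sgrid_subset_Icc hab d m _ (gSnap_mem (b_mem_sgrid a b d m) x)

lemma le_gSn {a b x : ℝ} (d : ℕ → ℝ) (m : ℕ) (hx : x ≤ b) : x ≤ gSn a b d m x := le_gSnap hx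

lemma gSn_idx {a b x : ℝ} (hab : a ≤ b) (d : ℕ → ℝ) (m : ℕ) (hx : x ≤ b) :
    ∃ i₀, i₀ ≤ gK a b d m ∧ x ≤ gTT a b d m i₀ ∧ (∀ j, x ≤ gTT a b d m j → i₀ ≤ j)
      ∧ gTT a b d m i₀ = gSn a b d m x :=
  grid_idx (b_mem_sgrid a b d m) (fun u hu => (sgrid_subset_Icc hab d m u hu).2) hx

lemma tendsto_gSn {a b : ℝ} (d : ℕ → ℝ) {x : ℝ} (hax : a ≤ x) (hxb : x ≤ b)
    (hdense : ∀ ε, 0 < ε → x + ε ≤ b → ∃ k, x < d k ∧ d k < x + ε) :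
    Filter.Tendsto (fun m => gSn a b d m x) Filter.atTop (nhds x) :=
  tendsto_gSnap d hax hxb hdense

lemma gSn_eventually {a b : ℝ} (d : ℕ → ℝ) {x : ℝ} (k : ℕ) (hdk : d k = x)
    (hx : x ∈ Set.Icc a b) : ∀ m, k + 1 ≤ m → gSn a b d m x = x :=
  gSnap_eventually d k hdk hx

noncomputable def DD (w : ℝ → ℝ → ℝ) (t s : ℕ → ℝ) (i j : ℕ) : ℝ :=
  w (t i) (s j) - w (t (i + 1)) (s j) - w (t i) (s (j + 1)) + w (t (i + 1)) (s (j + 1))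

noncomputable def fap (w : ℝ → ℝ → ℝ) (t s : ℕ → ℝ) (K L : ℕ) (p : ℝ × ℝ) : ℝ :=
  ∑ i ∈ Finset.range K, ∑ j ∈ Finset.range L,
    DD w t s i j * (if p.1 ≤ t i then (1 : ℝ) else 0) * (if p.2 ≤ s j then (1 : ℝ) else 0)

lemma fap_snap {a₁ b₁ a₂ b₂ : ℝ} (h1 : a₁ ≤ b₁) (h2 : a₂ ≤ b₂) (dx dy : ℕ → ℝ)
    (w : ℝ → ℝ → ℝ) (hwb1 : ∀ v, w b₁ v = 0) (hwb2 : ∀ u, w u b₂ = 0) (m : ℕ) {x y : ℝ}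
    (hx : x ≤ b₁) (hy : y ≤ b₂) :
    fap w (gTT a₁ b₁ dx m) (gTT a₂ b₂ dy m) (gK a₁ b₁ dx m) (gK a₂ b₂ dy m) (x, y)
      = w (gSn a₁ b₁ dx m x) (gSn a₂ b₂ dy m y) := by
  obtain ⟨i₀, hi₀K, hxi, hmini, hieq⟩ := gSn_idx h1 dx m hx
  obtain ⟨j₀, hj₀K, hyj, hminj, hjeq⟩ := gSn_idx h2 dy m hy
  rw [← hieq, ← hjeq]
  exact abel2d _ _ _ _ w
    (fun j => by rw [gTT_last]; exact hwb1 _)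
    (fun i => by rw [gTT_last]; exact hwb2 _)
    (gTT_mono h1 dx m) (gTT_mono h2 dy m) x y i₀ j₀ hi₀K hj₀K hxi hmini hyj hminj

lemma fap_measurable (w : ℝ → ℝ → ℝ) (t s : ℕ → ℝ) (K L : ℕ) :
    Measurable (fap w t s K L) := by
  unfold fap
  refine Finset.measurable_sum _ (fun i _ => Finset.measurable_sum _ (fun j _ => ?_))
  exact (measurable_const.mul
      (Measurable.ite (measurableSet_le measurable_fst measurable_const)
        measurable_const measurable_const)).mul
    (Measurable.ite (measurableSet_le measurable_snd measurable_const)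
      measurable_const measurable_const)

lemma fap_integral (μ : Measure (ℝ × ℝ)) [IsFiniteMeasure μ] (w : ℝ → ℝ → ℝ)
    (t s : ℕ → ℝ) (K L : ℕ) :
    ∫ p, fap w t s K L p ∂μ
      = ∑ i ∈ Finset.range K, ∑ j ∈ Finset.range L,
          DD w t s i j * (μ {p : ℝ × ℝ | p.1 ≤ t i ∧ p.2 ≤ s j}).toReal := by
  have hQ : ∀ c e : ℝ, MeasurableSet {p : ℝ × ℝ | p.1 ≤ c ∧ p.2 ≤ e} := by
    intro c e
    rw [Set.setOf_and]
    exact (measurableSet_le measurable_fst measurable_const).inter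
      (measurableSet_le measurable_snd measurable_const)
  have hterm : ∀ c e coef : ℝ,
      (fun p : ℝ × ℝ => coef * (if p.1 ≤ c then (1 : ℝ) else 0) * (if p.2 ≤ e then (1 : ℝ) else 0))
        = Set.indicator {p : ℝ × ℝ | p.1 ≤ c ∧ p.2 ≤ e} (fun _ => coef) := by
    intro c e coef
    funext p
    by_cases hc : p.1 ≤ c <;> by_cases he : p.2 ≤ e <;>
      simp [Set.indicator_apply, hc, he]
  have hint : ∀ i j, Integrable
      (fun p : ℝ × ℝ => DD w t s i j * (if p.1 ≤ t i then (1 : ℝ) else 0)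
        * (if p.2 ≤ s j then (1 : ℝ) else 0)) μ := by
    intro i j
    rw [hterm]
    exact (integrable_const _).indicator (hQ _ _)
  unfold fap
  rw [integral_finset_sum _ (fun i _ => integrable_finset_sum _ (fun j _ => hint i j))]
  refine Finset.sum_congr rfl fun i _ => ?_
  rw [integral_finset_sum _ (fun j _ => hint i j)]
  refine Finset.sum_congr rfl fun j _ => ?_
  rw [hterm, integral_indicator_const _ (hQ _ _), smul_eq_mul, mul_comm]
  rfl

end SMaux
open MeasureTheory Filter Set Topology SMaux in
/-- For Borel probability measures `F`, `G` on the rectangle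
`R = [a₁,b₁] × [a₂,b₂] ⊆ ℝ²` with the same coordinate marginals, domination of `G` by `F`
in the supermodular order is equivalent to pointwise domination of the joint CDFs. -/
theorem supermodular_order_iff_cdf_domination
    (a₁ b₁ a₂ b₂ : ℝ) (R : Set (ℝ × ℝ)) (hR : R = Set.Icc (a₁, a₂) (b₁, b₂))
    (F G : Measure (ℝ × ℝ)) [IsProbabilityMeasure F] [IsProbabilityMeasure G]
    (hFsupp : F Rᶜ = 0) (hGsupp : G Rᶜ = 0)
    (hmarg1 : F.map Prod.fst = G.map Prod.fst)
    (hmarg2 : F.map Prod.snd = G.map Prod.snd) :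
    (∀ h : ℝ × ℝ → ℝ, Measurable h → (∃ C, ∀ p, |h p| ≤ C) →
        (∀ p ∈ R, ∀ q ∈ R, h p + h q ≤ h (p ⊔ q) + h (p ⊓ q)) →
        ∫ p, h p ∂G ≤ ∫ p, h p ∂F) ↔
      (∀ x y : ℝ, (x, y) ∈ R →
        G {p | p ∈ R ∧ p.1 ≤ x ∧ p.2 ≤ y} ≤ F {p | p ∈ R ∧ p.1 ≤ x ∧ p.2 ≤ y}) := by
  have hRne : R.Nonempty := by
    rcases Set.eq_empty_or_nonempty R with hre | hre
    · exfalso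
      rw [hre, Set.compl_empty] at hFsupp
      simp at hFsupp
    · exact hre
  have hab : ((a₁, a₂) : ℝ × ℝ) ≤ (b₁, b₂) := Set.nonempty_Icc.1 (hR ▸ hRne)
  have ha1b1 : a₁ ≤ b₁ := hab.1
  have ha2b2 : a₂ ≤ b₂ := hab.2
  have hmemR : ∀ x y : ℝ, a₁ ≤ x → x ≤ b₁ → a₂ ≤ y → y ≤ b₂ → (x, y) ∈ R := by
    intro x y h1 h2 h3 h4
    rw [hR]
    exact Set.mem_Icc.2 ⟨⟨h1, h3⟩, ⟨h2, h4⟩⟩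
  have hmemR' : ∀ p : ℝ × ℝ, p ∈ R → a₁ ≤ p.1 ∧ p.1 ≤ b₁ ∧ a₂ ≤ p.2 ∧ p.2 ≤ b₂ := by
    intro p hp
    rw [hR, Set.mem_Icc] at hp
    exact ⟨hp.1.1, hp.2.1, hp.1.2, hp.2.2⟩
  constructor
  · -- supermodular order implies CDF domination
    intro hsm x y hxy
    set S : Set (ℝ × ℝ) := {p : ℝ × ℝ | p.1 ≤ x} ∩ {p : ℝ × ℝ | p.2 ≤ y} with hSdef
    have hSmeas : MeasurableSet S :=
      (measurableSet_le measurable_fst measurable_const).inter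
        (measurableSet_le measurable_snd measurable_const)
    set h₀ : ℝ × ℝ → ℝ := S.indicator (fun _ => (1 : ℝ)) with hh₀
    have h₀nonneg : ∀ p, 0 ≤ h₀ p := fun p => Set.indicator_nonneg (fun _ _ => zero_le_one) p
    have v1 : ∀ p, p ∈ S → h₀ p = 1 := fun p hp => Set.indicator_of_mem hp _
    have v0 : ∀ p, p ∉ S → h₀ p = 0 := fun p hp => Set.indicator_of_notMem hp _
    have key : ∀ p q : ℝ × ℝ, h₀ p + h₀ q ≤ h₀ (p ⊔ q) + h₀ (p ⊓ q) := by
      intro p q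
      by_cases hp : p ∈ S <;> by_cases hq : q ∈ S
      · have hsup : p ⊔ q ∈ S := by
          constructor
          · show (p ⊔ q).1 ≤ x
            rw [Prod.fst_sup]
            exact sup_le hp.1 hq.1
          · show (p ⊔ q).2 ≤ y
            rw [Prod.snd_sup]
            exact sup_le hp.2 hq.2
        have hinf : p ⊓ q ∈ S := by
          constructor
          · show (p ⊓ q).1 ≤ x
            rw [Prod.fst_inf]
            exact le_trans inf_le_left hp.1
          · show (p ⊓ q).2 ≤ y
            rw [Prod.snd_inf]
            exact le_trans inf_le_left hp.2
        rw [v1 p hp, v1 q hq, v1 _ hsup, v1 _ hinf]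
      · have hinf : p ⊓ q ∈ S := by
          constructor
          · show (p ⊓ q).1 ≤ x
            rw [Prod.fst_inf]
            exact le_trans inf_le_left hp.1
          · show (p ⊓ q).2 ≤ y
            rw [Prod.snd_inf]
            exact le_trans inf_le_left hp.2
        rw [v1 p hp, v0 q hq, v1 _ hinf]
        have := h₀nonneg (p ⊔ q)
        linarith
      · have hinf : p ⊓ q ∈ S := by
          constructor
          · show (p ⊓ q).1 ≤ x
            rw [Prod.fst_inf]
            exact le_trans inf_le_right hq.1
          · show (p ⊓ q).2 ≤ y
            rw [Prod.snd_inf]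
            exact le_trans inf_le_right hq.2
        rw [v0 p hp, v1 q hq, v1 _ hinf]
        have := h₀nonneg (p ⊔ q)
        linarith
      · rw [v0 p hp, v0 q hq]
        have := h₀nonneg (p ⊔ q)
        have := h₀nonneg (p ⊓ q)
        linarith
    have hbd : ∀ p, |h₀ p| ≤ 1 := by
      intro p
      by_cases hp : p ∈ S
      · rw [v1 p hp]; simp
      · rw [v0 p hp]; simp
    have hint := hsm h₀ (measurable_const.indicator hSmeas) ⟨1, hbd⟩ (fun p _ q _ => key p q)
    rw [hh₀, integral_indicator_const (1 : ℝ) hSmeas, integral_indicator_const (1 : ℝ) hSmeas,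
      smul_eq_mul, smul_eq_mul, mul_one, mul_one] at hint
    have hGS : G S ≤ F S :=
      (ENNReal.toReal_le_toReal (measure_ne_top G S) (measure_ne_top F S)).1 hint
    have hset : {p : ℝ × ℝ | p ∈ R ∧ p.1 ≤ x ∧ p.2 ≤ y} = S ∩ R := by
      ext p
      simp only [hSdef, Set.mem_setOf_eq, Set.mem_inter_iff]
      tauto
    rw [hset, measure_inter_conull hGsupp, measure_inter_conull hFsupp]
    exact hGS
  · -- CDF domination implies supermodular order
    intro hcdf h hmeas hbdd hsm
    obtain ⟨C, hC⟩ := hbdd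
    set w : ℝ → ℝ → ℝ := fun u v => h (u, v) - h (u, b₂) - h (b₁, v) + h (b₁, b₂) with hw
    have hwb1 : ∀ v, w b₁ v = 0 := fun v => by simp only [hw]; ring
    have hwb2 : ∀ u, w u b₂ = 0 := fun u => by simp only [hw]; ring
    have hMw : ∀ x1 x2 y1 y2 : ℝ, a₁ ≤ x1 → x1 ≤ x2 → x2 ≤ b₁ → a₂ ≤ y1 → y1 ≤ y2 → y2 ≤ b₂ →
        0 ≤ w x1 y1 - w x2 y1 - w x1 y2 + w x2 y2 := by
      intro x1 x2 y1 y2 h1 h2 h3 h4 h5 h6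
      have hsm' := hsm (x1, y2) (hmemR _ _ h1 (h2.trans h3) (h4.trans h5) h6)
        (x2, y1) (hmemR _ _ (h1.trans h2) h3 h4 (h5.trans h6))
      have hsup : ((x1, y2) : ℝ × ℝ) ⊔ (x2, y1) = (x2, y2) := by
        apply Prod.ext
        · rw [Prod.fst_sup]; exact sup_eq_right.2 h2
        · rw [Prod.snd_sup]; exact sup_eq_left.2 h5
      have hinf : ((x1, y2) : ℝ × ℝ) ⊓ (x2, y1) = (x1, y1) := by
        apply Prod.ext
        · rw [Prod.fst_inf]; exact inf_eq_left.2 h2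
        · rw [Prod.snd_inf]; exact inf_eq_right.2 h5
      rw [hsup, hinf] at hsm'
      simp only [hw]
      linarith
    have hanti_x : ∀ x1 x2 y : ℝ, a₁ ≤ x1 → x1 ≤ x2 → x2 ≤ b₁ → a₂ ≤ y → y ≤ b₂ →
        w x2 y ≤ w x1 y := by
      intro x1 x2 y h1 h2 h3 h4 h5
      have := hMw x1 x2 y b₂ h1 h2 h3 h4 h5 le_rfl
      have e1 := hwb2 x1
      have e2 := hwb2 x2
      linarith
    have hbound_x : ∀ x1 x2 y : ℝ, a₁ ≤ x1 → x1 ≤ x2 → x2 ≤ b₁ → a₂ ≤ y → y ≤ b₂ →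
        w x1 y - w x2 y ≤ w x1 a₂ - w x2 a₂ := by
      intro x1 x2 y h1 h2 h3 h4 h5
      have := hMw x1 x2 a₂ y h1 h2 h3 le_rfl h4 h5
      linarith
    have hanti_y : ∀ x y1 y2 : ℝ, a₁ ≤ x → x ≤ b₁ → a₂ ≤ y1 → y1 ≤ y2 → y2 ≤ b₂ →
        w x y2 ≤ w x y1 := by
      intro x y1 y2 h1 h2 h3 h4 h5
      have := hMw x b₁ y1 y2 h1 h2 le_rfl h3 h4 h5
      have e1 := hwb1 y1
      have e2 := hwb1 y2
      linarith
    have hbound_y : ∀ x y1 y2 : ℝ, a₁ ≤ x → x ≤ b₁ → a₂ ≤ y1 → y1 ≤ y2 → y2 ≤ b₂ →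
        w x y1 - w x y2 ≤ w a₁ y1 - w a₁ y2 := by
      intro x y1 y2 h1 h2 h3 h4 h5
      have := hMw a₁ x y1 y2 le_rfl h1 h2 h3 h4 h5
      linarith
    have hwabs : ∀ u v : ℝ, |w u v| ≤ 4 * C := by
      intro u v
      have c1 := abs_le.1 (hC (u, v))
      have c2 := abs_le.1 (hC (u, b₂))
      have c3 := abs_le.1 (hC (b₁, v))
      have c4 := abs_le.1 (hC (b₁, b₂))
      rw [abs_le]
      constructor <;> · simp only [hw]; linarith
    have hwmeas : Measurable (fun p : ℝ × ℝ => w p.1 p.2) := by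
      simp only [hw]
      exact ((hmeas.sub (hmeas.comp (measurable_fst.prodMk measurable_const))).sub
        (hmeas.comp (measurable_const.prodMk measurable_snd))).add measurable_const
    -- discontinuity sets and enumerations
    set f1 : ℝ → ℝ := fun u => w (clampI a₁ b₁ u) a₂ with hf1
    set f2 : ℝ → ℝ := fun v => w a₁ (clampI a₂ b₂ v) with hf2
    have hf1anti : Antitone f1 := by
      intro u v huv
      have hu := clampI_mem ha1b1 u
      have hv := clampI_mem ha1b1 v
      exact hanti_x _ _ _ hu.1 (monotone_clampI a₁ b₁ huv) hv.2 le_rfl ha2b2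
    have hf2anti : Antitone f2 := by
      intro u v huv
      have hu := clampI_mem ha2b2 u
      have hv := clampI_mem ha2b2 v
      exact hanti_y _ _ _ le_rfl ha1b1 hu.1 (monotone_clampI a₂ b₂ huv) hv.2
    obtain ⟨dx, hdxeq⟩ : ∃ dx : ℕ → ℝ,
        ({u : ℝ | ¬ContinuousAt f1 u} ∪ Set.range ((↑) : ℚ → ℝ)) = Set.range dx :=
      (hf1anti.countable_not_continuousAt.union (Set.countable_range _)).exists_eq_range
        ⟨((0 : ℚ) : ℝ), Or.inr ⟨0, rfl⟩⟩
    obtain ⟨dy, hdyeq⟩ : ∃ dy : ℕ → ℝ,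
        ({u : ℝ | ¬ContinuousAt f2 u} ∪ Set.range ((↑) : ℚ → ℝ)) = Set.range dy :=
      (hf2anti.countable_not_continuousAt.union (Set.countable_range _)).exists_eq_range
        ⟨((0 : ℚ) : ℝ), Or.inr ⟨0, rfl⟩⟩
    -- convergence of snapped points, coordinatewise
    have hXconv : ∀ x : ℝ, a₁ ≤ x → x ≤ b₁ →
        Tendsto (fun m => w (gSn a₁ b₁ dx m x) a₂) atTop (𝓝 (w x a₂)) := by
      intro x h1 h2
      by_cases hxD : x ∈ ({u : ℝ | ¬ContinuousAt f1 u} ∪ Set.range ((↑) : ℚ → ℝ))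
      · rw [hdxeq] at hxD
        obtain ⟨k, hk⟩ := hxD
        apply tendsto_atTop_of_eventually_const (i₀ := k + 1)
        intro m hm
        rw [gSn_eventually dx k hk ⟨h1, h2⟩ m hm]
      · have hcont : ContinuousAt f1 x := by
          by_contra hc
          exact hxD (Or.inl hc)
        have hsnap : Tendsto (fun m => gSn a₁ b₁ dx m x) atTop (𝓝 x) := by
          refine tendsto_gSn dx h1 h2 ?_
          intro ε hε hεb
          obtain ⟨q, hq1, hq2⟩ := exists_rat_btwn (show x < x + ε by linarith)
          have hqD : ((q : ℝ)) ∈ ({u : ℝ | ¬ContinuousAt f1 u} ∪ Set.range ((↑) : ℚ → ℝ)) :=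
            Or.inr ⟨q, rfl⟩
          rw [hdxeq] at hqD
          obtain ⟨k, hk⟩ := hqD
          exact ⟨k, by rw [hk]; exact hq1, by rw [hk]; exact hq2⟩
        have hcomp := (hcont.tendsto.comp hsnap)
        have he1 : ∀ m, f1 (gSn a₁ b₁ dx m x) = w (gSn a₁ b₁ dx m x) a₂ := by
          intro m
          simp only [hf1]
          rw [clampI_eq_self (gSn_mem ha1b1 dx m x)]
        have he2 : f1 x = w x a₂ := by
          simp only [hf1]
          rw [clampI_eq_self ⟨h1, h2⟩]
        rw [he2] at hcomp
        exact hcomp.congr he1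
    have hYconv : ∀ y : ℝ, a₂ ≤ y → y ≤ b₂ →
        Tendsto (fun m => w a₁ (gSn a₂ b₂ dy m y)) atTop (𝓝 (w a₁ y)) := by
      intro y h1 h2
      by_cases hyD : y ∈ ({u : ℝ | ¬ContinuousAt f2 u} ∪ Set.range ((↑) : ℚ → ℝ))
      · rw [hdyeq] at hyD
        obtain ⟨k, hk⟩ := hyD
        apply tendsto_atTop_of_eventually_const (i₀ := k + 1)
        intro m hm
        rw [gSn_eventually dy k hk ⟨h1, h2⟩ m hm]
      · have hcont : ContinuousAt f2 y := by
          by_contra hc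
          exact hyD (Or.inl hc)
        have hsnap : Tendsto (fun m => gSn a₂ b₂ dy m y) atTop (𝓝 y) := by
          refine tendsto_gSn dy h1 h2 ?_
          intro ε hε hεb
          obtain ⟨q, hq1, hq2⟩ := exists_rat_btwn (show y < y + ε by linarith)
          have hqD : ((q : ℝ)) ∈ ({u : ℝ | ¬ContinuousAt f2 u} ∪ Set.range ((↑) : ℚ → ℝ)) :=
            Or.inr ⟨q, rfl⟩
          rw [hdyeq] at hqD
          obtain ⟨k, hk⟩ := hqD
          exact ⟨k, by rw [hk]; exact hq1, by rw [hk]; exact hq2⟩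
        have hcomp := (hcont.tendsto.comp hsnap)
        have he1 : ∀ m, f2 (gSn a₂ b₂ dy m y) = w a₁ (gSn a₂ b₂ dy m y) := by
          intro m
          simp only [hf2]
          rw [clampI_eq_self (gSn_mem ha2b2 dy m y)]
        have he2 : f2 y = w a₁ y := by
          simp only [hf2]
          rw [clampI_eq_self ⟨h1, h2⟩]
        rw [he2] at hcomp
        exact hcomp.congr he1
    -- pointwise convergence of the approximants
    have hconv : ∀ p : ℝ × ℝ, p ∈ R →
        Tendsto (fun m => w (gSn a₁ b₁ dx m p.1) (gSn a₂ b₂ dy m p.2)) atTop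
          (𝓝 (w p.1 p.2)) := by
      intro p hp
      obtain ⟨h1, h2, h3, h4⟩ := hmemR' p hp
      have hA : Tendsto (fun m => w p.1 a₂ - w (gSn a₁ b₁ dx m p.1) a₂) atTop (𝓝 0) := by
        have := (tendsto_const_nhds (x := w p.1 a₂) (f := atTop (α := ℕ))).sub (hXconv p.1 h1 h2)
        simpa using this
      have hB : Tendsto (fun m => w a₁ p.2 - w a₁ (gSn a₂ b₂ dy m p.2)) atTop (𝓝 0) := by
        have := (tendsto_const_nhds (x := w a₁ p.2) (f := atTop (α := ℕ))).sub (hYconv p.2 h3 h4)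
        simpa using this
      rw [tendsto_iff_dist_tendsto_zero]
      refine squeeze_zero (fun m => dist_nonneg) ?_ (by simpa using hA.add hB)
      intro m
      set sx := gSn a₁ b₁ dx m p.1 with hsx
      set sy := gSn a₂ b₂ dy m p.2 with hsy
      have hsxI := gSn_mem ha1b1 dx m p.1
      have hsyI := gSn_mem ha2b2 dy m p.2
      have hxsx : p.1 ≤ sx := le_gSn dx m h2
      have hysy : p.2 ≤ sy := le_gSn dy m h4
      have e1 : 0 ≤ w p.1 p.2 - w sx p.2 := by
        have := hanti_x p.1 sx p.2 h1 hxsx hsxI.2 h3 h4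
        linarith
      have e2 : w p.1 p.2 - w sx p.2 ≤ w p.1 a₂ - w sx a₂ :=
        hbound_x p.1 sx p.2 h1 hxsx hsxI.2 h3 h4
      have e3 : 0 ≤ w sx p.2 - w sx sy := by
        have := hanti_y sx p.2 sy hsxI.1 hsxI.2 h3 hysy hsyI.2
        linarith
      have e4 : w sx p.2 - w sx sy ≤ w a₁ p.2 - w a₁ sy :=
        hbound_y sx p.2 sy hsxI.1 hsxI.2 h3 hysy hsyI.2
      rw [Real.dist_eq, abs_le]
      constructor <;> linarith
    -- the discrete inequality and dominated convergence
    have haeR : ∀ (μ : Measure (ℝ × ℝ)), μ Rᶜ = 0 → ∀ᵐ p ∂μ, p ∈ R := by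
      intro μ hμ
      rw [ae_iff]
      exact hμ
    have hdct : ∀ (μ : Measure (ℝ × ℝ)), IsProbabilityMeasure μ → μ Rᶜ = 0 →
        Tendsto (fun m => ∫ p, fap w (gTT a₁ b₁ dx m) (gTT a₂ b₂ dy m)
          (gK a₁ b₁ dx m) (gK a₂ b₂ dy m) p ∂μ) atTop (𝓝 (∫ p, w p.1 p.2 ∂μ)) := by
      intro μ hμ hμR
      haveI := hμ
      refine tendsto_integral_of_dominated_convergence (fun _ => 4 * C)
        (fun m => (fap_measurable _ _ _ _ _).aestronglyMeasurable)
        (integrable_const _) ?_ ?_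
      · intro m
        filter_upwards [haeR μ hμR] with p hp
        obtain ⟨h1, h2, h3, h4⟩ := hmemR' p hp
        have hps : fap w (gTT a₁ b₁ dx m) (gTT a₂ b₂ dy m) (gK a₁ b₁ dx m) (gK a₂ b₂ dy m) p
            = w (gSn a₁ b₁ dx m p.1) (gSn a₂ b₂ dy m p.2) := by
          have := fap_snap ha1b1 ha2b2 dx dy w hwb1 hwb2 m h2 h4
          simpa using this
        rw [hps, Real.norm_eq_abs]
        exact hwabs _ _
      · filter_upwards [haeR μ hμR] with p hp
        have hps : ∀ m, fap w (gTT a₁ b₁ dx m) (gTT a₂ b₂ dy m) (gK a₁ b₁ dx m)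
            (gK a₂ b₂ dy m) p = w (gSn a₁ b₁ dx m p.1) (gSn a₂ b₂ dy m p.2) := by
          intro m
          obtain ⟨h1, h2, h3, h4⟩ := hmemR' p hp
          have := fap_snap ha1b1 ha2b2 dx dy w hwb1 hwb2 m h2 h4
          simpa using this
        exact (hconv p hp).congr (fun m => (hps m).symm)
    have hcomp : ∀ m : ℕ,
        ∫ p, fap w (gTT a₁ b₁ dx m) (gTT a₂ b₂ dy m) (gK a₁ b₁ dx m) (gK a₂ b₂ dy m) p ∂G
          ≤ ∫ p, fap w (gTT a₁ b₁ dx m) (gTT a₂ b₂ dy m) (gK a₁ b₁ dx m) (gK a₂ b₂ dy m) p ∂F := by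
      intro m
      rw [fap_integral F w _ _ _ _, fap_integral G w _ _ _ _]
      refine Finset.sum_le_sum fun i _ => Finset.sum_le_sum fun j _ => ?_
      have hQR : ∀ (μ : Measure (ℝ × ℝ)), μ Rᶜ = 0 →
          μ {p : ℝ × ℝ | p.1 ≤ gTT a₁ b₁ dx m i ∧ p.2 ≤ gTT a₂ b₂ dy m j}
            = μ {p : ℝ × ℝ | p ∈ R ∧ p.1 ≤ gTT a₁ b₁ dx m i ∧ p.2 ≤ gTT a₂ b₂ dy m j} := by
        intro μ hμ
        rw [show {p : ℝ × ℝ | p ∈ R ∧ p.1 ≤ gTT a₁ b₁ dx m i ∧ p.2 ≤ gTT a₂ b₂ dy m j}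
            = {p : ℝ × ℝ | p.1 ≤ gTT a₁ b₁ dx m i ∧ p.2 ≤ gTT a₂ b₂ dy m j} ∩ R from by
          ext p; simp only [Set.mem_setOf_eq, Set.mem_inter_iff]; tauto]
        rw [measure_inter_conull hμ]
      have hDnn : 0 ≤ DD w (gTT a₁ b₁ dx m) (gTT a₂ b₂ dy m) i j := by
        have hm1 := gTT_mem ha1b1 dx m i
        have hm2 := gTT_mem ha1b1 dx m (i + 1)
        have hm3 := gTT_mem ha2b2 dy m j
        have hm4 := gTT_mem ha2b2 dy m (j + 1)
        exact hMw _ _ _ _ hm1.1 (gTT_mono ha1b1 dx m (Nat.le_succ i)) hm2.2 hm3.1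
          (gTT_mono ha2b2 dy m (Nat.le_succ j)) hm4.2
      refine mul_le_mul_of_nonneg_left ?_ hDnn
      rw [hQR F hFsupp, hQR G hGsupp]
      refine ENNReal.toReal_mono (measure_ne_top F _) ?_
      exact hcdf _ _ (hmemR _ _ (gTT_mem ha1b1 dx m i).1 (gTT_mem ha1b1 dx m i).2
        (gTT_mem ha2b2 dy m j).1 (gTT_mem ha2b2 dy m j).2)
    have hwle : ∫ p, w p.1 p.2 ∂G ≤ ∫ p, w p.1 p.2 ∂F :=
      le_of_tendsto_of_tendsto' (hdct G ‹_› hGsupp) (hdct F ‹_› hFsupp) hcomp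
    -- marginal decomposition
    have hsplit : ∀ (μ : Measure (ℝ × ℝ)), IsProbabilityMeasure μ →
        ∫ p, h p ∂μ = ∫ p, w p.1 p.2 ∂μ + ∫ p, h (p.1, b₂) ∂μ + ∫ p, h (b₁, p.2) ∂μ
          - h (b₁, b₂) := by
      intro μ hμ
      haveI := hμ
      have i1 : Integrable (fun p : ℝ × ℝ => h (p.1, b₂)) μ :=
        integrable_of_bdd (hmeas.comp (measurable_fst.prodMk measurable_const))
          (C := C) (fun p => hC _)
      have i2 : Integrable (fun p : ℝ × ℝ => h (b₁, p.2)) μ :=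
        integrable_of_bdd (hmeas.comp (measurable_const.prodMk measurable_snd))
          (C := C) (fun p => hC _)
      have i0 : Integrable h μ := integrable_of_bdd hmeas hC
      have hfun : (fun p : ℝ × ℝ => w p.1 p.2)
          = fun p : ℝ × ℝ => h p - h (p.1, b₂) - h (b₁, p.2) + h (b₁, b₂) := by
        funext p
        simp only [hw]
      have j2 : Integrable (fun p : ℝ × ℝ => h p - h (p.1, b₂)) μ := i0.sub i1
      have j1 : Integrable (fun p : ℝ × ℝ => h p - h (p.1, b₂) - h (b₁, p.2)) μ := j2.sub i2
      rw [hfun, integral_add j1 (integrable_const _),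
        integral_sub j2 i2, integral_sub i0 i1, integral_const]
      simp [measure_univ]
      ring
    have hm1 : ∫ p, h (p.1, b₂) ∂F = ∫ p, h (p.1, b₂) ∂G := by
      have hg : StronglyMeasurable (fun u : ℝ => h (u, b₂)) :=
        (hmeas.comp (measurable_id.prodMk measurable_const)).stronglyMeasurable
      calc ∫ p, h (p.1, b₂) ∂F
          = ∫ u, h (u, b₂) ∂(F.map Prod.fst) :=
            (integral_map measurable_fst.aemeasurable hg.aestronglyMeasurable).symm
        _ = ∫ u, h (u, b₂) ∂(G.map Prod.fst) := by rw [hmarg1]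
        _ = ∫ p, h (p.1, b₂) ∂G :=
            integral_map measurable_fst.aemeasurable hg.aestronglyMeasurable
    have hm2 : ∫ p, h (b₁, p.2) ∂F = ∫ p, h (b₁, p.2) ∂G := by
      have hg : StronglyMeasurable (fun v : ℝ => h (b₁, v)) :=
        (hmeas.comp (measurable_const.prodMk measurable_id)).stronglyMeasurable
      calc ∫ p, h (b₁, p.2) ∂F
          = ∫ v, h (b₁, v) ∂(F.map Prod.snd) :=
            (integral_map measurable_snd.aemeasurable hg.aestronglyMeasurable).symm
        _ = ∫ v, h (b₁, v) ∂(G.map Prod.snd) := by rw [hmarg2]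
        _ = ∫ p, h (b₁, p.2) ∂G :=
            integral_map measurable_snd.aemeasurable hg.aestronglyMeasurable
    rw [hsplit G ‹_›, hsplit F ‹_›, hm1, hm2]
    linarith
end

section
/- Let F and G be Borel probability measures on ∏_{i=1}^n [a_i,b_i] ⊂ ℝⁿ with ∫ h dF ≥ ∫ h dG for every bounded measurable supermodular h (F ≿_SM G). Let u_i : [a_i,b_i] → ℝ be bounded, measurable and nondecreasing for each i, and set I(θ) = ∑_{i=1}^n u_i(θ_i). Then ∫ h(I(θ)) dG(θ) ≥ ∫ h(I(θ)) dF(θ) for every concave h : ℝ → ℝ; in particular, taking h nondecreasing and concave, the pushforward of G under I second-order stochastically dominates the pushforward of F under I. -/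
open MeasureTheory

/-- Key convexity fact: if `m ≤ s ≤ M` and `m + M = s + t`, then for convex `f`,
`f s + f t ≤ f m + f M`. -/
lemma convex_pair_le (f : ℝ → ℝ) (hf : ConvexOn ℝ Set.univ f)
    {m M s t : ℝ} (hms : m ≤ s) (hsM : s ≤ M) (hst : m + M = s + t) :
    f s + f t ≤ f m + f M := by
  rcases eq_or_lt_of_le (hms.trans hsM) with h | h
  · have hs : s = m := le_antisymm (h ▸ hsM) hms
    have ht : t = m := by linarith
    rw [hs, ht, ← h]
  · set lam : ℝ := (M - s) / (M - m) with hlam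
    set mu : ℝ := (s - m) / (M - m) with hmu
    have hMm : (0:ℝ) < M - m := by linarith
    have hlam0 : 0 ≤ lam := div_nonneg (by linarith) hMm.le
    have hmu0 : 0 ≤ mu := div_nonneg (by linarith) hMm.le
    have hsum : lam + mu = 1 := by
      rw [hlam, hmu, ← add_div]
      have : M - s + (s - m) = M - m := by ring
      rw [this]; exact div_self hMm.ne' 
    have hs' : lam • m + mu • M = s := by
      simp only [smul_eq_mul, hlam, hmu]
      field_simp
      ring
    have ht' : mu • m + lam • M = t := by
      simp only [smul_eq_mul, hlam, hmu]
      have ht : t = m + M - s := by linarith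
      rw [ht]; field_simp; ring
    have h1 := hf.2 (Set.mem_univ m) (Set.mem_univ M) hlam0 hmu0 hsum
    have h2 := hf.2 (Set.mem_univ m) (Set.mem_univ M) hmu0 hlam0 (by linarith)
    rw [hs'] at h1; rw [ht'] at h2
    simp only [smul_eq_mul] at h1 h2
    have : lam * f m + mu * f M + (mu * f m + lam * f M)
        = f m + f M := by linear_combination (f m + f M) * hsum
    linarith

/-- If `F` dominates `G` in the supermodular order on the box
`∏ᵢ [aᵢ,bᵢ]`, and `I(θ) = ∑ i, uᵢ(θᵢ)` with each `uᵢ` bounded, measurable and nondecreasing,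
then `∫ h ∘ I dG ≥ ∫ h ∘ I dF` for every concave `h : ℝ → ℝ`; in particular the pushforward
of `G` under `I` second-order stochastically dominates the pushforward of `F` under `I`. -/
theorem supermodular_order_implies_sosd_of_rents
    (n : ℕ) (a b : Fin n → ℝ)
    (F G : Measure (Fin n → ℝ)) [IsProbabilityMeasure F] [IsProbabilityMeasure G]
    (hFsupp : F (Set.Icc a b)ᶜ = 0) (hGsupp : G (Set.Icc a b)ᶜ = 0)
    (hSM : ∀ h : (Fin n → ℝ) → ℝ, Measurable h → (∃ C, ∀ θ, |h θ| ≤ C) →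
      (∀ x ∈ Set.Icc a b, ∀ y ∈ Set.Icc a b, h x + h y ≤ h (x ⊔ y) + h (x ⊓ y)) →
      ∫ θ, h θ ∂G ≤ ∫ θ, h θ ∂F)
    (u : Fin n → ℝ → ℝ)
    (humeas : ∀ i, Measurable (u i))
    (hubd : ∀ i, ∃ C, ∀ x, |u i x| ≤ C)
    (humono : ∀ i, MonotoneOn (u i) (Set.Icc (a i) (b i)))
    (I : (Fin n → ℝ) → ℝ) (hI : ∀ θ, I θ = ∑ i, u i (θ i)) :
    (∀ h : ℝ → ℝ, ConcaveOn ℝ Set.univ h →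
      ∫ θ, h (I θ) ∂F ≤ ∫ θ, h (I θ) ∂G) ∧
    (∀ h : ℝ → ℝ, ConcaveOn ℝ Set.univ h → Monotone h →
      ∫ x, h x ∂(F.map I) ≤ ∫ x, h x ∂(G.map I)) := by
  -- a uniform bound on I
  choose C hC using hubd
  have hIbd : ∀ θ, |I θ| ≤ ∑ i, C i := by
    intro θ
    rw [hI]
    calc |∑ i, u i (θ i)| ≤ ∑ i, |u i (θ i)| := Finset.abs_sum_le_sum_abs _ _
      _ ≤ ∑ i, C i := Finset.sum_le_sum fun i _ => hC i (θ i)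
  have hImeas : Measurable I := by
    have : I = fun θ => ∑ i, u i (θ i) := funext hI
    rw [this]
    exact Finset.measurable_sum _ fun i _ =>
      (humeas i).comp (measurable_pi_apply i)
  -- the additivity identity
  have hIadd : ∀ x y : Fin n → ℝ, I (x ⊔ y) + I (x ⊓ y) = I x + I y := by
    intro x y
    simp only [hI, ← Finset.sum_add_distrib]
    refine Finset.sum_congr rfl fun i _ => ?_
    have : (x ⊔ y) i = max (x i) (y i) := rfl
    have : (x ⊓ y) i = min (x i) (y i) := rfl
    rcases le_total (x i) (y i) with hle | hle
    · simp [Pi.sup_apply, Pi.inf_apply, max_eq_right hle, min_eq_left hle]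
      ring
    · simp [Pi.sup_apply, Pi.inf_apply, max_eq_left hle, min_eq_right hle]
  -- monotone sandwich on the box
  have hImono : ∀ x ∈ Set.Icc a b, ∀ y ∈ Set.Icc a b,
      I (x ⊓ y) ≤ I x ∧ I x ≤ I (x ⊔ y) := by
    intro x hx y hy
    constructor
    · simp only [hI]
      refine Finset.sum_le_sum fun i _ => ?_
      have hxi : x i ∈ Set.Icc (a i) (b i) := ⟨hx.1 i, hx.2 i⟩
      have hmi : min (x i) (y i) ∈ Set.Icc (a i) (b i) :=
        ⟨le_min (hx.1 i) (hy.1 i), (min_le_left _ _).trans (hx.2 i)⟩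
      exact humono i hmi hxi (min_le_left _ _)
    · simp only [hI]
      refine Finset.sum_le_sum fun i _ => ?_
      have hxi : x i ∈ Set.Icc (a i) (b i) := ⟨hx.1 i, hx.2 i⟩
      have hMi : max (x i) (y i) ∈ Set.Icc (a i) (b i) :=
        ⟨(hx.1 i).trans (le_max_left _ _), max_le (hx.2 i) (hy.2 i)⟩
      exact humono i hxi hMi (le_max_left _ _)
  have main : ∀ h : ℝ → ℝ, ConcaveOn ℝ Set.univ h →
      ∫ θ, h (I θ) ∂F ≤ ∫ θ, h (I θ) ∂G := by
    intro h hh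
    have hcont : Continuous h := by
      exact continuousOn_univ.mp (hh.continuousOn isOpen_univ)
    -- bound for h ∘ I
    obtain ⟨K, hK⟩ : ∃ K, ∀ s ∈ Set.Icc (-(∑ i, C i)) (∑ i, C i), ‖h s‖ ≤ K :=
      isCompact_Icc.exists_bound_of_continuousOn hcont.continuousOn
    have hbdhI : ∀ θ, |(fun θ => -h (I θ)) θ| ≤ K := by
      intro θ
      have := hK (I θ) (abs_le.mp (hIbd θ))
      simpa [abs_neg] using this
    have hsupmod : ∀ x ∈ Set.Icc a b, ∀ y ∈ Set.Icc a b,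
        -h (I x) + -h (I y) ≤ -h (I (x ⊔ y)) + -h (I (x ⊓ y)) := by
      intro x hx y hy
      have h1 := hImono x hx y hy
      have h2 := hIadd x y
      have key : h (I (x ⊔ y)) + h (I (x ⊓ y)) ≤ h (I x) + h (I y) := by
        have := convex_pair_le (fun s => -h s) hh.neg h1.1 h1.2
          (by linarith : I (x ⊓ y) + I (x ⊔ y) = I x + I y)
        linarith
      linarith
    have := hSM (fun θ => -h (I θ))
      ((hcont.measurable.comp hImeas).neg) ⟨K, hbdhI⟩ hsupmod
    simp only [integral_neg, neg_le_neg_iff] at this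
    exact this
  refine ⟨main, fun h hh _ => ?_⟩
  have hcont : Continuous h :=
    continuousOn_univ.mp (hh.continuousOn isOpen_univ)
  rw [integral_map hImeas.aemeasurable hcont.aestronglyMeasurable,
    integral_map hImeas.aemeasurable hcont.aestronglyMeasurable]
  exact main h hh
end

section
/- Let F₁ and F₂ be cumulative distribution functions of Borel probability measures supported on [a₁,b₁] and [a₂,b₂] respectively, with left-continuous quantile functions q₁, q₂. Let A be the pushforward of the Lebesgue measure on [0,1] under the map u ↦ (q₁(u), q₂(1−u)) (the antitone coupling). Then: (i) A has marginal distributions F₁ and F₂; (ii) the joint CDF of A is (x,y) ↦ max(F₁(x) + F₂(y) − 1, 0); and (iii) every Borel probability measure μ on [a₁,b₁] × [a₂,b₂] with marginals F₁ and F₂ satisfies ∫ h dμ ≥ ∫ h dA for every bounded measurable supermodular h, i.e. the antitone coupling is minimal in the supermodular order among all couplings of (F₁, F₂). -/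
open MeasureTheory Set Filter

/-- rounding down to a grid, with default `a` -/
noncomputable def rnd (a : ℝ) (G : Finset ℝ) (v : ℝ) : ℝ := ((G.filter (· ≤ v)).max).getD a
/-- predecessor in a grid, with default `a` -/
noncomputable def prd (a : ℝ) (G : Finset ℝ) (g : ℝ) : ℝ := ((G.filter (· < g)).max).getD a

lemma max_getD_mem {a : ℝ} {G : Finset ℝ} : (G.max).getD a ∈ insert a G := by
  rcases hG : G.max with _ | m
  · simp
  · simp only [Option.getD_some]
    exact Finset.mem_insert_of_mem (Finset.mem_of_max hG)

lemma max_getD_le {a v : ℝ} {G : Finset ℝ} (ha : a ≤ v) (hG : ∀ g ∈ G, g ≤ v) :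
    (G.max).getD a ≤ v := by
  have := @max_getD_mem a G
  rcases Finset.mem_insert.1 this with h | h
  · rw [h]; exact ha
  · exact hG _ h

lemma le_max_getD {a v : ℝ} {G : Finset ℝ} (hv : v ∈ G) : v ≤ (G.max).getD a := by
  have h1 := Finset.le_max hv
  rcases hG : G.max with _ | m
  · rw [hG] at h1; exact absurd h1 (WithBot.not_coe_le_bot v)
  · rw [hG] at h1
    simp only [Option.getD_some]
    exact WithBot.coe_le_coe.mp h1

/-- either the default, or a grid point below `v` -/
lemma rnd_cases {a v : ℝ} {G : Finset ℝ} :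
    rnd a G v = a ∨ (rnd a G v ∈ G ∧ rnd a G v ≤ v) := by
  rcases Finset.mem_insert.1 (max_getD_mem (a := a) (G := G.filter (· ≤ v))) with h | h
  · left; exact h
  · right; exact ⟨Finset.mem_of_mem_filter _ h, (Finset.mem_filter.1 h).2⟩

lemma rnd_mem {a v : ℝ} {G : Finset ℝ} : rnd a G v ∈ insert a G := by
  rcases rnd_cases (a := a) (v := v) (G := G) with h | h
  · rw [h]; simp
  · exact Finset.mem_insert_of_mem h.1

lemma rnd_le {a v : ℝ} {G : Finset ℝ} (ha : a ≤ v) : rnd a G v ≤ v := by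
  rcases rnd_cases (a := a) (v := v) (G := G) with h | h
  · rw [h]; exact ha
  · exact h.2

lemma le_rnd {a v g : ℝ} {G : Finset ℝ} (hg : g ∈ G) (hgv : g ≤ v) : g ≤ rnd a G v :=
  le_max_getD (Finset.mem_filter.2 ⟨hg, hgv⟩)

lemma ge_rnd {a v : ℝ} {G : Finset ℝ} (ha : ∀ g ∈ G, a ≤ g) : a ≤ rnd a G v := by
  rcases rnd_cases (a := a) (v := v) (G := G) with h | h
  · rw [h]
  · exact ha _ h.1

lemma rnd_mono_grid {a v : ℝ} {G G' : Finset ℝ} (hGG : G ⊆ G') (ha : ∀ g ∈ G', a ≤ g) :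
    rnd a G v ≤ rnd a G' v := by
  rcases rnd_cases (a := a) (v := v) (G := G) with h | h
  · rw [h]; exact ge_rnd ha
  · exact le_rnd (hGG h.1) h.2

lemma rnd_mono {a : ℝ} {G : Finset ℝ} (ha : ∀ g ∈ G, a ≤ g) :
    Monotone (rnd a G) := by
  intro v v' hvv
  rcases rnd_cases (a := a) (v := v) (G := G) with h | h
  · rw [h]; exact ge_rnd ha
  · exact le_rnd h.1 (h.2.trans hvv)

lemma rnd_self {a v : ℝ} {G : Finset ℝ} (hv : v ∈ G) (ha : ∀ g ∈ G, a ≤ g) :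
    rnd a G v = v :=
  le_antisymm (rnd_le (ha _ hv)) (le_rnd hv le_rfl)

lemma rnd_eq_of {a v g : ℝ} {G : Finset ℝ} (hg : g ∈ G) (hgv : g ≤ v)
    (hmax : ∀ x ∈ G, x ≤ v → x ≤ g) : rnd a G v = g := by
  have hne : (G.filter (· ≤ v)).Nonempty := ⟨g, Finset.mem_filter.2 ⟨hg, hgv⟩⟩
  obtain ⟨mm, hmm⟩ := Finset.max_of_nonempty hne
  have hmem := Finset.mem_of_max hmm
  have h2 : mm ≤ g := hmax mm (Finset.mem_of_mem_filter _ hmem) (Finset.mem_filter.1 hmem).2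
  have h3 : g ≤ mm := by
    have := Finset.le_max (s := G.filter (· ≤ v)) (Finset.mem_filter.2 ⟨hg, hgv⟩)
    rw [hmm] at this
    exact WithBot.coe_le_coe.mp this
  rw [rnd, hmm, le_antisymm h2 h3]
  rfl

/-- the telescoping sum identity -/
lemma telesum (ψ : ℝ → ℝ) (a v : ℝ) (G : Finset ℝ) :
    ∑ g ∈ G, (if g ≤ v then ψ g - ψ (prd a G g) else 0) = ψ (rnd a G v) - ψ a := by
  classical
  induction G using Finset.induction_on_max with
  | empty =>
    have : rnd a (∅ : Finset ℝ) v = a := rfl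
    rw [this]; simp
  | insert m s hms ih =>
    have hm_not : m ∉ s := fun hc => lt_irrefl m (hms m hc)
    have hprd_eq : ∀ g ∈ s, prd a (insert m s) g = prd a s g := by
      intro g hg
      have : ¬ (m < g) := not_lt.2 (le_of_lt (hms g hg))
      rw [prd, prd, Finset.filter_insert, if_neg this]
    rw [Finset.sum_insert hm_not]
    have hsum_eq : ∑ g ∈ s, (if g ≤ v then ψ g - ψ (prd a (insert m s) g) else 0)
        = ∑ g ∈ s, (if g ≤ v then ψ g - ψ (prd a s g) else 0) := by
      apply Finset.sum_congr rfl
      intro g hg; rw [hprd_eq g hg]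
    rw [hsum_eq, ih]
    have hprd_m : prd a (insert m s) m = (s.max).getD a := by
      rw [prd, Finset.filter_insert, if_neg (lt_irrefl m)]
      congr 1
      rw [Finset.filter_true_of_mem (fun x hx => hms x hx)]
    by_cases hmv : m ≤ v
    · rw [if_pos hmv, hprd_m]
      have h1 : rnd a (insert m s) v = m := by
        apply rnd_eq_of (Finset.mem_insert_self m s) hmv
        intro x hx _
        rcases Finset.mem_insert.1 hx with h | h
        · exact le_of_eq h
        · exact le_of_lt (hms x h)
      have h2 : rnd a s v = (s.max).getD a := by
        rw [rnd, Finset.filter_true_of_mem (fun x hx => le_of_lt (lt_of_lt_of_le (hms x hx) hmv))]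
      rw [h1, h2]; ring
    · rw [if_neg hmv]
      have h1 : rnd a (insert m s) v = rnd a s v := by
        rw [rnd, rnd, Finset.filter_insert, if_neg hmv]
      rw [h1]; ring

lemma cdf_mono {μ : Measure ℝ} {F : ℝ → ℝ} (hF : ∀ x, F x = (μ (Set.Iic x)).toReal)
    [IsFiniteMeasure μ] : Monotone F := by
  intro x y hxy
  rw [hF x, hF y]
  exact ENNReal.toReal_mono (measure_ne_top μ _) (measure_mono (Iic_subset_Iic.2 hxy))

lemma cdf_nonneg {μ : Measure ℝ} {F : ℝ → ℝ} (hF : ∀ x, F x = (μ (Set.Iic x)).toReal) :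
    ∀ x, 0 ≤ F x := fun x => (hF x) ▸ ENNReal.toReal_nonneg

lemma cdf_le_one {μ : Measure ℝ} [IsProbabilityMeasure μ] {F : ℝ → ℝ}
    (hF : ∀ x, F x = (μ (Set.Iic x)).toReal) : ∀ x, F x ≤ 1 := by
  intro x
  rw [hF x]
  exact ENNReal.toReal_le_of_le_ofReal one_pos.le (by simpa using prob_le_one)

lemma cdf_ofReal {μ : Measure ℝ} [IsFiniteMeasure μ] {F : ℝ → ℝ}
    (hF : ∀ x, F x = (μ (Set.Iic x)).toReal) :
    ∀ x, μ (Set.Iic x) = ENNReal.ofReal (F x) := by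
  intro x
  rw [hF x, ENNReal.ofReal_toReal (measure_ne_top μ _)]

lemma cdf_eq_one {a b : ℝ} {μ : Measure ℝ} [IsProbabilityMeasure μ]
    (hsupp : μ (Set.Icc a b)ᶜ = 0) {F : ℝ → ℝ} (hF : ∀ x, F x = (μ (Set.Iic x)).toReal) :
    F b = 1 := by
  have h2 : (Set.Iic b)ᶜ ⊆ (Set.Icc a b)ᶜ := by
    intro x hx
    simp only [mem_compl_iff, mem_Iic, not_le] at hx ⊢
    intro hc; exact absurd hc.2 (not_le.2 hx)
  have h3 : μ (Set.Iic b)ᶜ = 0 := le_antisymm ((measure_mono h2).trans hsupp.le) zero_le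
  have h1 : μ (Set.Iic b) = 1 := by
    refine le_antisymm prob_le_one ?_
    calc (1:ENNReal) = μ (Set.Iic b ∪ (Set.Iic b)ᶜ) := by simp [measure_univ]
    _ ≤ μ (Set.Iic b) + μ (Set.Iic b)ᶜ := measure_union_le _ _
    _ = μ (Set.Iic b) := by rw [h3, add_zero]
  rw [hF b, h1]; simp

lemma cdf_eq_zero {a b : ℝ} {μ : Measure ℝ} (hsupp : μ (Set.Icc a b)ᶜ = 0) {F : ℝ → ℝ}
    (hF : ∀ x, F x = (μ (Set.Iic x)).toReal) : ∀ x < a, F x = 0 := by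
  intro x hx
  have h2 : Set.Iic x ⊆ (Set.Icc a b)ᶜ := by
    intro y hy
    simp only [mem_compl_iff, mem_Icc, not_and, not_le]
    intro hc; linarith [mem_Iic.1 hy]
  rw [hF x, le_antisymm ((measure_mono h2).trans hsupp.le) zero_le]
  simp

lemma quantile_set_nonempty {a b : ℝ} {μ : Measure ℝ} [IsProbabilityMeasure μ]
    (hsupp : μ (Set.Icc a b)ᶜ = 0) {F : ℝ → ℝ} (hF : ∀ x, F x = (μ (Set.Iic x)).toReal) :
    ∀ u ≤ 1, ({x | u ≤ F x}).Nonempty :=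
  fun u hu => ⟨b, by simpa [cdf_eq_one hsupp hF] using hu⟩

lemma quantile_set_bddBelow {a b : ℝ} {μ : Measure ℝ} (hsupp : μ (Set.Icc a b)ᶜ = 0)
    {F : ℝ → ℝ} (hF : ∀ x, F x = (μ (Set.Iic x)).toReal) :
    ∀ u, 0 < u → BddBelow {x | u ≤ F x} := by
  intro u hu
  refine ⟨a, fun x hx => ?_⟩
  by_contra hc
  push_neg at hc
  rw [mem_setOf_eq, cdf_eq_zero hsupp hF x hc] at hx
  linarith

lemma quantile_le_iff {a b : ℝ} {μ : Measure ℝ} [IsProbabilityMeasure μ]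
    (hsupp : μ (Set.Icc a b)ᶜ = 0) {F : ℝ → ℝ} (hF : ∀ x, F x = (μ (Set.Iic x)).toReal)
    {q : ℝ → ℝ} (hq : ∀ u, q u = sInf {x | u ≤ F x}) :
    ∀ u, 0 < u → u ≤ 1 → ∀ x, (q u ≤ x ↔ u ≤ F x) := by
  intro u hu0 hu1 x
  constructor
  · intro hle
    rw [hq u] at hle
    have key : ∀ ε > 0, u ≤ F (x + ε) := by
      intro ε hε
      have hlt : sInf {x' | u ≤ F x'} < x + ε := lt_of_le_of_lt hle (by linarith)
      obtain ⟨x', hx', hx'lt⟩ := exists_lt_of_csInf_lt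
        (quantile_set_nonempty hsupp hF u hu1) hlt
      exact le_trans hx' (cdf_mono hF hx'lt.le)
    have h2 : ENNReal.ofReal u ≤ μ (Set.Iic x) := by
      have hiInter : Set.Iic x = ⋂ n : ℕ, Set.Iic (x + 1/(n+1)) := by
        ext y
        simp only [mem_Iic, mem_iInter]
        constructor
        · intro hy n; have : (0:ℝ) < 1/(n+1) := by positivity
          linarith
        · intro hy
          by_contra hc
          push_neg at hc
          obtain ⟨n, hn⟩ := exists_nat_one_div_lt (by linarith : (0:ℝ) < y - x)
          linarith [hy n]
      have hdir : Directed (· ⊇ ·) (fun n : ℕ => Set.Iic (x + 1/(n+1))) := by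
        intro m n
        refine ⟨max m n, Iic_subset_Iic.2 (by gcongr <;> simp), Iic_subset_Iic.2 (by gcongr <;> simp)⟩
      rw [hiInter, Directed.measure_iInter
        (fun n => measurableSet_Iic.nullMeasurableSet) hdir ⟨0, measure_ne_top μ _⟩]
      refine le_iInf fun n => ?_
      have := key (1/(n+1)) (by positivity)
      rw [cdf_ofReal hF]
      exact ENNReal.ofReal_le_ofReal this
    rw [hF x]
    have := ENNReal.toReal_mono (measure_ne_top μ _) h2
    rwa [ENNReal.toReal_ofReal hu0.le] at this
  · intro hle
    rw [hq u]
    exact csInf_le (quantile_set_bddBelow hsupp hF u hu0) hle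

lemma quantile_mem {a b : ℝ} {μ : Measure ℝ} [IsProbabilityMeasure μ]
    (hsupp : μ (Set.Icc a b)ᶜ = 0) {F : ℝ → ℝ} (hF : ∀ x, F x = (μ (Set.Iic x)).toReal)
    {q : ℝ → ℝ} (hq : ∀ u, q u = sInf {x | u ≤ F x}) :
    ∀ u, 0 < u → u ≤ 1 → q u ∈ Set.Icc a b := by
  intro u hu0 hu1
  constructor
  · rw [hq u]
    exact le_csInf (quantile_set_nonempty hsupp hF u hu1)
      (fun x hx => by
        by_contra hc
        push_neg at hc
        rw [mem_setOf_eq, cdf_eq_zero hsupp hF x hc] at hx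
        linarith)
  · exact (quantile_le_iff hsupp hF hq u hu0 hu1 b).2 (by rw [cdf_eq_one hsupp hF]; exact hu1)

lemma quantile_zero_of_nonpos {μ : Measure ℝ} {F : ℝ → ℝ}
    (hF : ∀ x, F x = (μ (Set.Iic x)).toReal)
    {q : ℝ → ℝ} (hq : ∀ u, q u = sInf {x | u ≤ F x}) : ∀ u ≤ 0, q u = 0 := by
  intro u hu
  rw [hq u]
  have : {x | u ≤ F x} = Set.univ := eq_univ_of_forall
    (fun x => le_trans hu (cdf_nonneg hF x))
  rw [this]
  exact Real.sInf_of_not_bddBelow (by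
    intro ⟨c, hc⟩
    exact absurd (hc (mem_univ (c - 1))) (by simp))

lemma quantile_zero_of_gt_one {μ : Measure ℝ} [IsProbabilityMeasure μ] {F : ℝ → ℝ}
    (hF : ∀ x, F x = (μ (Set.Iic x)).toReal)
    {q : ℝ → ℝ} (hq : ∀ u, q u = sInf {x | u ≤ F x}) : ∀ u, 1 < u → q u = 0 := by
  intro u hu
  rw [hq u]
  have : {x | u ≤ F x} = ∅ := eq_empty_of_forall_notMem
    (fun x hx => absurd (le_trans hx (cdf_le_one hF x)) (not_le.2 hu))
  rw [this, Real.sInf_empty]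

lemma quantile_measurable {a b : ℝ} {μ : Measure ℝ} [IsProbabilityMeasure μ]
    (hsupp : μ (Set.Icc a b)ᶜ = 0) {F : ℝ → ℝ} (hF : ∀ x, F x = (μ (Set.Iic x)).toReal)
    {q : ℝ → ℝ} (hq : ∀ u, q u = sInf {x | u ≤ F x}) : Measurable q := by
  apply measurable_of_Iic
  intro x
  by_cases h0x : (0:ℝ) ≤ x
  · have : q ⁻¹' (Set.Iic x) = (Set.Ioc (0:ℝ) 1 ∩ Set.Iic (F x)) ∪ (Set.Ioc (0:ℝ) 1)ᶜ := by
      ext u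
      simp only [mem_preimage, mem_Iic, mem_union, mem_inter_iff, mem_Ioc, mem_compl_iff, not_and,
        not_le]
      constructor
      · intro hqu
        by_cases hu : 0 < u ∧ u ≤ 1
        · exact Or.inl ⟨hu, (quantile_le_iff hsupp hF hq u hu.1 hu.2 x).1 hqu⟩
        · right; intro h1; by_contra h2; push_neg at h2; exact hu ⟨h1, h2⟩
      · intro hu
        rcases hu with ⟨⟨hu1, hu2⟩, hu3⟩ | hu
        · exact (quantile_le_iff hsupp hF hq u hu1 hu2 x).2 hu3
        · by_cases hu0 : 0 < u
          · rw [quantile_zero_of_gt_one hF hq u (hu hu0)]; exact h0x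
          · rw [quantile_zero_of_nonpos hF hq u (not_lt.1 hu0)]; exact h0x
    rw [this]
    exact ((measurableSet_Ioc.inter measurableSet_Iic).union measurableSet_Ioc.compl)
  · have : q ⁻¹' (Set.Iic x) = Set.Ioc (0:ℝ) 1 ∩ Set.Iic (F x) := by
      ext u
      simp only [mem_preimage, mem_Iic, mem_inter_iff, mem_Ioc]
      constructor
      · intro hqu
        by_cases hu : 0 < u ∧ u ≤ 1
        · exact ⟨hu, (quantile_le_iff hsupp hF hq u hu.1 hu.2 x).1 hqu⟩
        · exfalso
          push_neg at hu
          by_cases hu0 : 0 < u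
          · rw [quantile_zero_of_gt_one hF hq u (hu hu0)] at hqu
            linarith
          · rw [quantile_zero_of_nonpos hF hq u (not_lt.1 hu0)] at hqu
            linarith
      · intro ⟨⟨hu1, hu2⟩, hu3⟩
        exact (quantile_le_iff hsupp hF hq u hu1 hu2 x).2 hu3
    rw [this]
    exact measurableSet_Ioc.inter measurableSet_Iic

section S3
variable {a b : ℝ} {μ : Measure ℝ} [IsProbabilityMeasure μ]

/-- inverse transform sampling -/
lemma map_quantile_eq (hsupp : μ (Set.Icc a b)ᶜ = 0) {F : ℝ → ℝ}
    (hF : ∀ x, F x = (μ (Set.Iic x)).toReal)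
    {q : ℝ → ℝ} (hq : ∀ u, q u = sInf {x | u ≤ F x}) :
    (volume.restrict (Set.Icc (0:ℝ) 1)).map q = μ := by
  have hqm : Measurable q := quantile_measurable hsupp hF hq
  have key : ∀ x, ((volume.restrict (Set.Icc (0:ℝ) 1)).map q) (Set.Iic x) = μ (Set.Iic x) := by
    intro x
    rw [Measure.map_apply hqm measurableSet_Iic,
      Measure.restrict_apply (hqm measurableSet_Iic)]
    have hset : (q ⁻¹' Set.Iic x ∩ Set.Icc 0 1) \ {0} = Set.Ioc 0 (F x) := by
      ext u
      simp only [mem_diff, mem_inter_iff, mem_preimage, mem_Iic, mem_Icc, mem_Ioc,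
        mem_singleton_iff]
      constructor
      · rintro ⟨⟨hqu, hu0, hu1⟩, hne⟩
        have hu0' : 0 < u := lt_of_le_of_ne hu0 (Ne.symm hne)
        exact ⟨hu0', (quantile_le_iff hsupp hF hq u hu0' hu1 x).1 hqu⟩
      · rintro ⟨hu0, huF⟩
        have hu1 : u ≤ 1 := le_trans huF (cdf_le_one hF x)
        exact ⟨⟨(quantile_le_iff hsupp hF hq u hu0 hu1 x).2 huF, hu0.le, hu1⟩, ne_of_gt hu0⟩
    have := measure_diff_null (μ := volume) (s := q ⁻¹' Set.Iic x ∩ Set.Icc 0 1)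
      (Real.volume_singleton (a := 0))
    rw [← this, hset, Real.volume_Ioc, cdf_ofReal hF, sub_zero]
  have hfin : IsFiniteMeasure ((volume.restrict (Set.Icc (0:ℝ) 1)).map q) := by
    constructor
    rw [Measure.map_apply hqm MeasurableSet.univ]
    simp [Measure.restrict_apply, Real.volume_Icc]
  exact @Measure.ext_of_Iic ℝ _ _ _ _ _ _ _ _ hfin key

/-- inverse transform sampling, reflected -/
lemma map_quantile_reflect_eq (hsupp : μ (Set.Icc a b)ᶜ = 0) {F : ℝ → ℝ}
    (hF : ∀ x, F x = (μ (Set.Iic x)).toReal)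
    {q : ℝ → ℝ} (hq : ∀ u, q u = sInf {x | u ≤ F x}) :
    (volume.restrict (Set.Icc (0:ℝ) 1)).map (fun u => q (1 - u)) = μ := by
  have hqm : Measurable q := quantile_measurable hsupp hF hq
  have hqm' : Measurable (fun u : ℝ => q (1 - u)) := hqm.comp (measurable_const.sub measurable_id)
  have key : ∀ x, ((volume.restrict (Set.Icc (0:ℝ) 1)).map (fun u => q (1-u))) (Set.Iic x)
      = μ (Set.Iic x) := by
    intro x
    rw [Measure.map_apply hqm' measurableSet_Iic,
      Measure.restrict_apply (hqm' measurableSet_Iic)]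
    have hset : ((fun u : ℝ => q (1-u)) ⁻¹' Set.Iic x ∩ Set.Icc 0 1) \ {1}
        = Set.Ico (1 - F x) 1 := by
      ext u
      simp only [mem_diff, mem_inter_iff, mem_preimage, mem_Iic, mem_Icc, mem_Ico,
        mem_singleton_iff]
      constructor
      · rintro ⟨⟨hqu, hu0, hu1⟩, hne⟩
        have hu1' : u < 1 := lt_of_le_of_ne hu1 hne
        have h1 : 0 < 1 - u := by linarith
        have h2 : 1 - u ≤ 1 := by linarith
        have := (quantile_le_iff hsupp hF hq (1-u) h1 h2 x).1 hqu
        exact ⟨by linarith, hu1'⟩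
      · rintro ⟨huF, hu1⟩
        have h0F : 0 ≤ F x := cdf_nonneg hF x
        have h1 : 0 < 1 - u := by linarith
        have h2 : 1 - u ≤ 1 := by nlinarith [cdf_le_one hF x]
        refine ⟨⟨(quantile_le_iff hsupp hF hq (1-u) h1 h2 x).2 (by linarith), ?_, hu1.le⟩,
          ne_of_lt hu1⟩
        nlinarith [cdf_le_one hF x]
    have := measure_diff_null (μ := volume)
      (s := (fun u : ℝ => q (1-u)) ⁻¹' Set.Iic x ∩ Set.Icc 0 1) (Real.volume_singleton (a := 1))
    rw [← this, hset, Real.volume_Ico, cdf_ofReal hF]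
    norm_num
  have hfin : IsFiniteMeasure ((volume.restrict (Set.Icc (0:ℝ) 1)).map (fun u => q (1-u))) := by
    constructor
    rw [Measure.map_apply hqm' MeasurableSet.univ]
    simp [Measure.restrict_apply, Real.volume_Icc]
  exact @Measure.ext_of_Iic ℝ _ _ _ _ _ _ _ _ hfin key

end S3

/-- joint CDF of the antitone coupling -/
lemma antitone_joint_cdf {a₁ b₁ a₂ b₂ : ℝ} {μ₁ μ₂ : Measure ℝ}
    [IsProbabilityMeasure μ₁] [IsProbabilityMeasure μ₂]
    (hsupp₁ : μ₁ (Set.Icc a₁ b₁)ᶜ = 0) (hsupp₂ : μ₂ (Set.Icc a₂ b₂)ᶜ = 0)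
    {F₁ F₂ : ℝ → ℝ}
    (hF₁ : ∀ x, F₁ x = (μ₁ (Set.Iic x)).toReal) (hF₂ : ∀ x, F₂ x = (μ₂ (Set.Iic x)).toReal)
    {q₁ q₂ : ℝ → ℝ}
    (hq₁ : ∀ u, q₁ u = sInf {x | u ≤ F₁ x}) (hq₂ : ∀ u, q₂ u = sInf {x | u ≤ F₂ x})
    (x y : ℝ) :
    ((volume.restrict (Set.Icc (0:ℝ) 1)).map (fun u => (q₁ u, q₂ (1 - u))))
      (Set.Iic ((x, y) : ℝ × ℝ))
      = ENNReal.ofReal (F₁ x + F₂ y - 1) := by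
  have hqm₁ : Measurable q₁ := quantile_measurable hsupp₁ hF₁ hq₁
  have hqm₂ : Measurable q₂ := quantile_measurable hsupp₂ hF₂ hq₂
  have hm : Measurable (fun u : ℝ => (q₁ u, q₂ (1 - u))) :=
    hqm₁.prodMk (hqm₂.comp (measurable_const.sub measurable_id))
  rw [Measure.map_apply hm measurableSet_Iic,
    Measure.restrict_apply (hm measurableSet_Iic)]
  set E := (fun u : ℝ => (q₁ u, q₂ (1 - u))) ⁻¹' Set.Iic ((x,y) : ℝ × ℝ) ∩ Set.Icc 0 1 with hE
  have h01 : (0:ℝ) ≤ F₁ x := cdf_nonneg hF₁ x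
  have h02 : (0:ℝ) ≤ F₂ y := cdf_nonneg hF₂ y
  have h11 : F₁ x ≤ 1 := cdf_le_one hF₁ x
  have h12 : F₂ y ≤ 1 := cdf_le_one hF₂ y
  have hset : E \ ({0} ∪ {1}) = Set.Icc (1 - F₂ y) (F₁ x) \ ({0} ∪ {1}) := by
    ext u
    simp only [hE, mem_diff, mem_inter_iff, mem_preimage, mem_Iic, mem_Icc, mem_union,
      mem_singleton_iff, not_or, Prod.mk_le_mk]
    constructor
    · rintro ⟨⟨⟨hqx, hqy⟩, hu0, hu1⟩, hne0, hne1⟩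
      have hu0' : 0 < u := lt_of_le_of_ne hu0 (Ne.symm hne0)
      have hu1' : u < 1 := lt_of_le_of_ne hu1 hne1
      have e1 := (quantile_le_iff hsupp₁ hF₁ hq₁ u hu0' hu1 x).1 hqx
      have e2 := (quantile_le_iff hsupp₂ hF₂ hq₂ (1-u) (by linarith) (by linarith) y).1 hqy
      exact ⟨⟨by linarith, e1⟩, hne0, hne1⟩
    · rintro ⟨⟨hc, hd⟩, hne0, hne1⟩
      have hu0 : 0 ≤ u := by linarith
      have hu1 : u ≤ 1 := by linarith
      have hu0' : 0 < u := lt_of_le_of_ne hu0 (Ne.symm hne0)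
      have hu1' : u < 1 := lt_of_le_of_ne hu1 hne1
      exact ⟨⟨⟨(quantile_le_iff hsupp₁ hF₁ hq₁ u hu0' hu1 x).2 hd,
        (quantile_le_iff hsupp₂ hF₂ hq₂ (1-u) (by linarith) (by linarith) y).2 (by linarith)⟩,
        hu0, hu1⟩, hne0, hne1⟩
  have hnull : volume (({0} ∪ {1}) : Set ℝ) = 0 := by
    rw [measure_union_null_iff]
    exact ⟨Real.volume_singleton, Real.volume_singleton⟩
  calc volume E = volume (E \ ({0} ∪ {1})) := (measure_diff_null hnull).symm
  _ = volume (Set.Icc (1 - F₂ y) (F₁ x) \ ({0} ∪ {1})) := by rw [hset]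
  _ = volume (Set.Icc (1 - F₂ y) (F₁ x)) := measure_diff_null hnull
  _ = ENNReal.ofReal (F₁ x + F₂ y - 1) := by rw [Real.volume_Icc]; ring_nf

/-- comparison of CDFs: antitone coupling is below any coupling -/
lemma iic_compare {μ A : Measure (ℝ × ℝ)} [IsProbabilityMeasure μ]
    {μ₁ μ₂ : Measure ℝ} [IsProbabilityMeasure μ₁] [IsProbabilityMeasure μ₂]
    (m1 : μ.map Prod.fst = μ₁) (m2 : μ.map Prod.snd = μ₂)
    (hAIic : ∀ x y : ℝ, A (Set.Iic ((x,y) : ℝ × ℝ))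
      = ENNReal.ofReal ((μ₁ (Set.Iic x)).toReal + (μ₂ (Set.Iic y)).toReal - 1)) :
    ∀ x y : ℝ, A (Set.Iic ((x,y) : ℝ × ℝ)) ≤ μ (Set.Iic ((x,y) : ℝ × ℝ)) := by
  intro x y
  have hPQ : Set.Iic ((x,y) : ℝ × ℝ)
      = (Prod.fst ⁻¹' Set.Iic x) ∩ (Prod.snd ⁻¹' Set.Iic y) := by
    ext p; simp [Prod.le_def]
  have hP : μ (Prod.fst ⁻¹' Set.Iic x) = μ₁ (Set.Iic x) := by
    rw [← m1, Measure.map_apply measurable_fst measurableSet_Iic]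
  have hQ : μ (Prod.snd ⁻¹' Set.Iic y) = μ₂ (Set.Iic y) := by
    rw [← m2, Measure.map_apply measurable_snd measurableSet_Iic]
  have hunion := measure_union_add_inter (μ := μ) (t := Prod.snd ⁻¹' Set.Iic y)
    (Prod.fst ⁻¹' Set.Iic x) ((measurableSet_Iic).preimage measurable_snd)
  have hle1 : μ ((Prod.fst ⁻¹' Set.Iic x) ∪ (Prod.snd ⁻¹' Set.Iic y)) ≤ 1 := prob_le_one
  have key : ENNReal.ofReal ((μ₁ (Set.Iic x)).toReal + (μ₂ (Set.Iic y)).toReal - 1)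
      ≤ μ (Set.Iic ((x,y) : ℝ × ℝ)) := by
    rw [hPQ]
    have h1 : (μ₁ (Set.Iic x)).toReal + (μ₂ (Set.Iic y)).toReal - 1
        ≤ (μ ((Prod.fst ⁻¹' Set.Iic x) ∩ (Prod.snd ⁻¹' Set.Iic y))).toReal := by
      have e1 : (μ ((Prod.fst ⁻¹' Set.Iic x) ∪ (Prod.snd ⁻¹' Set.Iic y))).toReal
          + (μ ((Prod.fst ⁻¹' Set.Iic x) ∩ (Prod.snd ⁻¹' Set.Iic y))).toReal
          = (μ₁ (Set.Iic x)).toReal + (μ₂ (Set.Iic y)).toReal := by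
        rw [← ENNReal.toReal_add (measure_ne_top μ _) (measure_ne_top μ _), hunion,
          ENNReal.toReal_add (measure_ne_top μ _) (measure_ne_top μ _), hP, hQ]
      have e2 : (μ ((Prod.fst ⁻¹' Set.Iic x) ∪ (Prod.snd ⁻¹' Set.Iic y))).toReal ≤ 1 := by
        exact ENNReal.toReal_le_of_le_ofReal one_pos.le (by simpa using hle1)
      linarith
    calc ENNReal.ofReal ((μ₁ (Set.Iic x)).toReal + (μ₂ (Set.Iic y)).toReal - 1)
        ≤ ENNReal.ofReal ((μ ((Prod.fst ⁻¹' Set.Iic x) ∩ (Prod.snd ⁻¹' Set.Iic y))).toReal) :=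
          ENNReal.ofReal_le_ofReal h1
    _ = μ ((Prod.fst ⁻¹' Set.Iic x) ∩ (Prod.snd ⁻¹' Set.Iic y)) :=
          ENNReal.ofReal_toReal (measure_ne_top μ _)
  rw [hAIic x y]
  exact key

/-- lower-open-quadrant comparison via union of Iic's -/
lemma iio_prod_compare {μ A : Measure (ℝ × ℝ)}
    (hIic : ∀ x y : ℝ, A (Set.Iic ((x,y) : ℝ × ℝ)) ≤ μ (Set.Iic ((x,y) : ℝ × ℝ))) (s t : ℝ) :
    A (Set.Iio s ×ˢ Set.Iio t) ≤ μ (Set.Iio s ×ˢ Set.Iio t) := by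
  have hunion : Set.Iio s ×ˢ Set.Iio t
      = ⋃ n : ℕ, Set.Iic ((s - 1/(n+1), t - 1/(n+1)) : ℝ × ℝ) := by
    ext p
    simp only [mem_prod, mem_Iio, mem_iUnion, mem_Iic, Prod.mk_le_mk]
    constructor
    · rintro ⟨h1, h2⟩
      obtain ⟨n, hn⟩ := exists_nat_one_div_lt (lt_min (by linarith : (0:ℝ) < s - p.1)
        (by linarith : (0:ℝ) < t - p.2))
      exact ⟨n, by linarith [lt_min_iff.1 hn], by linarith [lt_min_iff.1 hn]⟩
    · rintro ⟨n, h1, h2⟩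
      have : (0:ℝ) < 1/(n+1) := by positivity
      exact ⟨by linarith, by linarith⟩
  have hmono : Monotone (fun n : ℕ => Set.Iic ((s - 1/(n+1), t - 1/(n+1)) : ℝ × ℝ)) := by
    intro m n hmn
    have h1 : 1/((n:ℝ)+1) ≤ 1/((m:ℝ)+1) := by
      apply one_div_le_one_div_of_le
      · positivity
      · have : (m:ℝ) ≤ (n:ℝ) := by exact_mod_cast hmn
        linarith
    exact Iic_subset_Iic.2 (Prod.mk_le_mk.2 ⟨by linarith, by linarith⟩)
  have hdir := hmono.directed_le
  rw [hunion, Directed.measure_iUnion hdir,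
    Directed.measure_iUnion hdir]
  exact iSup_mono (fun n => hIic _ _)

/-- closed-upper-quadrant comparison -/
lemma ici_compare {μ A : Measure (ℝ × ℝ)} [IsProbabilityMeasure μ] [IsProbabilityMeasure A]
    {μ₁ μ₂ : Measure ℝ}
    (m1 : μ.map Prod.fst = μ₁) (m2 : μ.map Prod.snd = μ₂)
    (m1A : A.map Prod.fst = μ₁) (m2A : A.map Prod.snd = μ₂)
    (hIic : ∀ x y : ℝ, A (Set.Iic ((x,y) : ℝ × ℝ)) ≤ μ (Set.Iic ((x,y) : ℝ × ℝ))) (s t : ℝ) :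
    A (Set.Ici ((s,t) : ℝ × ℝ)) ≤ μ (Set.Ici ((s,t) : ℝ × ℝ)) := by
  have hlow := iio_prod_compare hIic s t
  set P : Set (ℝ × ℝ) := Prod.fst ⁻¹' Set.Iio s with hPdef
  set Q : Set (ℝ × ℝ) := Prod.snd ⁻¹' Set.Iio t with hQdef
  have hPm : MeasurableSet P := measurableSet_Iio.preimage measurable_fst
  have hQm : MeasurableSet Q := measurableSet_Iio.preimage measurable_snd
  have hcompl : (Set.Ici ((s,t) : ℝ × ℝ))ᶜ = P ∪ Q := by
    ext p
    simp only [hPdef, hQdef, mem_compl_iff, mem_Ici, mem_union, mem_preimage, mem_Iio,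
      Prod.le_def, not_and_or, not_le]
  have hprodPQ : P ∩ Q = Set.Iio s ×ˢ Set.Iio t := by
    rw [Set.prod_eq]
  have key : ∀ (ν : Measure (ℝ × ℝ)) (ν₁ ν₂ : Measure ℝ), IsProbabilityMeasure ν →
      ν.map Prod.fst = ν₁ → ν.map Prod.snd = ν₂ →
      (ν (Set.Ici ((s,t) : ℝ × ℝ))).toReal
        = 1 - (ν₁ (Set.Iio s)).toReal - (ν₂ (Set.Iio t)).toReal + (ν (P ∩ Q)).toReal := by
    intro ν ν₁ ν₂ hprob hm1 hm2
    have hP : ν P = ν₁ (Set.Iio s) := by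
      rw [← hm1, Measure.map_apply measurable_fst measurableSet_Iio]
    have hQ : ν Q = ν₂ (Set.Iio t) := by
      rw [← hm2, Measure.map_apply measurable_snd measurableSet_Iio]
    have h1 : ν (Set.Ici ((s,t) : ℝ × ℝ)) + ν (P ∪ Q) = 1 := by
      rw [← hcompl, measure_add_measure_compl (measurableSet_Ici), hprob.measure_univ]
    have h2 := measure_union_add_inter (μ := ν) (t := Q) P hQm
    have e1 : (ν (Set.Ici ((s,t) : ℝ × ℝ))).toReal + (ν (P ∪ Q)).toReal = 1 := by
      rw [← ENNReal.toReal_add (measure_ne_top ν _) (measure_ne_top ν _), h1]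
      simp
    have e2 : (ν (P ∪ Q)).toReal + (ν (P ∩ Q)).toReal
        = (ν₁ (Set.Iio s)).toReal + (ν₂ (Set.Iio t)).toReal := by
      rw [← ENNReal.toReal_add (measure_ne_top ν _) (measure_ne_top ν _), h2,
        ENNReal.toReal_add (measure_ne_top ν _) (measure_ne_top ν _), hP, hQ]
    linarith
  have eA := key A μ₁ μ₂ inferInstance m1A m2A
  have eμ := key μ μ₁ μ₂ inferInstance m1 m2
  have hlow' : (A (P ∩ Q)).toReal ≤ (μ (P ∩ Q)).toReal := by
    rw [hprodPQ]
    exact ENNReal.toReal_mono (measure_ne_top μ _) hlow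
  have : (A (Set.Ici ((s,t) : ℝ × ℝ))).toReal ≤ (μ (Set.Ici ((s,t) : ℝ × ℝ))).toReal := by
    rw [eA, eμ]; linarith
  exact (ENNReal.toReal_le_toReal (measure_ne_top A _) (measure_ne_top μ _)).1 this

lemma bdd_integrable {α : Type*} [MeasurableSpace α] (ν : Measure α) [IsFiniteMeasure ν]
    {f : α → ℝ} (hf : Measurable f) {C : ℝ} (hC : ∀ x, |f x| ≤ C) : Integrable f ν :=
  (integrable_const C).mono' hf.aestronglyMeasurable (ae_of_all _ (fun a => by
    rw [Real.norm_eq_abs]; exact hC a))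

/-- grids approximating from below adapted to a monotone function -/
lemma approx_seq (a b : ℝ) (hab : a ≤ b) (ψ : ℝ → ℝ) (hψ : Monotone ψ) :
    ∃ G : ℕ → Finset ℝ, (∀ n, a ∈ G n) ∧ (∀ n g, g ∈ G n → a ≤ g ∧ g ≤ b) ∧
      (∀ m n, m ≤ n → G m ⊆ G n) ∧
      (∀ x, a ≤ x → x ≤ b →
        Filter.Tendsto (fun n => ψ (rnd a (G n) x)) Filter.atTop (nhds (ψ x))) := by
  have hD : {x | ¬ContinuousAt ψ x}.Countable := hψ.countable_not_continuousAt
  set S : Set ℝ := ({x | ¬ContinuousAt ψ x} ∩ Set.Icc a b)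
    ∪ Set.range (fun q : ℚ => max a (min (q:ℝ) b)) ∪ {a} with hSdef
  have hScount : S.Countable :=
    ((hD.mono Set.inter_subset_left).union (Set.countable_range _)).union
      (Set.countable_singleton _)
  have hSsub : S ⊆ Set.Icc a b := by
    rintro x ((⟨_, hx⟩ | ⟨q, rfl⟩) | rfl)
    · exact hx
    · exact ⟨le_max_left _ _, max_le hab (min_le_right _ _)⟩
    · exact ⟨le_rfl, hab⟩
  have hSne : S.Nonempty := ⟨a, Set.mem_union_right _ rfl⟩
  obtain ⟨e, he⟩ := hScount.exists_eq_range hSne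
  refine ⟨fun n => insert a ((Finset.range n).image e), fun n => Finset.mem_insert_self a _,
    ?_, ?_, ?_⟩
  · intro n g hg
    rcases Finset.mem_insert.1 hg with rfl | hg
    · exact ⟨le_rfl, hab⟩
    · obtain ⟨k, _, rfl⟩ := Finset.mem_image.1 hg
      have : e k ∈ S := he ▸ Set.mem_range_self k
      exact ⟨(hSsub this).1, (hSsub this).2⟩
  · intro m n hmn
    exact Finset.insert_subset_insert _ (Finset.image_subset_image (Finset.range_subset_range.2 hmn))
  · intro x hax hxb
    have hGa : ∀ n, ∀ g ∈ insert a ((Finset.range n).image e), a ≤ g := by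
      intro n g hg
      rcases Finset.mem_insert.1 hg with rfl | hg
      · exact le_rfl
      · obtain ⟨k, _, rfl⟩ := Finset.mem_image.1 hg
        exact (hSsub (he ▸ Set.mem_range_self k)).1
    by_cases hxS : x ∈ S
    · obtain ⟨k, hk⟩ := (he ▸ hxS : x ∈ Set.range e)
      apply tendsto_atTop_of_eventually_const (i₀ := k + 1)
      intro n hn
      have hxG : x ∈ insert a ((Finset.range n).image e) :=
        Finset.mem_insert_of_mem (Finset.mem_image.2 ⟨k, Finset.mem_range.2 hn, hk⟩)
      rw [rnd_self hxG (hGa n)]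
    · have hcont : ContinuousAt ψ x := by
        by_contra hc
        exact hxS (Set.mem_union_left _ (Set.mem_union_left _ ⟨hc, hax, hxb⟩))
      apply hcont.tendsto.comp
      refine Metric.tendsto_atTop.2 fun ε hε => ?_
      have hxa : a < x := by
        rcases lt_or_eq_of_le hax with h | h
        · exact h
        · exact absurd (Set.mem_union_right _ (h ▸ rfl)) hxS
      obtain ⟨qr, hq1, hq2⟩ := exists_rat_btwn (show max (x - ε) a < x from
        max_lt (by linarith) hxa)
      have hclipq : max a (min ((qr:ℝ)) b) = (qr:ℝ) := by
        have h1 : a < (qr:ℝ) := lt_of_le_of_lt (le_max_right _ _) hq1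
        have h2 : (qr:ℝ) ≤ b := le_trans hq2.le hxb
        rw [min_eq_left h2, max_eq_right h1.le]
      have hqS : (qr:ℝ) ∈ S :=
        Set.mem_union_left _ (Set.mem_union_right _ ⟨qr, hclipq⟩)
      obtain ⟨k, hk⟩ := (he ▸ hqS : (qr:ℝ) ∈ Set.range e)
      refine ⟨k + 1, fun n hn => ?_⟩
      have hqG : (qr:ℝ) ∈ insert a ((Finset.range n).image e) :=
        Finset.mem_insert_of_mem (Finset.mem_image.2 ⟨k, Finset.mem_range.2 hn, hk⟩)
      have h1 : (qr:ℝ) ≤ rnd a (insert a ((Finset.range n).image e)) x := le_rnd hqG hq2.le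
      have h2 : rnd a (insert a ((Finset.range n).image e)) x ≤ x := rnd_le hax
      have h3 : x - ε < (qr:ℝ) := lt_of_le_of_lt (le_max_left _ _) hq1
      rw [Real.dist_eq, abs_of_nonpos (by dsimp; linarith)]
      dsimp
      linarith

lemma supermod_core {a₁ b₁ a₂ b₂ : ℝ} (hab₁ : a₁ ≤ b₁) (hab₂ : a₂ ≤ b₂)
    {μ A : Measure (ℝ × ℝ)} [IsProbabilityMeasure μ] [IsProbabilityMeasure A]
    (hμR : μ (Set.Icc ((a₁, a₂) : ℝ × ℝ) (b₁, b₂))ᶜ = 0)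
    (hAR : A (Set.Icc ((a₁, a₂) : ℝ × ℝ) (b₁, b₂))ᶜ = 0)
    (hquad : ∀ s t : ℝ, A (Set.Ici ((s,t) : ℝ × ℝ)) ≤ μ (Set.Ici ((s,t) : ℝ × ℝ)))
    (m1 : μ.map Prod.fst = A.map Prod.fst) (m2 : μ.map Prod.snd = A.map Prod.snd)
    (h : ℝ × ℝ → ℝ) (hmeas : Measurable h) {C : ℝ} (hC : ∀ p, |h p| ≤ C)
    (hsm : ∀ p ∈ Set.Icc ((a₁, a₂) : ℝ × ℝ) (b₁, b₂),
      ∀ q ∈ Set.Icc ((a₁, a₂) : ℝ × ℝ) (b₁, b₂), h p + h q ≤ h (p ⊔ q) + h (p ⊓ q)) :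
    ∫ p, h p ∂A ≤ ∫ p, h p ∂μ := by
  set R : Set (ℝ × ℝ) := Set.Icc ((a₁, a₂) : ℝ × ℝ) (b₁, b₂) with hRdef
  set H : ℝ × ℝ → ℝ := fun p => h p - h (p.1, a₂) - h (a₁, p.2) + h (a₁, a₂) with hHdef
  have hHmeas : Measurable H := by
    apply Measurable.add
    · apply Measurable.sub
      · exact hmeas.sub (hmeas.comp (measurable_fst.prodMk measurable_const))
      · exact hmeas.comp (measurable_const.prodMk measurable_snd)
    · exact measurable_const
  have hHbd : ∀ p, |H p| ≤ 4 * C := by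
    intro p
    have c1 := abs_le.1 (hC p)
    have c2 := abs_le.1 (hC (p.1, a₂))
    have c3 := abs_le.1 (hC (a₁, p.2))
    have c4 := abs_le.1 (hC (a₁, a₂))
    exact abs_le.2 ⟨by simp only [hHdef]; linarith, by simp only [hHdef]; linarith⟩
  have hmemR : ∀ x y : ℝ, a₁ ≤ x → x ≤ b₁ → a₂ ≤ y → y ≤ b₂ → ((x, y) : ℝ × ℝ) ∈ R := by
    intro x y h1 h2 h3 h4
    exact Set.mem_Icc.2 ⟨Prod.mk_le_mk.2 ⟨h1, h3⟩, Prod.mk_le_mk.2 ⟨h2, h4⟩⟩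
  -- the rectangle increment inequality
  have hΔ : ∀ x x' y y' : ℝ, a₁ ≤ x → x ≤ x' → x' ≤ b₁ → a₂ ≤ y → y ≤ y' → y' ≤ b₂ →
      H (x, y') + H (x', y) ≤ H (x, y) + H (x', y') := by
    intro x x' y y' h1 h2 h3 h4 h5 h6
    have hp : ((x', y) : ℝ × ℝ) ∈ R := hmemR _ _ (h1.trans h2) h3 h4 (h5.trans h6)
    have hq : ((x, y') : ℝ × ℝ) ∈ R := hmemR _ _ h1 (h2.trans h3) (h4.trans h5) h6
    have hsup : ((x', y) : ℝ × ℝ) ⊔ (x, y') = ((x', y') : ℝ × ℝ) := by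
      rw [Prod.mk_sup_mk, sup_eq_left.2 h2, sup_eq_right.2 h5]
    have hinf : ((x', y) : ℝ × ℝ) ⊓ (x, y') = ((x, y) : ℝ × ℝ) := by
      rw [Prod.mk_inf_mk, inf_eq_right.2 h2, inf_eq_left.2 h5]
    have := hsm _ hp _ hq
    rw [hsup, hinf] at this
    simp only [hHdef]
    linarith
  have hH0x : ∀ x : ℝ, H (x, a₂) = 0 := by intro x; simp only [hHdef]; ring
  have hH0y : ∀ y : ℝ, H (a₁, y) = 0 := by intro y; simp only [hHdef]; ring
  have hHmono1 : ∀ x x' y : ℝ, a₁ ≤ x → x ≤ x' → x' ≤ b₁ → a₂ ≤ y → y ≤ b₂ →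
      H (x, y) ≤ H (x', y) := by
    intro x x' y h1 h2 h3 h4 h5
    have := hΔ x x' a₂ y h1 h2 h3 le_rfl h4 h5
    rw [hH0x, hH0x] at this
    linarith
  have hHmono2 : ∀ x y y' : ℝ, a₁ ≤ x → x ≤ b₁ → a₂ ≤ y → y ≤ y' → y' ≤ b₂ →
      H (x, y) ≤ H (x, y') := by
    intro x y y' h1 h2 h3 h4 h5
    have := hΔ a₁ x y y' le_rfl h1 h2 h3 h4 h5
    rw [hH0y, hH0y] at this
    linarith
  -- clipped edge functions
  set c₁ : ℝ → ℝ := fun v => max a₁ (min v b₁) with hc₁def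
  set c₂ : ℝ → ℝ := fun w => max a₂ (min w b₂) with hc₂def
  have hc₁mem : ∀ v, a₁ ≤ c₁ v ∧ c₁ v ≤ b₁ :=
    fun v => ⟨le_max_left _ _, max_le hab₁ (min_le_right _ _)⟩
  have hc₂mem : ∀ w, a₂ ≤ c₂ w ∧ c₂ w ≤ b₂ :=
    fun w => ⟨le_max_left _ _, max_le hab₂ (min_le_right _ _)⟩
  have hc₁id : ∀ v, a₁ ≤ v → v ≤ b₁ → c₁ v = v := by
    intro v h1 h2; simp only [hc₁def]; rw [min_eq_left h2, max_eq_right h1]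
  have hc₂id : ∀ w, a₂ ≤ w → w ≤ b₂ → c₂ w = w := by
    intro w h1 h2; simp only [hc₂def]; rw [min_eq_left h2, max_eq_right h1]
  set ψ₁ : ℝ → ℝ := fun v => H (c₁ v, b₂) with hψ₁def
  set ψ₂ : ℝ → ℝ := fun w => H (b₁, c₂ w) with hψ₂def
  have hψ₁mono : Monotone ψ₁ := by
    intro v v' hvv
    exact hHmono1 _ _ _ (hc₁mem v).1
      (max_le_max le_rfl (min_le_min (by exact hvv) le_rfl)) (hc₁mem v').2 hab₂ le_rfl
  have hψ₂mono : Monotone ψ₂ := by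
    intro w w' hww
    exact hHmono2 _ _ _ hab₁ le_rfl (hc₂mem w).1
      (max_le_max le_rfl (min_le_min (by exact hww) le_rfl)) (hc₂mem w').2
  obtain ⟨G₁, hG₁a, hG₁mem, hG₁mono, hG₁conv⟩ := approx_seq a₁ b₁ hab₁ ψ₁ hψ₁mono
  obtain ⟨G₂, hG₂a, hG₂mem, hG₂mono, hG₂conv⟩ := approx_seq a₂ b₂ hab₂ ψ₂ hψ₂mono
  have hG₁ge : ∀ n, ∀ g ∈ G₁ n, a₁ ≤ g := fun n g hg => (hG₁mem n g hg).1
  have hG₂ge : ∀ n, ∀ g ∈ G₂ n, a₂ ≤ g := fun n g hg => (hG₂mem n g hg).1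
  set r₁ : ℕ → ℝ → ℝ := fun n => rnd a₁ (G₁ n) with hr₁def
  set r₂ : ℕ → ℝ → ℝ := fun n => rnd a₂ (G₂ n) with hr₂def
  have hr₁mem : ∀ n v, a₁ ≤ r₁ n v ∧ r₁ n v ≤ b₁ := by
    intro n v
    rcases Finset.mem_insert.1 (rnd_mem (a := a₁) (v := v) (G := G₁ n)) with hh | hh
    · rw [hr₁def]; dsimp only; rw [hh]; exact ⟨le_rfl, hab₁⟩
    · exact hG₁mem n _ hh
  have hr₂mem : ∀ n w, a₂ ≤ r₂ n w ∧ r₂ n w ≤ b₂ := by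
    intro n w
    rcases Finset.mem_insert.1 (rnd_mem (a := a₂) (v := w) (G := G₂ n)) with hh | hh
    · rw [hr₂def]; dsimp only; rw [hh]; exact ⟨le_rfl, hab₂⟩
    · exact hG₂mem n _ hh
  set Tn : ℕ → ℝ × ℝ → ℝ := fun n p => H (r₁ n p.1, r₂ n p.2) with hTndef
  set Δ : ℕ → ℝ → ℝ → ℝ := fun n g g' =>
    H (g, g') - H (prd a₁ (G₁ n) g, g') - H (g, prd a₂ (G₂ n) g')
      + H (prd a₁ (G₁ n) g, prd a₂ (G₂ n) g') with hΔdef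
  -- properties of pred
  have hprd₁ : ∀ n, ∀ g ∈ G₁ n, a₁ ≤ prd a₁ (G₁ n) g ∧ prd a₁ (G₁ n) g ≤ g
      ∧ prd a₁ (G₁ n) g ≤ b₁ := by
    intro n g hg
    have hmem := max_getD_mem (a := a₁) (G := (G₁ n).filter (· < g))
    rcases Finset.mem_insert.1 hmem with hh | hh
    · rw [prd, hh]
      exact ⟨le_rfl, hG₁ge n g hg, hab₁⟩
    · have h1 := Finset.mem_of_mem_filter _ hh
      have h2 := (Finset.mem_filter.1 hh).2
      exact ⟨hG₁ge n _ h1, by rw [prd]; exact le_of_lt h2, (hG₁mem n _ h1).2⟩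
  have hprd₂ : ∀ n, ∀ g ∈ G₂ n, a₂ ≤ prd a₂ (G₂ n) g ∧ prd a₂ (G₂ n) g ≤ g
      ∧ prd a₂ (G₂ n) g ≤ b₂ := by
    intro n g hg
    have hmem := max_getD_mem (a := a₂) (G := (G₂ n).filter (· < g))
    rcases Finset.mem_insert.1 hmem with hh | hh
    · rw [prd, hh]
      exact ⟨le_rfl, hG₂ge n g hg, hab₂⟩
    · have h1 := Finset.mem_of_mem_filter _ hh
      have h2 := (Finset.mem_filter.1 hh).2
      exact ⟨hG₂ge n _ h1, by rw [prd]; exact le_of_lt h2, (hG₂mem n _ h1).2⟩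
  have hΔpos : ∀ n, ∀ g ∈ G₁ n, ∀ g' ∈ G₂ n, 0 ≤ Δ n g g' := by
    intro n g hg g' hg'
    obtain ⟨p1a, p1b, p1c⟩ := hprd₁ n g hg
    obtain ⟨p2a, p2b, p2c⟩ := hprd₂ n g' hg'
    have := hΔ (prd a₁ (G₁ n) g) g (prd a₂ (G₂ n) g') g' p1a p1b (hG₁mem n g hg).2
      p2a p2b (hG₂mem n g' hg').2
    simp only [hΔdef]
    linarith
  -- the sum representation
  have hTn_eq : ∀ n p, Tn n p
      = ∑ g ∈ G₁ n, ∑ g' ∈ G₂ n, (if ((g, g') : ℝ × ℝ) ≤ p then Δ n g g' else 0) := by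
    intro n p
    have houter := telesum (fun t => H (t, r₂ n p.2)) a₁ p.1 (G₁ n)
    have hTval : Tn n p = H (r₁ n p.1, r₂ n p.2) := rfl
    rw [hTval, show H (r₁ n p.1, r₂ n p.2)
        = (fun t => H (t, r₂ n p.2)) (rnd a₁ (G₁ n) p.1) - (fun t => H (t, r₂ n p.2)) a₁ by
      dsimp only; rw [hH0y]; ring, ← houter]
    apply Finset.sum_congr rfl
    intro g hg
    have hinner := telesum (fun w => H (g, w) - H (prd a₁ (G₁ n) g, w)) a₂ p.2 (G₂ n)
    by_cases hgp : g ≤ p.1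
    · rw [if_pos hgp]
      have hval : (fun t => H (t, r₂ n p.2)) g - (fun t => H (t, r₂ n p.2)) (prd a₁ (G₁ n) g)
          = (fun w => H (g, w) - H (prd a₁ (G₁ n) g, w)) (rnd a₂ (G₂ n) p.2)
            - (fun w => H (g, w) - H (prd a₁ (G₁ n) g, w)) a₂ := by
        simp only [hH0x]
        ring
      rw [hval, ← hinner]
      apply Finset.sum_congr rfl
      intro g' hg'
      by_cases hg'p : g' ≤ p.2
      · rw [if_pos hg'p, if_pos (Prod.mk_le_mk.2 ⟨hgp, hg'p⟩ : ((g,g') : ℝ × ℝ) ≤ (p.1, p.2))]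
        simp only [hΔdef]
        ring
      · rw [if_neg hg'p, if_neg (fun hc => hg'p (Prod.mk_le_mk.1 hc).2)]
    · rw [if_neg hgp]
      rw [eq_comm]
      apply Finset.sum_eq_zero
      intro g' _
      exact if_neg (fun hc => hgp (Prod.mk_le_mk.1 hc).1)
  -- integral of Tn
  have hindic : ∀ (g g' : ℝ), (fun p : ℝ × ℝ => if ((g, g') : ℝ × ℝ) ≤ p then (1:ℝ) else 0)
      = Set.indicator (Set.Ici ((g,g') : ℝ × ℝ)) (fun _ => (1:ℝ)) := by
    intro g g'
    funext p
    rw [Set.indicator_apply]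
    simp [Set.mem_Ici]
  have hTn_int : ∀ n (ν : Measure (ℝ × ℝ)) [IsProbabilityMeasure ν],
      ∫ p, Tn n p ∂ν = ∑ g ∈ G₁ n, ∑ g' ∈ G₂ n,
        Δ n g g' * (ν (Set.Ici ((g,g') : ℝ × ℝ))).toReal := by
    intro n ν _
    have hint_term : ∀ (g g' : ℝ), Integrable
        (fun p : ℝ × ℝ => if ((g, g') : ℝ × ℝ) ≤ p then Δ n g g' else 0) ν := by
      intro g g'
      have : (fun p : ℝ × ℝ => if ((g, g') : ℝ × ℝ) ≤ p then Δ n g g' else 0)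
          = Set.indicator (Set.Ici ((g,g') : ℝ × ℝ)) (fun _ => Δ n g g') := by
        funext p
        rw [Set.indicator_apply]
        simp [Set.mem_Ici]
      rw [this]
      exact (integrable_const _).indicator measurableSet_Ici
    have e1 : ∫ p, Tn n p ∂ν = ∑ g ∈ G₁ n, ∫ p, ∑ g' ∈ G₂ n,
        (if ((g, g') : ℝ × ℝ) ≤ p then Δ n g g' else 0) ∂ν := by
      rw [show (fun p => Tn n p) = fun p => ∑ g ∈ G₁ n, ∑ g' ∈ G₂ n,
        (if ((g, g') : ℝ × ℝ) ≤ p then Δ n g g' else 0) from funext (hTn_eq n)]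
      exact integral_finset_sum _ (fun g _ => integrable_finset_sum _ (fun g' _ => hint_term g g'))
    rw [e1]
    apply Finset.sum_congr rfl
    intro g hg
    rw [integral_finset_sum _ (fun g' _ => hint_term g g')]
    apply Finset.sum_congr rfl
    intro g' hg'
    have : (fun p : ℝ × ℝ => if ((g, g') : ℝ × ℝ) ≤ p then Δ n g g' else 0)
        = Set.indicator (Set.Ici ((g,g') : ℝ × ℝ)) (fun _ => Δ n g g') := by
      funext p
      rw [Set.indicator_apply]
      simp [Set.mem_Ici]
    rw [this, integral_indicator_const _ measurableSet_Ici, smul_eq_mul, mul_comm, measureReal_def]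
  -- comparison for each n
  have hcomp : ∀ n, ∫ p, Tn n p ∂A ≤ ∫ p, Tn n p ∂μ := by
    intro n
    rw [hTn_int n A, hTn_int n μ]
    apply Finset.sum_le_sum
    intro g hg
    apply Finset.sum_le_sum
    intro g' hg'
    exact mul_le_mul_of_nonneg_left
      (ENNReal.toReal_mono (measure_ne_top μ _) (hquad g g')) (hΔpos n g hg g' hg')
  -- measurability of Tn
  have hr₁meas : ∀ n, Measurable (r₁ n) := fun n => (rnd_mono (hG₁ge n)).measurable
  have hr₂meas : ∀ n, Measurable (r₂ n) := fun n => (rnd_mono (hG₂ge n)).measurable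
  have hTnmeas : ∀ n, Measurable (Tn n) := by
    intro n
    exact hHmeas.comp (((hr₁meas n).comp measurable_fst).prodMk
      ((hr₂meas n).comp measurable_snd))
  have hTnbd : ∀ n p, |Tn n p| ≤ 4 * C := fun n p => hHbd _
  -- pointwise convergence on R
  have hconv : ∀ p ∈ R, Filter.Tendsto (fun n => Tn n p) Filter.atTop (nhds (H p)) := by
    rintro ⟨x, y⟩ hp
    rw [Set.mem_Icc] at hp
    obtain ⟨hx1, hy1⟩ := Prod.mk_le_mk.1 hp.1
    obtain ⟨hx2, hy2⟩ := Prod.mk_le_mk.1 hp.2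
    have hrx := fun n => hr₁mem n x
    have hry := fun n => hr₂mem n y
    have hrxle : ∀ n, r₁ n x ≤ x := fun n => rnd_le hx1
    have hryle : ∀ n, r₂ n y ≤ y := fun n => rnd_le hy1
    have hTval : ∀ n, Tn n ((x,y) : ℝ × ℝ) = H (r₁ n x, r₂ n y) := fun n => rfl
    have hub : ∀ n, H (x, y) - Tn n ((x,y) : ℝ × ℝ)
        ≤ (ψ₁ x - ψ₁ (r₁ n x)) + (ψ₂ y - ψ₂ (r₂ n y)) := by
      intro n
      have hb1 : H (x, y) - H (x, r₂ n y) ≤ ψ₂ y - ψ₂ (r₂ n y) := by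
        have hd := hΔ x b₁ (r₂ n y) y hx1 hx2 le_rfl (hry n).1 (hryle n) hy2
        have e1 : ψ₂ y = H (b₁, y) := by
          simp only [hψ₂def]; rw [hc₂id y hy1 hy2]
        have e2 : ψ₂ (r₂ n y) = H (b₁, r₂ n y) := by
          simp only [hψ₂def]; rw [hc₂id _ (hry n).1 (hry n).2]
        linarith
      have hb2 : H (x, r₂ n y) - H (r₁ n x, r₂ n y) ≤ ψ₁ x - ψ₁ (r₁ n x) := by
        have hd := hΔ (r₁ n x) x (r₂ n y) b₂ (hrx n).1 (hrxle n) hx2 (hry n).1 (hry n).2 le_rfl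
        have e1 : ψ₁ x = H (x, b₂) := by
          simp only [hψ₁def]; rw [hc₁id x hx1 hx2]
        have e2 : ψ₁ (r₁ n x) = H (r₁ n x, b₂) := by
          simp only [hψ₁def]; rw [hc₁id _ (hrx n).1 (hrx n).2]
        linarith
      rw [hTval n]
      linarith
    have hlb : ∀ n, 0 ≤ H (x, y) - Tn n ((x,y) : ℝ × ℝ) := by
      intro n
      have h1 : H (r₁ n x, r₂ n y) ≤ H (x, r₂ n y) :=
        hHmono1 _ _ _ (hrx n).1 (hrxle n) hx2 (hry n).1 (hry n).2
      have h2 : H (x, r₂ n y) ≤ H (x, y) :=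
        hHmono2 _ _ _ hx1 hx2 (hry n).1 (hryle n) hy2
      rw [hTval n]
      linarith
    have hψc1 := hG₁conv x hx1 hx2
    have hψc2 := hG₂conv y hy1 hy2
    have hbnd : Filter.Tendsto
        (fun n => (ψ₁ x - ψ₁ (r₁ n x)) + (ψ₂ y - ψ₂ (r₂ n y))) Filter.atTop (nhds 0) := by
      have t1 : Filter.Tendsto (fun n => ψ₁ x - ψ₁ (r₁ n x)) Filter.atTop
          (nhds (ψ₁ x - ψ₁ x)) := Filter.Tendsto.sub tendsto_const_nhds hψc1
      have t2 : Filter.Tendsto (fun n => ψ₂ y - ψ₂ (r₂ n y)) Filter.atTop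
          (nhds (ψ₂ y - ψ₂ y)) := Filter.Tendsto.sub tendsto_const_nhds hψc2
      have t3 := t1.add t2
      simpa using t3
    have hsq : Filter.Tendsto (fun n => H ((x,y) : ℝ × ℝ) - Tn n ((x,y) : ℝ × ℝ))
        Filter.atTop (nhds 0) := squeeze_zero hlb hub hbnd
    have t4 : Filter.Tendsto (fun n => H ((x,y) : ℝ × ℝ) - (H ((x,y) : ℝ × ℝ) - Tn n ((x,y) : ℝ × ℝ)))
        Filter.atTop (nhds (H ((x,y) : ℝ × ℝ) - 0)) := Filter.Tendsto.sub tendsto_const_nhds hsq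
    have t5 : (fun n => H ((x,y) : ℝ × ℝ) - (H ((x,y) : ℝ × ℝ) - Tn n ((x,y) : ℝ × ℝ)))
        = fun n => Tn n ((x,y) : ℝ × ℝ) := by funext n; ring
    rw [t5, sub_zero] at t4
    exact t4
  -- dominated convergence
  have hdom : ∀ (ν : Measure (ℝ × ℝ)) [IsProbabilityMeasure ν],
      ν (Set.Icc ((a₁, a₂) : ℝ × ℝ) (b₁, b₂))ᶜ = 0 →
      Filter.Tendsto (fun n => ∫ p, Tn n p ∂ν) Filter.atTop (nhds (∫ p, H p ∂ν)) := by
    intro ν _ hνR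
    have hae : ∀ᵐ p ∂ν, Filter.Tendsto (fun n => Tn n p) Filter.atTop (nhds (H p)) := by
      have h1 : ∀ᵐ p ∂ν, p ∈ R := by
        rw [MeasureTheory.ae_iff]
        exact hνR
      filter_upwards [h1] with p hp using hconv p hp
    exact tendsto_integral_of_dominated_convergence (fun _ => 4 * C)
      (fun n => (hTnmeas n).aestronglyMeasurable) (integrable_const _)
      (fun n => ae_of_all _ (fun p => by rw [Real.norm_eq_abs]; exact hTnbd n p)) hae
  have hHle : ∫ p, H p ∂A ≤ ∫ p, H p ∂μ :=
    le_of_tendsto_of_tendsto' (hdom A hAR) (hdom μ hμR) hcomp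
  -- assemble
  set f₁ : ℝ → ℝ := fun x => h (x, a₂) with hf₁def
  set f₂ : ℝ → ℝ := fun y => h (a₁, y) with hf₂def
  have hf₁meas : Measurable f₁ := hmeas.comp (measurable_id.prodMk measurable_const)
  have hf₂meas : Measurable f₂ := hmeas.comp (measurable_const.prodMk measurable_id)
  have hsplit : ∀ (ν : Measure (ℝ × ℝ)) [IsProbabilityMeasure ν],
      ∫ p, h p ∂ν = ∫ p, H p ∂ν + ∫ p, f₁ p.1 ∂ν + ∫ p, f₂ p.2 ∂ν - h (a₁, a₂) := by
    intro ν _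
    have hint_h : Integrable h ν := bdd_integrable ν hmeas hC
    have hint_f1 : Integrable (fun p : ℝ × ℝ => f₁ p.1) ν :=
      bdd_integrable ν (hf₁meas.comp measurable_fst) (fun p => hC _)
    have hint_f2 : Integrable (fun p : ℝ × ℝ => f₂ p.2) ν :=
      bdd_integrable ν (hf₂meas.comp measurable_snd) (fun p => hC _)
    have i1 : Integrable (fun p : ℝ × ℝ => h p - f₁ p.1) ν := hint_h.sub hint_f1
    have i2 : Integrable (fun p : ℝ × ℝ => h p - f₁ p.1 - f₂ p.2) ν := i1.sub hint_f2
    have e0 : ∫ p, H p ∂ν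
        = ∫ p, h p ∂ν - ∫ p, f₁ p.1 ∂ν - ∫ p, f₂ p.2 ∂ν + h (a₁, a₂) := by
      have ee : ∫ p, H p ∂ν = ∫ p, ((h p - f₁ p.1 - f₂ p.2) + h (a₁, a₂)) ∂ν :=
        integral_congr_ae (ae_of_all _ (fun p => by simp only [hHdef, hf₁def, hf₂def]))
      rw [ee, integral_add i2 (integrable_const _), integral_sub i1 hint_f2,
        integral_sub hint_h hint_f1, integral_const]
      simp [measure_univ]
    linarith
  have hm1' : ∫ p, f₁ p.1 ∂A = ∫ p, f₁ p.1 ∂μ := by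
    have e1 : ∫ p, f₁ p.1 ∂A = ∫ x, f₁ x ∂(A.map Prod.fst) :=
      (integral_map measurable_fst.aemeasurable hf₁meas.aestronglyMeasurable).symm
    have e2 : ∫ p, f₁ p.1 ∂μ = ∫ x, f₁ x ∂(μ.map Prod.fst) :=
      (integral_map measurable_fst.aemeasurable hf₁meas.aestronglyMeasurable).symm
    rw [e1, e2, m1]
  have hm2' : ∫ p, f₂ p.2 ∂A = ∫ p, f₂ p.2 ∂μ := by
    have e1 : ∫ p, f₂ p.2 ∂A = ∫ x, f₂ x ∂(A.map Prod.snd) :=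
      (integral_map measurable_snd.aemeasurable hf₂meas.aestronglyMeasurable).symm
    have e2 : ∫ p, f₂ p.2 ∂μ = ∫ x, f₂ x ∂(μ.map Prod.snd) :=
      (integral_map measurable_snd.aemeasurable hf₂meas.aestronglyMeasurable).symm
    rw [e1, e2, m2]
  rw [hsplit A, hsplit μ, hm1', hm2']
  linarith

/-- The antitone coupling of two distributions: it has the prescribed
marginals, its joint CDF is `max (F₁ x + F₂ y - 1) 0`, and it is minimal in the supermodular
order among all couplings of `(F₁, F₂)`. -/
theorem antitone_coupling_properties
    (a₁ b₁ a₂ b₂ : ℝ)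
    (μ₁ μ₂ : Measure ℝ) [IsProbabilityMeasure μ₁] [IsProbabilityMeasure μ₂]
    (hsupp₁ : μ₁ (Set.Icc a₁ b₁)ᶜ = 0) (hsupp₂ : μ₂ (Set.Icc a₂ b₂)ᶜ = 0)
    (F₁ F₂ : ℝ → ℝ)
    (hF₁ : ∀ x, F₁ x = (μ₁ (Set.Iic x)).toReal)
    (hF₂ : ∀ x, F₂ x = (μ₂ (Set.Iic x)).toReal)
    (q₁ q₂ : ℝ → ℝ)
    (hq₁ : ∀ u, q₁ u = sInf {x | u ≤ F₁ x})
    (hq₂ : ∀ u, q₂ u = sInf {x | u ≤ F₂ x})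
    (A : Measure (ℝ × ℝ))
    (hA : A = (volume.restrict (Set.Icc (0:ℝ) 1)).map (fun u => (q₁ u, q₂ (1 - u)))) :
    A.map Prod.fst = μ₁ ∧ A.map Prod.snd = μ₂ ∧
    (∀ x y : ℝ, (A (Set.Iic (x, y))).toReal = max (F₁ x + F₂ y - 1) 0) ∧
    (∀ μ : Measure (ℝ × ℝ), IsProbabilityMeasure μ →
      μ (Set.Icc (a₁, a₂) (b₁, b₂))ᶜ = 0 →
      μ.map Prod.fst = μ₁ → μ.map Prod.snd = μ₂ →
      ∀ h : ℝ × ℝ → ℝ, Measurable h → (∃ C, ∀ p, |h p| ≤ C) →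
        (∀ p ∈ Set.Icc (a₁, a₂) (b₁, b₂), ∀ q ∈ Set.Icc (a₁, a₂) (b₁, b₂),
          h p + h q ≤ h (p ⊔ q) + h (p ⊓ q)) →
        ∫ p, h p ∂A ≤ ∫ p, h p ∂μ) := by
  have hab₁ : a₁ ≤ b₁ := by
    by_contra hc
    push_neg at hc
    have he : Set.Icc a₁ b₁ = ∅ := Set.Icc_eq_empty (not_le.2 hc)
    have : μ₁ Set.univ = 0 := by
      rw [← Set.compl_empty, ← he]
      exact hsupp₁
    rw [measure_univ] at this
    exact one_ne_zero this
  have hab₂ : a₂ ≤ b₂ := by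
    by_contra hc
    push_neg at hc
    have he : Set.Icc a₂ b₂ = ∅ := Set.Icc_eq_empty (not_le.2 hc)
    have : μ₂ Set.univ = 0 := by
      rw [← Set.compl_empty, ← he]
      exact hsupp₂
    rw [measure_univ] at this
    exact one_ne_zero this
  have hq₁meas : Measurable q₁ := quantile_measurable hsupp₁ hF₁ hq₁
  have hq₂meas : Measurable q₂ := quantile_measurable hsupp₂ hF₂ hq₂
  have hmapmeas : Measurable (fun u : ℝ => (q₁ u, q₂ (1 - u))) :=
    hq₁meas.prodMk (hq₂meas.comp (measurable_const.sub measurable_id))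
  have part1 : A.map Prod.fst = μ₁ := by
    rw [hA, Measure.map_map measurable_fst hmapmeas]
    exact map_quantile_eq hsupp₁ hF₁ hq₁
  have part2 : A.map Prod.snd = μ₂ := by
    rw [hA, Measure.map_map measurable_snd hmapmeas]
    exact map_quantile_reflect_eq hsupp₂ hF₂ hq₂
  have part3ofReal : ∀ x y : ℝ, A (Set.Iic ((x, y) : ℝ × ℝ))
      = ENNReal.ofReal (F₁ x + F₂ y - 1) := by
    intro x y
    rw [hA]
    exact antitone_joint_cdf hsupp₁ hsupp₂ hF₁ hF₂ hq₁ hq₂ x y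
  have part3 : ∀ x y : ℝ, (A (Set.Iic ((x, y) : ℝ × ℝ))).toReal = max (F₁ x + F₂ y - 1) 0 := by
    intro x y
    rw [part3ofReal x y]
    rcases le_total (F₁ x + F₂ y - 1) 0 with hr | hr
    · rw [ENNReal.ofReal_of_nonpos hr, max_eq_right hr]
      simp
    · rw [ENNReal.toReal_ofReal hr, max_eq_left hr]
  refine ⟨part1, part2, part3, ?_⟩
  intro μ hμprob hμsupp hm1 hm2 h hmeas hbd hsm
  haveI := hμprob
  obtain ⟨C, hC⟩ := hbd
  haveI hAprob : IsProbabilityMeasure A := by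
    constructor
    rw [hA, Measure.map_apply hmapmeas MeasurableSet.univ]
    simp [Measure.restrict_apply, Real.volume_Icc]
  have hAsupp : A (Set.Icc ((a₁, a₂) : ℝ × ℝ) (b₁, b₂))ᶜ = 0 := by
    rw [hA, Measure.map_apply hmapmeas measurableSet_Icc.compl,
      Measure.restrict_apply (hmapmeas measurableSet_Icc.compl)]
    apply measure_mono_null (t := ({0} ∪ {1} : Set ℝ))
    · intro u ⟨hu1, hu2⟩
      simp only [Set.mem_preimage, Set.mem_compl_iff, Set.mem_Icc] at hu1
      rw [Set.mem_Icc] at hu2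
      by_contra hu
      simp only [Set.mem_union, Set.mem_singleton_iff, not_or] at hu
      have h0 : 0 < u := lt_of_le_of_ne hu2.1 (Ne.symm hu.1)
      have h1 : u < 1 := lt_of_le_of_ne hu2.2 hu.2
      have hq1 := quantile_mem hsupp₁ hF₁ hq₁ u h0 h1.le
      have hq2 := quantile_mem hsupp₂ hF₂ hq₂ (1 - u) (by linarith) (by linarith)
      exact hu1 ⟨Prod.mk_le_mk.2 ⟨hq1.1, hq2.1⟩, Prod.mk_le_mk.2 ⟨hq1.2, hq2.2⟩⟩
    · rw [measure_union_null_iff]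
      exact ⟨Real.volume_singleton, Real.volume_singleton⟩
  have hAIic : ∀ x y : ℝ, A (Set.Iic ((x,y) : ℝ × ℝ))
      = ENNReal.ofReal ((μ₁ (Set.Iic x)).toReal + (μ₂ (Set.Iic y)).toReal - 1) := by
    intro x y
    rw [← hF₁ x, ← hF₂ y]
    exact part3ofReal x y
  have hIicle := iic_compare hm1 hm2 hAIic
  have hquad := fun s t => ici_compare hm1 hm2 part1 part2 hIicle s t
  exact supermod_core hab₁ hab₂ hμsupp hAsupp hquad (hm1.trans part1.symm)
    (hm2.trans part2.symm) h hmeas hC hsm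
end

section
/- Let F₁ and F₂ be cumulative distribution functions of Borel probability measures supported on [a₁,b₁] and [a₂,b₂] respectively, with left-continuous quantile functions q₁, q₂. Let M be the pushforward of the Lebesgue measure on [0,1] under the map u ↦ (q₁(u), q₂(u)) (the monotone, or comonotone, coupling). Then: (i) M has marginal distributions F₁ and F₂; (ii) the joint CDF of M is (x,y) ↦ min(F₁(x), F₂(y)); and (iii) every Borel probability measure μ on [a₁,b₁] × [a₂,b₂] with marginals F₁ and F₂ satisfies ∫ h dM ≥ ∫ h dμ for every bounded measurable supermodular h, i.e. the monotone coupling is maximal in the supermodular order among all couplings of (F₁, F₂). -/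
open MeasureTheory Set
open scoped Classical

private lemma tele (A : ℕ → ℝ) : ∀ {a n : ℕ}, a ≤ n →
    ∑ i ∈ Finset.Ico a n, (A i - A (i+1)) = A a - A n := by
  intro a n h
  induction n, h using Nat.le_induction with
  | base => simp
  | succ n hmn ih => rw [Finset.sum_Ico_succ_top hmn, ih]; ring

private lemma exists_enum (T : Finset ℝ) (b : ℝ) (hb : b ∈ T) (hmax : ∀ t ∈ T, t ≤ b) :
    ∃ (m : ℕ) (e : ℕ → ℝ), Monotone e ∧ e m = b ∧ (∀ i, e i ∈ T) ∧ (∀ t ∈ T, ∃ i, e i = t) := by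
  classical
  set L := T.sort (· ≤ ·) with hL
  have hsor : L.Pairwise (· ≤ ·) := Finset.pairwise_sort T _
  have hmem : ∀ z, z ∈ L ↔ z ∈ T := fun z => Finset.mem_sort _
  refine ⟨L.length, fun i => L.getD i b, ?_, ?_, ?_, ?_⟩
  · intro i j hij
    show L.getD i b ≤ L.getD j b
    by_cases hj : j < L.length
    · have hi : i < L.length := lt_of_le_of_lt hij hj
      rw [(List.getD_eq_get (l := L) (d := b) ⟨i, hi⟩ : L.getD i b = _),
        (List.getD_eq_get (l := L) (d := b) ⟨j, hj⟩ : L.getD j b = _)]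
      exact hsor.rel_get_of_le (by exact hij)
    · rw [List.getD_eq_default _ _ (le_of_not_gt hj)]
      by_cases hi : i < L.length
      · rw [(List.getD_eq_get (l := L) (d := b) ⟨i, hi⟩ : L.getD i b = _)]
        exact hmax _ ((hmem _).1 (L.get_mem _))
      · rw [List.getD_eq_default _ _ (le_of_not_gt hi)]
  · show L.getD L.length b = b
    exact List.getD_eq_default _ _ le_rfl
  · intro i
    show L.getD i b ∈ T
    by_cases hi : i < L.length
    · rw [(List.getD_eq_get (l := L) (d := b) ⟨i, hi⟩ : L.getD i b = _)]; exact (hmem _).1 (L.get_mem _)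
    · rw [List.getD_eq_default _ _ (le_of_not_gt hi)]; exact hb
  · intro t ht
    obtain ⟨n, hn⟩ := List.mem_iff_get.1 ((hmem t).2 ht)
    exact ⟨n, by show L.getD n b = t; rw [(List.getD_eq_get (l := L) (d := b) n : L.getD n b = _)]; exact hn⟩

noncomputable def rIdx (e : ℕ → ℝ) (m : ℕ) (x : ℝ) : ℕ :=
  if h : ∃ i, x ≤ e i then Nat.find h else m

noncomputable def rPt (e : ℕ → ℝ) (m : ℕ) (x : ℝ) : ℝ := e (rIdx e m x)

lemma rIdx_le {e : ℕ → ℝ} {m : ℕ} {x : ℝ} {i : ℕ} (h : x ≤ e i) : rIdx e m x ≤ i := by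
  unfold rIdx; rw [dif_pos ⟨i, h⟩]; exact Nat.find_le h

lemma le_rPt {e : ℕ → ℝ} {m : ℕ} {x : ℝ} (h : ∃ i, x ≤ e i) : x ≤ rPt e m x := by
  unfold rPt rIdx; rw [dif_pos h]; exact Nat.find_spec h

lemma rPt_le {e : ℕ → ℝ} {m : ℕ} (he : Monotone e) {x : ℝ} {i : ℕ} (hx : x ≤ e i) :
    rPt e m x ≤ e i := he (rIdx_le hx)

lemma rIdx_neg {e : ℕ → ℝ} {m : ℕ} {x : ℝ} (h : ¬ ∃ i, x ≤ e i) : rIdx e m x = m := dif_neg h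

lemma le_e_iff {e : ℕ → ℝ} {m : ℕ} (he : Monotone e) {x : ℝ} (hex : ∃ j, x ≤ e j) (i : ℕ) :
    x ≤ e i ↔ rIdx e m x ≤ i :=
  ⟨fun h => rIdx_le h, fun h => le_trans (le_rPt hex) (he h)⟩

lemma rPt_mono {e : ℕ → ℝ} {m : ℕ} (he : Monotone e) (htop : ∀ i, e i ≤ e m) :
    Monotone (rPt e m) := by
  intro x y hxy
  by_cases hy : ∃ i, y ≤ e i
  · obtain ⟨i, hi⟩ := hy
    have hx : ∃ i, x ≤ e i := ⟨i, hxy.trans hi⟩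
    unfold rPt rIdx
    rw [dif_pos hx, dif_pos ⟨i, hi⟩]
    exact he (Nat.find_mono fun n hn => hxy.trans hn)
  · unfold rPt
    rw [rIdx_neg hy]
    exact htop _

private lemma rep (k : ℝ → ℝ → ℝ) (e f : ℕ → ℝ) (m l : ℕ)
    (he : Monotone e) (hf : Monotone f)
    (hetop : ∀ i, e i ≤ e m) (hftop : ∀ j, f j ≤ f l)
    (hk1 : ∀ y, k (e m) y = 0) (hk2 : ∀ x, k x (f l) = 0)
    (x y : ℝ) :
    k (rPt e m x) (rPt f l y) =
      ∑ ij ∈ Finset.range m ×ˢ Finset.range l,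
        ((k (e ij.1) (f ij.2) - k (e (ij.1+1)) (f ij.2) - k (e ij.1) (f (ij.2+1))
           + k (e (ij.1+1)) (f (ij.2+1))) *
          ((if x ≤ e ij.1 then (1:ℝ) else 0) * (if y ≤ f ij.2 then (1:ℝ) else 0))) := by
  classical
  by_cases hx : ∃ i, x ≤ e i
  · by_cases hy : ∃ j, y ≤ f j
    · set I := rIdx e m x with hI
      set J := rIdx f l y with hJ
      have hIm : I ≤ m := rIdx_le (le_trans hx.choose_spec (hetop _))
      have hJl : J ≤ l := rIdx_le (le_trans hy.choose_spec (hftop _))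
      have key : ∀ i : ℕ,
          ∑ j ∈ Finset.range l,
            ((k (e i) (f j) - k (e (i+1)) (f j) - k (e i) (f (j+1)) + k (e (i+1)) (f (j+1))) *
              ((if x ≤ e i then (1:ℝ) else 0) * (if y ≤ f j then (1:ℝ) else 0)))
          = (if I ≤ i then (1:ℝ) else 0) * (k (e i) (f J) - k (e (i+1)) (f J)) := by
        intro i
        have : ∀ j ∈ Finset.range l,
            ((k (e i) (f j) - k (e (i+1)) (f j) - k (e i) (f (j+1)) + k (e (i+1)) (f (j+1))) *
              ((if x ≤ e i then (1:ℝ) else 0) * (if y ≤ f j then (1:ℝ) else 0)))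
            = (if x ≤ e i then (1:ℝ) else 0) *
              (if J ≤ j then ((k (e i) (f j) - k (e (i+1)) (f j))
                 - (k (e i) (f (j+1)) - k (e (i+1)) (f (j+1)))) else 0) := by
          intro j _
          have hiff := le_e_iff (m := l) hf hy j
          by_cases h1 : x ≤ e i <;> by_cases h2 : y ≤ f j
          · rw [if_pos h1, if_pos h2, if_pos (show J ≤ j from hiff.1 h2)]; ring
          · rw [if_pos h1, if_neg h2, if_neg (show ¬ J ≤ j from fun hc => h2 (hiff.2 hc))]; ring
          · rw [if_neg h1, if_pos h2]; ring
          · rw [if_neg h1, if_neg h2]; ring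
        rw [Finset.sum_congr rfl this, ← Finset.mul_sum]
        congr 1
        · have hiff := le_e_iff (m := m) he hx i
          by_cases h1 : x ≤ e i
          · rw [if_pos h1, if_pos (hiff.1 h1)]
          · rw [if_neg h1, if_neg (fun hc => h1 (hiff.2 hc))]
        have hfil : Finset.Ico J l = (Finset.range l).filter (fun j => J ≤ j) := by
          ext j; simp [Finset.mem_Ico, Finset.mem_filter, Finset.mem_range]; omega
        rw [show (∑ j ∈ Finset.range l, (if J ≤ j then ((k (e i) (f j) - k (e (i+1)) (f j))
              - (k (e i) (f (j+1)) - k (e (i+1)) (f (j+1)))) else 0))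
            = ∑ j ∈ Finset.Ico J l, ((fun j => k (e i) (f j) - k (e (i+1)) (f j)) j
              - (fun j => k (e i) (f j) - k (e (i+1)) (f j)) (j+1)) from by
          rw [hfil, Finset.sum_filter]]
        rw [tele _ hJl]
        simp [hk2]
      rw [Finset.sum_product, Finset.sum_congr rfl (fun i _ => key i)]
      have hfil : Finset.Ico I m = (Finset.range m).filter (fun i => I ≤ i) := by
        ext i; simp [Finset.mem_Ico, Finset.mem_filter, Finset.mem_range]; omega
      rw [show (∑ i ∈ Finset.range m, ((if I ≤ i then (1:ℝ) else 0) * (k (e i) (f J) - k (e (i+1)) (f J))))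
          = ∑ i ∈ Finset.Ico I m, ((fun i => k (e i) (f J)) i - (fun i => k (e i) (f J)) (i+1)) from by
        rw [hfil, Finset.sum_filter]
        refine Finset.sum_congr rfl fun i _ => ?_
        by_cases h : I ≤ i <;> simp [h]]
      rw [tele _ hIm]
      simp [hk1, rPt, ← hI, ← hJ]
    · have h1 : rPt f l y = f l := by unfold rPt; rw [rIdx_neg hy]
      rw [h1, hk2]
      symm
      refine Finset.sum_eq_zero fun ij _ => ?_
      rw [if_neg (fun hc => hy ⟨ij.2, hc⟩)]
      ring
  · have h1 : rPt e m x = e m := by unfold rPt; rw [rIdx_neg hx]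
    rw [h1, hk1]
    symm
    refine Finset.sum_eq_zero fun ij _ => ?_
    rw [if_neg (fun hc => hx ⟨ij.1, hc⟩)]
    ring

private lemma integral_rep (k : ℝ → ℝ → ℝ) (e f : ℕ → ℝ) (m l : ℕ)
    (he : Monotone e) (hf : Monotone f)
    (hetop : ∀ i, e i ≤ e m) (hftop : ∀ j, f j ≤ f l)
    (hk1 : ∀ y, k (e m) y = 0) (hk2 : ∀ x, k x (f l) = 0)
    (γ : Measure (ℝ × ℝ)) [IsFiniteMeasure γ] :
    ∫ p, k (rPt e m p.1) (rPt f l p.2) ∂γ =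
      ∑ ij ∈ Finset.range m ×ˢ Finset.range l,
        ((k (e ij.1) (f ij.2) - k (e (ij.1+1)) (f ij.2) - k (e ij.1) (f (ij.2+1))
           + k (e (ij.1+1)) (f (ij.2+1))) * (γ (Iic ((e ij.1, f ij.2) : ℝ × ℝ))).toReal) := by
  classical
  have hrw : (fun p : ℝ × ℝ => k (rPt e m p.1) (rPt f l p.2)) =
      fun p : ℝ × ℝ => ∑ ij ∈ Finset.range m ×ˢ Finset.range l,
        Set.indicator (Iic ((e ij.1, f ij.2) : ℝ × ℝ))
          (fun _ => (k (e ij.1) (f ij.2) - k (e (ij.1+1)) (f ij.2) - k (e ij.1) (f (ij.2+1))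
           + k (e (ij.1+1)) (f (ij.2+1)))) p := by
    funext p
    rw [rep k e f m l he hf hetop hftop hk1 hk2 p.1 p.2]
    refine Finset.sum_congr rfl fun ij _ => ?_
    rw [Set.indicator_apply]
    by_cases h1 : p.1 ≤ e ij.1 <;> by_cases h2 : p.2 ≤ f ij.2
    · rw [if_pos h1, if_pos h2, if_pos (show p ∈ Iic ((e ij.1, f ij.2):ℝ×ℝ) from ⟨h1, h2⟩)]; ring
    · rw [if_pos h1, if_neg h2, if_neg (fun hc => h2 hc.2)]; ring
    · rw [if_neg h1, if_pos h2, if_neg (fun hc => h1 hc.1)]; ring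
    · rw [if_neg h1, if_neg h2, if_neg (fun hc => h1 hc.1)]; ring
  rw [hrw, integral_finset_sum _ (fun ij _ => (integrable_const _).indicator measurableSet_Iic)]
  refine Finset.sum_congr rfl fun ij _ => ?_
  rw [integral_indicator_const _ measurableSet_Iic, smul_eq_mul, mul_comm]; rfl

private lemma step_le (k : ℝ → ℝ → ℝ) (e f : ℕ → ℝ) (m l : ℕ)
    (he : Monotone e) (hf : Monotone f)
    (hetop : ∀ i, e i ≤ e m) (hftop : ∀ j, f j ≤ f l)
    (hk1 : ∀ y, k (e m) y = 0) (hk2 : ∀ x, k x (f l) = 0)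
    (hrect : ∀ x x' y y' : ℝ, x ≤ x' → y ≤ y' → 0 ≤ k x y - k x' y - k x y' + k x' y')
    (μ ν : Measure (ℝ × ℝ)) [IsFiniteMeasure μ] [IsFiniteMeasure ν]
    (hle : ∀ s t : ℝ, (μ (Iic ((s, t) : ℝ × ℝ))).toReal ≤ (ν (Iic ((s, t) : ℝ × ℝ))).toReal) :
    ∫ p, k (rPt e m p.1) (rPt f l p.2) ∂μ ≤ ∫ p, k (rPt e m p.1) (rPt f l p.2) ∂ν := by
  rw [integral_rep k e f m l he hf hetop hftop hk1 hk2 μ,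
    integral_rep k e f m l he hf hetop hftop hk1 hk2 ν]
  refine Finset.sum_le_sum fun ij _ => ?_
  exact mul_le_mul_of_nonneg_left (hle _ _)
    (hrect _ _ _ _ (he (Nat.le_succ _)) (hf (Nat.le_succ _)))

private lemma meas_inter_Icc (A : Set ℝ) : volume (A ∩ Icc 0 1) = volume (A ∩ Ioc 0 1) := by
  apply le_antisymm
  · calc volume (A ∩ Icc 0 1) ≤ volume ((A ∩ Ioc 0 1) ∪ {0}) := by
          refine measure_mono ?_
          rintro u ⟨hA, h0, h1⟩
          rcases eq_or_lt_of_le h0 with h | h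
          · exact Or.inr (by simp [← h])
          · exact Or.inl ⟨hA, h, h1⟩
      _ ≤ volume (A ∩ Ioc 0 1) + volume {0} := measure_union_le _ _
      _ = volume (A ∩ Ioc 0 1) := by rw [Real.volume_singleton, add_zero]
  · exact measure_mono (inter_subset_inter_right _ Ioc_subset_Icc_self)

section Quantile

variable {a b : ℝ} {μ : Measure ℝ} {F q : ℝ → ℝ}

private lemma Fmono [IsFiniteMeasure μ] (hF : ∀ x, F x = (μ (Iic x)).toReal) : Monotone F := by
  intro x y hxy
  rw [hF, hF]
  exact ENNReal.toReal_mono (measure_ne_top _ _) (measure_mono (Iic_subset_Iic.2 hxy))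

private lemma Fnonneg (hF : ∀ x, F x = (μ (Iic x)).toReal) (x : ℝ) : 0 ≤ F x := by
  rw [hF]; exact ENNReal.toReal_nonneg

private lemma Fleone [IsProbabilityMeasure μ] (hF : ∀ x, F x = (μ (Iic x)).toReal) (x : ℝ) :
    F x ≤ 1 := by
  rw [hF]
  calc (μ (Iic x)).toReal ≤ (1 : ENNReal).toReal :=
        ENNReal.toReal_mono ENNReal.one_ne_top prob_le_one
    _ = 1 := ENNReal.toReal_one

private lemma Fone [IsProbabilityMeasure μ] (hsupp : μ (Icc a b)ᶜ = 0)
    (hF : ∀ x, F x = (μ (Iic x)).toReal) {x : ℝ} (hx : b ≤ x) : F x = 1 := by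
  rw [hF]
  have hc : μ (Iic x)ᶜ = 0 := by
    refine measure_mono_null ?_ hsupp
    intro z hz
    simp only [mem_compl_iff, mem_Iic, not_le] at hz ⊢
    intro hmem
    exact absurd (hmem.2.trans hx) (not_le.2 hz)
  rw [(prob_compl_eq_zero_iff measurableSet_Iic).1 hc]
  exact ENNReal.toReal_one

private lemma Fzero (hsupp : μ (Icc a b)ᶜ = 0)
    (hF : ∀ x, F x = (μ (Iic x)).toReal) {x : ℝ} (hx : x < a) : F x = 0 := by
  rw [hF]
  have : μ (Iic x) = 0 := by
    refine measure_mono_null ?_ hsupp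
    intro z hz
    simp only [mem_Iic] at hz
    simp only [mem_compl_iff, mem_Icc, not_and, not_le]
    intro ha
    exact absurd (ha.trans hz) (not_le.2 hx)
  simp [this]

private lemma q_le_iff [IsProbabilityMeasure μ] (hsupp : μ (Icc a b)ᶜ = 0)
    (hF : ∀ x, F x = (μ (Iic x)).toReal) (hq : ∀ u, q u = sInf {x | u ≤ F x})
    {u : ℝ} (hu0 : 0 < u) (hu1 : u ≤ 1) (x : ℝ) : q u ≤ x ↔ u ≤ F x := by
  have hSb : b ∈ {x | u ≤ F x} := by
    simp only [mem_setOf_eq, Fone hsupp hF le_rfl]; exact hu1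
  have hbdd : BddBelow {x | u ≤ F x} := by
    refine ⟨a, fun z hz => ?_⟩
    by_contra hlt
    push_neg at hlt
    rw [mem_setOf_eq, Fzero hsupp hF hlt] at hz
    exact absurd (lt_of_lt_of_le hu0 hz) (lt_irrefl 0)
  constructor
  · intro hle
    have hq_mem : u ≤ F (q u) := by
      have hseq : ∀ n : ℕ, u ≤ F (q u + 1/(n+1)) := by
        intro n
        have hpos : (0:ℝ) < 1/(n+1) := by positivity
        have hlt : sInf {x | u ≤ F x} < q u + 1/(n+1) := by
          rw [← hq]; linarith
        obtain ⟨z, hzS, hzlt⟩ := (csInf_lt_iff hbdd ⟨b, hSb⟩).1 hlt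
        exact le_trans hzS (Fmono hF hzlt.le)
      have hIic : Iic (q u) = ⋂ n : ℕ, Iic (q u + 1/(n+1)) := by
        ext z
        simp only [mem_Iic, mem_iInter]
        constructor
        · intro h n
          have hpos : (0:ℝ) < 1/(n+1) := by positivity
          linarith
        · intro h
          refine le_of_forall_pos_le_add fun ε hε => ?_
          obtain ⟨n, hn⟩ := exists_nat_one_div_lt hε
          exact (h n).trans (by linarith)
      have hmeas : ENNReal.ofReal u ≤ μ (Iic (q u)) := by
        rw [hIic]
        have hdir : Antitone (fun n : ℕ => Iic (q u + 1/(n+1))) := by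
          intro n m hnm
          apply Iic_subset_Iic.2
          have : (1:ℝ)/(m+1) ≤ 1/(n+1) := by
            apply one_div_le_one_div_of_le (by positivity)
            exact_mod_cast by omega
          linarith
        have htend := tendsto_measure_iInter_atTop (μ := μ)
          (fun n => measurableSet_Iic.nullMeasurableSet) hdir ⟨0, measure_ne_top μ _⟩
        refine ge_of_tendsto htend (Filter.Eventually.of_forall fun n => ?_)
        exact ENNReal.ofReal_le_of_le_toReal (by simp only [Function.comp_apply]; rw [← hF]; exact hseq n)
      calc u = (ENNReal.ofReal u).toReal := (ENNReal.toReal_ofReal hu0.le).symm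
        _ ≤ (μ (Iic (q u))).toReal := ENNReal.toReal_mono (measure_ne_top _ _) hmeas
        _ = F (q u) := (hF _).symm
    exact le_trans hq_mem (Fmono hF hle)
  · intro hFx
    rw [hq]
    exact csInf_le hbdd hFx

private lemma q_ge [IsProbabilityMeasure μ] (hsupp : μ (Icc a b)ᶜ = 0)
    (hF : ∀ x, F x = (μ (Iic x)).toReal) (hq : ∀ u, q u = sInf {x | u ≤ F x})
    {u : ℝ} (hu0 : 0 < u) (hu1 : u ≤ 1) : a ≤ q u := by
  rw [hq]
  refine le_csInf ⟨b, by simp only [mem_setOf_eq, Fone hsupp hF le_rfl]; exact hu1⟩ ?_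
  intro z hz
  by_contra hlt
  push_neg at hlt
  rw [mem_setOf_eq, Fzero hsupp hF hlt] at hz
  exact absurd (lt_of_lt_of_le hu0 hz) (lt_irrefl 0)

private lemma q_meas [IsProbabilityMeasure μ] (hsupp : μ (Icc a b)ᶜ = 0)
    (hF : ∀ x, F x = (μ (Iic x)).toReal) (hq : ∀ u, q u = sInf {x | u ≤ F x}) :
    Measurable q := by
  have h0 : ∀ u : ℝ, u ≤ 0 → q u = 0 := by
    intro u hu
    rw [hq]
    have huniv : {x | u ≤ F x} = univ :=
      eq_univ_of_forall fun x => le_trans hu (Fnonneg hF x)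
    rw [huniv]
    apply Real.sInf_of_not_bddBelow
    rintro ⟨c, hc⟩
    have := hc (mem_univ (c - 1))
    linarith
  have h1 : ∀ u : ℝ, 1 < u → q u = 0 := by
    intro u hu
    rw [hq]
    have hempty : {x | u ≤ F x} = ∅ := by
      refine eq_empty_iff_forall_notMem.2 fun x hx => ?_
      exact absurd (le_trans hx (Fleone hF x)) (not_le.2 hu)
    rw [hempty]
    exact Real.sInf_empty
  have hmono : ∀ u v : ℝ, u ∈ Ioc (0:ℝ) 1 → v ∈ Ioc (0:ℝ) 1 → u ≤ v → q u ≤ q v := by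
    intro u v hu hv huv
    rw [hq, hq]
    refine csInf_le_csInf ?_ ?_ ?_
    · refine ⟨a, fun z hz => ?_⟩
      by_contra hlt
      push_neg at hlt
      rw [mem_setOf_eq, Fzero hsupp hF hlt] at hz
      exact absurd (lt_of_lt_of_le hu.1 hz) (lt_irrefl 0)
    · exact ⟨b, by simp only [mem_setOf_eq, Fone hsupp hF le_rfl]; exact hv.2⟩
    · intro z hz
      exact le_trans huv hz
  apply measurable_of_Iic
  intro c
  have hconn : MeasurableSet (Ioc (0:ℝ) 1 ∩ q ⁻¹' Iic c) := by
    refine Set.OrdConnected.measurableSet ⟨?_⟩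
    rintro u ⟨hu, hqu⟩ v ⟨hv, hqv⟩ z hz
    have hzI : z ∈ Ioc (0:ℝ) 1 := ⟨lt_of_lt_of_le hu.1 hz.1, le_trans hz.2 hv.2⟩
    refine ⟨hzI, ?_⟩
    simp only [mem_preimage, mem_Iic] at hqv ⊢
    exact le_trans (hmono z v hzI hv hz.2) hqv
  by_cases hc : (0:ℝ) ≤ c
  · have heq : q ⁻¹' Iic c = (Ioc (0:ℝ) 1 ∩ q ⁻¹' Iic c) ∪ (Ioc (0:ℝ) 1)ᶜ := by
      ext u
      simp only [mem_preimage, mem_Iic, mem_union, mem_inter_iff, mem_compl_iff, mem_Ioc]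
      constructor
      · intro h
        by_cases hu : 0 < u ∧ u ≤ 1
        · exact Or.inl ⟨hu, h⟩
        · exact Or.inr hu
      · rintro (⟨_, h⟩ | h)
        · exact h
        · push_neg at h
          rcases le_or_gt u 0 with hu | hu
          · rw [h0 u hu]; exact hc
          · rw [h1 u (h hu)]; exact hc
    rw [heq]
    exact hconn.union measurableSet_Ioc.compl
  · have heq : q ⁻¹' Iic c = Ioc (0:ℝ) 1 ∩ q ⁻¹' Iic c := by
      ext u
      simp only [mem_preimage, mem_Iic, mem_inter_iff, mem_Ioc]
      constructor
      · intro h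
        rcases le_or_gt u 0 with hu | hu
        · rw [h0 u hu] at h; exact absurd h hc
        · rcases le_or_gt u 1 with hu1 | hu1
          · exact ⟨⟨hu, hu1⟩, h⟩
          · rw [h1 u hu1] at h; exact absurd h hc
      · rintro ⟨_, h⟩; exact h
    rw [heq]
    exact hconn

private lemma preimage_eq [IsProbabilityMeasure μ] (hsupp : μ (Icc a b)ᶜ = 0)
    (hF : ∀ x, F x = (μ (Iic x)).toReal) (hq : ∀ u, q u = sInf {x | u ≤ F x}) (x : ℝ) :
    q ⁻¹' (Iic x) ∩ Ioc 0 1 = Ioc 0 (F x) := by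
  ext u
  simp only [mem_inter_iff, mem_preimage, mem_Iic, mem_Ioc]
  constructor
  · rintro ⟨hqx, h0, h1⟩
    exact ⟨h0, (q_le_iff hsupp hF hq h0 h1 x).1 hqx⟩
  · rintro ⟨h0, hux⟩
    have h1 : u ≤ 1 := le_trans hux (Fleone hF x)
    exact ⟨(q_le_iff hsupp hF hq h0 h1 x).2 hux, h0, h1⟩

private lemma map_q [IsProbabilityMeasure μ] (hsupp : μ (Icc a b)ᶜ = 0)
    (hF : ∀ x, F x = (μ (Iic x)).toReal) (hq : ∀ u, q u = sInf {x | u ≤ F x}) :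
    (volume.restrict (Icc (0:ℝ) 1)).map q = μ := by
  have hqm : Measurable q := q_meas hsupp hF hq
  haveI : IsProbabilityMeasure (volume.restrict (Icc (0:ℝ) 1)) := by
    constructor
    rw [Measure.restrict_apply_univ, Real.volume_Icc]
    norm_num
  haveI := Measure.isProbabilityMeasure_map (μ := volume.restrict (Icc (0:ℝ) 1)) hqm.aemeasurable
  refine Measure.ext_of_Iic _ _ fun x => ?_
  rw [Measure.map_apply hqm measurableSet_Iic, Measure.restrict_apply (hqm measurableSet_Iic)]
  rw [meas_inter_Icc, preimage_eq hsupp hF hq x, Real.volume_Ioc, sub_zero, hF,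
    ENNReal.ofReal_toReal (measure_ne_top _ _)]

end Quantile

open Filter Topology

/-- The monotone (comonotone) coupling of two distributions: it has the
prescribed marginals, its joint CDF is `min (F₁ x) (F₂ y)`, and it is maximal in the
supermodular order among all couplings of `(F₁, F₂)`. -/
theorem monotone_coupling_properties
    (a₁ b₁ a₂ b₂ : ℝ)
    (μ₁ μ₂ : Measure ℝ) [IsProbabilityMeasure μ₁] [IsProbabilityMeasure μ₂]
    (hsupp₁ : μ₁ (Set.Icc a₁ b₁)ᶜ = 0) (hsupp₂ : μ₂ (Set.Icc a₂ b₂)ᶜ = 0)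
    (F₁ F₂ : ℝ → ℝ)
    (hF₁ : ∀ x, F₁ x = (μ₁ (Set.Iic x)).toReal)
    (hF₂ : ∀ x, F₂ x = (μ₂ (Set.Iic x)).toReal)
    (q₁ q₂ : ℝ → ℝ)
    (hq₁ : ∀ u, q₁ u = sInf {x | u ≤ F₁ x})
    (hq₂ : ∀ u, q₂ u = sInf {x | u ≤ F₂ x})
    (M : Measure (ℝ × ℝ))
    (hM : M = (volume.restrict (Set.Icc (0:ℝ) 1)).map (fun u => (q₁ u, q₂ u))) :
    M.map Prod.fst = μ₁ ∧ M.map Prod.snd = μ₂ ∧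
    (∀ x y : ℝ, (M (Set.Iic (x, y))).toReal = min (F₁ x) (F₂ y)) ∧
    (∀ μ : Measure (ℝ × ℝ), IsProbabilityMeasure μ →
      μ (Set.Icc (a₁, a₂) (b₁, b₂))ᶜ = 0 →
      μ.map Prod.fst = μ₁ → μ.map Prod.snd = μ₂ →
      ∀ h : ℝ × ℝ → ℝ, Measurable h → (∃ C, ∀ p, |h p| ≤ C) →
        (∀ p ∈ Set.Icc (a₁, a₂) (b₁, b₂), ∀ q ∈ Set.Icc (a₁, a₂) (b₁, b₂),
          h p + h q ≤ h (p ⊔ q) + h (p ⊓ q)) →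
        ∫ p, h p ∂μ ≤ ∫ p, h p ∂M) := by
  classical
  have hab1 : a₁ ≤ b₁ := by
    by_contra hcon
    have he : Icc a₁ b₁ = ∅ := Icc_eq_empty hcon
    have h0 : μ₁ univ = 0 := by rw [← compl_empty, ← he]; exact hsupp₁
    have h1 : (1 : ENNReal) = 0 := by rw [← measure_univ (μ := μ₁), h0]
    exact one_ne_zero h1
  have hab2 : a₂ ≤ b₂ := by
    by_contra hcon
    have he : Icc a₂ b₂ = ∅ := Icc_eq_empty hcon
    have h0 : μ₂ univ = 0 := by rw [← compl_empty, ← he]; exact hsupp₂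
    have h1 : (1 : ENNReal) = 0 := by rw [← measure_univ (μ := μ₂), h0]
    exact one_ne_zero h1
  have hq1m : Measurable q₁ := q_meas hsupp₁ hF₁ hq₁
  have hq2m : Measurable q₂ := q_meas hsupp₂ hF₂ hq₂
  have hΦm : Measurable (fun u => (q₁ u, q₂ u)) := hq1m.prodMk hq2m
  haveI hsP : IsProbabilityMeasure (volume.restrict (Icc (0:ℝ) 1)) := by
    constructor
    rw [Measure.restrict_apply_univ, Real.volume_Icc]
    norm_num
  haveI hMP : IsProbabilityMeasure M := by
    rw [hM]; exact Measure.isProbabilityMeasure_map hΦm.aemeasurable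
  have hmap1 : M.map Prod.fst = μ₁ := by
    rw [hM, Measure.map_map measurable_fst hΦm]
    exact map_q hsupp₁ hF₁ hq₁
  have hmap2 : M.map Prod.snd = μ₂ := by
    rw [hM, Measure.map_map measurable_snd hΦm]
    exact map_q hsupp₂ hF₂ hq₂
  have hpart2 : ∀ x y : ℝ, (M (Iic ((x, y) : ℝ × ℝ))).toReal = min (F₁ x) (F₂ y) := by
    intro x y
    have hpre : (fun u => (q₁ u, q₂ u)) ⁻¹' (Iic ((x, y) : ℝ × ℝ))
        = q₁ ⁻¹' (Iic x) ∩ q₂ ⁻¹' (Iic y) := by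
      ext u
      simp only [mem_preimage, mem_Iic, Prod.le_def, mem_inter_iff]
    have hint : (q₁ ⁻¹' (Iic x) ∩ q₂ ⁻¹' (Iic y)) ∩ Ioc 0 1
        = (q₁ ⁻¹' (Iic x) ∩ Ioc 0 1) ∩ (q₂ ⁻¹' (Iic y) ∩ Ioc 0 1) := by
      ext u
      simp only [mem_inter_iff]
      tauto
    rw [hM, Measure.map_apply hΦm measurableSet_Iic,
      Measure.restrict_apply (hΦm measurableSet_Iic), meas_inter_Icc, hpre, hint,
      preimage_eq hsupp₁ hF₁ hq₁ x, preimage_eq hsupp₂ hF₂ hq₂ y, Ioc_inter_Ioc, sup_idem,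
      Real.volume_Ioc, sub_zero,
      ENNReal.toReal_ofReal (le_min (Fnonneg hF₁ x) (Fnonneg hF₂ y))]
  refine ⟨hmap1, hmap2, hpart2, ?_⟩
  intro μ hμP hμsupp hμ1 hμ2 h hmeas hbd hsuper
  obtain ⟨C, hC⟩ := hbd
  haveI := hμP
  -- clamping maps
  set cl₁ : ℝ → ℝ := fun x => max a₁ (min x b₁) with hcl₁def
  set cl₂ : ℝ → ℝ := fun y => max a₂ (min y b₂) with hcl₂def
  have hcl₁mono : Monotone cl₁ := fun x y hxy => max_le_max le_rfl (min_le_min hxy le_rfl)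
  have hcl₂mono : Monotone cl₂ := fun x y hxy => max_le_max le_rfl (min_le_min hxy le_rfl)
  have hcl₁mem : ∀ x, cl₁ x ∈ Icc a₁ b₁ := fun x =>
    ⟨le_max_left _ _, max_le hab1 (min_le_right _ _)⟩
  have hcl₂mem : ∀ y, cl₂ y ∈ Icc a₂ b₂ := fun y =>
    ⟨le_max_left _ _, max_le hab2 (min_le_right _ _)⟩
  have hcl₁id : ∀ x, x ∈ Icc a₁ b₁ → cl₁ x = x := by
    intro x hx; simp only [hcl₁def]; rw [min_eq_left hx.2, max_eq_right hx.1]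
  have hcl₂id : ∀ y, y ∈ Icc a₂ b₂ → cl₂ y = y := by
    intro y hy; simp only [hcl₂def]; rw [min_eq_left hy.2, max_eq_right hy.1]
  have hcl₁hi : ∀ x, b₁ ≤ x → cl₁ x = b₁ := by
    intro x hx; simp only [hcl₁def]; rw [min_eq_right hx, max_eq_right hab1]
  have hcl₂hi : ∀ y, b₂ ≤ y → cl₂ y = b₂ := by
    intro y hy; simp only [hcl₂def]; rw [min_eq_right hy, max_eq_right hab2]
  have hcl₁lo : ∀ x, x ≤ a₁ → cl₁ x = a₁ := by
    intro x hx; simp only [hcl₁def]; rw [max_eq_left (le_trans (min_le_left _ _) hx)]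
  have hcl₂lo : ∀ y, y ≤ a₂ → cl₂ y = a₂ := by
    intro y hy; simp only [hcl₂def]; rw [max_eq_left (le_trans (min_le_left _ _) hy)]
  -- clamped h
  set H : ℝ × ℝ → ℝ := fun p => h (cl₁ p.1, cl₂ p.2) with hHdef
  have hHbd : ∀ p, |H p| ≤ C := fun p => hC _
  have hboxmem : ∀ p : ℝ × ℝ, (cl₁ p.1, cl₂ p.2) ∈ Icc ((a₁, a₂) : ℝ × ℝ) (b₁, b₂) := by
    intro p
    rw [mem_Icc]
    exact ⟨⟨(hcl₁mem _).1, (hcl₂mem _).1⟩, ⟨(hcl₁mem _).2, (hcl₂mem _).2⟩⟩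
  have hHsuper : ∀ p q : ℝ × ℝ, H p + H q ≤ H (p ⊔ q) + H (p ⊓ q) := by
    intro p q
    have key := hsuper _ (hboxmem p) _ (hboxmem q)
    have hsupeq : ((cl₁ p.1, cl₂ p.2) : ℝ × ℝ) ⊔ (cl₁ q.1, cl₂ q.2)
        = (cl₁ (p ⊔ q).1, cl₂ (p ⊔ q).2) := by
      refine Prod.ext_iff.2 ⟨?_, ?_⟩
      · exact (hcl₁mono.map_sup _ _).symm
      · exact (hcl₂mono.map_sup _ _).symm
    have hinfeq : ((cl₁ p.1, cl₂ p.2) : ℝ × ℝ) ⊓ (cl₁ q.1, cl₂ q.2)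
        = (cl₁ (p ⊓ q).1, cl₂ (p ⊓ q).2) := by
      refine Prod.ext_iff.2 ⟨?_, ?_⟩
      · exact (hcl₁mono.map_inf _ _).symm
      · exact (hcl₂mono.map_inf _ _).symm
    rw [hsupeq, hinfeq] at key
    simp only [hHdef]
    exact key
  -- the normalized kernel k
  set k : ℝ → ℝ → ℝ := fun x y => H (x, y) - H (x, b₂) - H (b₁, y) + H (b₁, b₂) with hkdef
  have hH1 : ∀ x y, b₁ ≤ x → H (x, y) = H (b₁, y) := by
    intro x y hx; simp only [hHdef]
    rw [show cl₁ x = cl₁ b₁ from by rw [hcl₁hi x hx, hcl₁id b₁ ⟨hab1, le_rfl⟩]]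
  have hH2 : ∀ x y, b₂ ≤ y → H (x, y) = H (x, b₂) := by
    intro x y hy; simp only [hHdef]
    rw [show cl₂ y = cl₂ b₂ from by rw [hcl₂hi y hy, hcl₂id b₂ ⟨hab2, le_rfl⟩]]
  have hH1lo : ∀ x y, x ≤ a₁ → H (x, y) = H (a₁, y) := by
    intro x y hx; simp only [hHdef]
    rw [show cl₁ x = cl₁ a₁ from by rw [hcl₁lo x hx, hcl₁id a₁ ⟨le_rfl, hab1⟩]]
  have hH2lo : ∀ x y, y ≤ a₂ → H (x, y) = H (x, a₂) := by
    intro x y hy; simp only [hHdef]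
    rw [show cl₂ y = cl₂ a₂ from by rw [hcl₂lo y hy, hcl₂id a₂ ⟨le_rfl, hab2⟩]]
  have hktop1 : ∀ x y, b₁ ≤ x → k x y = 0 := by
    intro x y hx; simp only [hkdef]; rw [hH1 x y hx, hH1 x b₂ hx]; ring
  have hktop2 : ∀ x y, b₂ ≤ y → k x y = 0 := by
    intro x y hy; simp only [hkdef]; rw [hH2 x y hy, hH2 b₁ y hy]; ring
  have hklo1 : ∀ x y, x ≤ a₁ → k x y = k a₁ y := by
    intro x y hx; simp only [hkdef]; rw [hH1lo x y hx, hH1lo x b₂ hx]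
  have hklo2 : ∀ x y, y ≤ a₂ → k x y = k x a₂ := by
    intro x y hy; simp only [hkdef]; rw [hH2lo x y hy, hH2lo b₁ y hy]
  have hkrect : ∀ x x' y y' : ℝ, x ≤ x' → y ≤ y' →
      0 ≤ k x y - k x' y - k x y' + k x' y' := by
    intro x x' y y' hxx' hyy'
    have key := hHsuper (x', y) (x, y')
    have hs : ((x', y) : ℝ × ℝ) ⊔ (x, y') = (x', y') :=
      Prod.ext_iff.2 ⟨sup_eq_left.2 hxx', sup_eq_right.2 hyy'⟩
    have hi : ((x', y) : ℝ × ℝ) ⊓ (x, y') = (x, y) :=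
      Prod.ext_iff.2 ⟨inf_eq_right.2 hxx', inf_eq_left.2 hyy'⟩
    rw [hs, hi] at key
    simp only [hkdef]
    linarith
  have hkanti1 : ∀ x x' y, x ≤ x' → k x' y ≤ k x y := by
    intro x x' y hxx'
    rcases le_or_gt y b₂ with hy | hy
    · have := hkrect x x' y b₂ hxx' hy
      rw [hktop2 x b₂ le_rfl, hktop2 x' b₂ le_rfl] at this
      linarith
    · rw [hktop2 x y hy.le, hktop2 x' y hy.le]
  have hkanti2 : ∀ x y y', y ≤ y' → k x y' ≤ k x y := by
    intro x y y' hyy'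
    rcases le_or_gt x b₁ with hx | hx
    · have := hkrect x b₁ y y' hx hyy'
      rw [hktop1 b₁ y le_rfl, hktop1 b₁ y' le_rfl] at this
      linarith
    · rw [hktop1 x y hx.le, hktop1 x y' hx.le]
  have hg1bd : ∀ x x' y, x ≤ x' → k x y - k x' y ≤ k x a₂ - k x' a₂ := by
    intro x x' y hxx'
    rcases le_or_gt y a₂ with hy | hy
    · rw [hklo2 x y hy, hklo2 x' y hy]
    · have := hkrect x x' a₂ y hxx' hy.le
      linarith
  have hg2bd : ∀ x y y', y ≤ y' → k x y - k x y' ≤ k a₁ y - k a₁ y' := by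
    intro x y y' hyy'
    rcases le_or_gt x a₁ with hx | hx
    · rw [hklo1 x y hx, hklo1 x y' hx]
    · have := hkrect a₁ x y y' hx.le hyy'
      linarith
  have hkbd : ∀ x y, |k x y| ≤ 4 * C := by
    intro x y
    have h1 := abs_le.1 (hHbd (x, y))
    have h2 := abs_le.1 (hHbd (x, b₂))
    have h3 := abs_le.1 (hHbd (b₁, y))
    have h4 := abs_le.1 (hHbd (b₁, b₂))
    rw [abs_le]
    constructor
    · simp only [hkdef]
      linarith [h1.1, h1.2, h2.1, h2.2, h3.1, h3.2, h4.1, h4.2]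
    · simp only [hkdef]
      linarith [h1.1, h1.2, h2.1, h2.2, h3.1, h3.2, h4.1, h4.2]
  -- measurability
  have hcl₁c : Continuous cl₁ := continuous_const.max (continuous_id.min continuous_const)
  have hcl₂c : Continuous cl₂ := continuous_const.max (continuous_id.min continuous_const)
  have hHmeas : Measurable H :=
    hmeas.comp ((hcl₁c.comp continuous_fst).prodMk (hcl₂c.comp continuous_snd)).measurable
  have hkmeas : Measurable (fun p : ℝ × ℝ => k p.1 p.2) := by
    simp only [hkdef]
    exact (((hHmeas.comp (measurable_fst.prodMk measurable_snd)).sub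
      (hHmeas.comp (measurable_fst.prodMk measurable_const))).sub
      (hHmeas.comp (measurable_const.prodMk measurable_snd))).add measurable_const
  -- comparison of joint CDFs
  have hμle : ∀ s t : ℝ, (μ (Iic ((s, t) : ℝ × ℝ))).toReal ≤ (M (Iic ((s, t) : ℝ × ℝ))).toReal := by
    intro s t
    rw [hpart2 s t]
    refine le_min ?_ ?_
    · have h1 : μ (Iic ((s, t) : ℝ × ℝ)) ≤ μ₁ (Iic s) := by
        rw [← hμ1, Measure.map_apply measurable_fst measurableSet_Iic]
        exact measure_mono fun p hp => hp.1
      rw [hF₁]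
      exact ENNReal.toReal_mono (measure_ne_top _ _) h1
    · have h1 : μ (Iic ((s, t) : ℝ × ℝ)) ≤ μ₂ (Iic t) := by
        rw [← hμ2, Measure.map_apply measurable_snd measurableSet_Iic]
        exact measure_mono fun p hp => hp.2
      rw [hF₂]
      exact ENNReal.toReal_mono (measure_ne_top _ _) h1
  -- marginal sections of k
  set g₁ : ℝ → ℝ := fun x => k x a₂ with hg₁def
  have hg₁anti : Antitone g₁ := fun x x' hxx' => hkanti1 x x' a₂ hxx'
  set g₂ : ℝ → ℝ := fun y => k a₁ y with hg₂def
  have hg₂anti : Antitone g₂ := fun y y' hyy' => hkanti2 a₁ y y' hyy'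
  -- countable grids
  set T₁ : Set ℝ := ({a₁, b₁} ∪ (Icc a₁ b₁ ∩ Set.range ((↑) : ℚ → ℝ)))
      ∪ ({x | ¬ContinuousAt g₁ x} ∩ {x | μ₁ {x} ≠ 0}) with hT₁def
  set T₂ : Set ℝ := ({a₂, b₂} ∪ (Icc a₂ b₂ ∩ Set.range ((↑) : ℚ → ℝ)))
      ∪ ({y | ¬ContinuousAt g₂ y} ∩ {y | μ₂ {y} ≠ 0}) with hT₂def
  have hT₁c : T₁.Countable := by
    refine Set.Countable.union (Set.Countable.union ?_ ?_) ?_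
    · exact ((Set.finite_singleton b₁).insert a₁).countable
    · exact Set.Countable.mono inter_subset_right (Set.countable_range _)
    · exact Set.Countable.mono inter_subset_left hg₁anti.countable_not_continuousAt
  have hT₂c : T₂.Countable := by
    refine Set.Countable.union (Set.Countable.union ?_ ?_) ?_
    · exact ((Set.finite_singleton b₂).insert a₂).countable
    · exact Set.Countable.mono inter_subset_right (Set.countable_range _)
    · exact Set.Countable.mono inter_subset_left hg₂anti.countable_not_continuousAt
  have hT₁sub : T₁ ⊆ Icc a₁ b₁ := by
    rintro x ((hx | hx) | hx)
    · simp only [mem_insert_iff, mem_singleton_iff] at hx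
      rcases hx with rfl | rfl
      exacts [⟨le_rfl, hab1⟩, ⟨hab1, le_rfl⟩]
    · exact hx.1
    · by_contra hmem
      exact hx.2 (measure_mono_null (singleton_subset_iff.2 hmem) hsupp₁)
  have hT₂sub : T₂ ⊆ Icc a₂ b₂ := by
    rintro y ((hy | hy) | hy)
    · simp only [mem_insert_iff, mem_singleton_iff] at hy
      rcases hy with rfl | rfl
      exacts [⟨le_rfl, hab2⟩, ⟨hab2, le_rfl⟩]
    · exact hy.1
    · by_contra hmem
      exact hy.2 (measure_mono_null (singleton_subset_iff.2 hmem) hsupp₂)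
  have hb₁T : b₁ ∈ T₁ := Or.inl (Or.inl (by simp))
  have ha₁T : a₁ ∈ T₁ := Or.inl (Or.inl (by simp))
  have hb₂T : b₂ ∈ T₂ := Or.inl (Or.inl (by simp))
  have ha₂T : a₂ ∈ T₂ := Or.inl (Or.inl (by simp))
  obtain ⟨s₁, hs₁⟩ := hT₁c.exists_eq_range ⟨b₁, hb₁T⟩
  obtain ⟨s₂, hs₂⟩ := hT₂c.exists_eq_range ⟨b₂, hb₂T⟩
  -- finite grids
  set Tf₁ : ℕ → Finset ℝ := fun n => insert b₁ ((Finset.range n).image s₁) with hTf₁def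
  set Tf₂ : ℕ → Finset ℝ := fun n => insert b₂ ((Finset.range n).image s₂) with hTf₂def
  have hTf₁mem : ∀ n t, t ∈ Tf₁ n → t ∈ Icc a₁ b₁ := by
    intro n t ht
    rcases Finset.mem_insert.1 ht with rfl | ht
    · exact ⟨hab1, le_rfl⟩
    · obtain ⟨i, _, rfl⟩ := Finset.mem_image.1 ht
      exact hT₁sub (by rw [hs₁]; exact mem_range_self i)
  have hTf₂mem : ∀ n t, t ∈ Tf₂ n → t ∈ Icc a₂ b₂ := by
    intro n t ht
    rcases Finset.mem_insert.1 ht with rfl | ht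
    · exact ⟨hab2, le_rfl⟩
    · obtain ⟨i, _, rfl⟩ := Finset.mem_image.1 ht
      exact hT₂sub (by rw [hs₂]; exact mem_range_self i)
  have hEN₁ : ∀ n : ℕ, ∃ (m : ℕ) (e : ℕ → ℝ), Monotone e ∧ e m = b₁ ∧
      (∀ i, e i ∈ Tf₁ n) ∧ ∀ t ∈ Tf₁ n, ∃ i, e i = t := fun n =>
    exists_enum (Tf₁ n) b₁ (Finset.mem_insert_self _ _) fun t ht => (hTf₁mem n t ht).2
  have hEN₂ : ∀ n : ℕ, ∃ (m : ℕ) (e : ℕ → ℝ), Monotone e ∧ e m = b₂ ∧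
      (∀ i, e i ∈ Tf₂ n) ∧ ∀ t ∈ Tf₂ n, ∃ i, e i = t := fun n =>
    exists_enum (Tf₂ n) b₂ (Finset.mem_insert_self _ _) fun t ht => (hTf₂mem n t ht).2
  choose m₁ e₁ he₁mono he₁top he₁mem he₁surj using hEN₁
  choose m₂ e₂ he₂mono he₂top he₂mem he₂surj using hEN₂
  have he₁le : ∀ n i, e₁ n i ≤ e₁ n (m₁ n) := by
    intro n i; rw [he₁top n]; exact (hTf₁mem n _ (he₁mem n i)).2
  have he₂le : ∀ n i, e₂ n i ≤ e₂ n (m₂ n) := by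
    intro n i; rw [he₂top n]; exact (hTf₂mem n _ (he₂mem n i)).2
  set ρ : ℕ → ℝ → ℝ := fun n => rPt (e₁ n) (m₁ n) with hρdef
  set σ : ℕ → ℝ → ℝ := fun n => rPt (e₂ n) (m₂ n) with hσdef
  have hρ_ge : ∀ n x, x ≤ b₁ → x ≤ ρ n x := fun n x hx =>
    le_rPt ⟨m₁ n, by rw [he₁top n]; exact hx⟩
  have hσ_ge : ∀ n y, y ≤ b₂ → y ≤ σ n y := fun n y hy =>
    le_rPt ⟨m₂ n, by rw [he₂top n]; exact hy⟩
  have hρ_le : ∀ n x t, t ∈ Tf₁ n → x ≤ t → ρ n x ≤ t := by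
    intro n x t ht hxt
    obtain ⟨i, hi⟩ := he₁surj n t ht
    have := rPt_le (m := m₁ n) (he₁mono n) (show x ≤ e₁ n i by rw [hi]; exact hxt)
    rwa [hi] at this
  have hσ_le : ∀ n y t, t ∈ Tf₂ n → y ≤ t → σ n y ≤ t := by
    intro n y t ht hyt
    obtain ⟨i, hi⟩ := he₂surj n t ht
    have := rPt_le (m := m₂ n) (he₂mono n) (show y ≤ e₂ n i by rw [hi]; exact hyt)
    rwa [hi] at this
  have hρ_mem : ∀ n x, ρ n x ∈ Icc a₁ b₁ := fun n x => hTf₁mem n _ (he₁mem n _)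
  have hσ_mem : ∀ n y, σ n y ∈ Icc a₂ b₂ := fun n y => hTf₂mem n _ (he₂mem n _)
  have hρ_junk : ∀ n x, b₁ < x → ρ n x = b₁ := by
    intro n x hx
    have hne : ¬ ∃ i, x ≤ e₁ n i := by
      rintro ⟨i, hi⟩
      exact absurd (le_trans hi (hTf₁mem n _ (he₁mem n i)).2) (not_le.2 hx)
    show rPt (e₁ n) (m₁ n) x = b₁
    unfold rPt
    rw [rIdx_neg hne, he₁top n]
  have hσ_junk : ∀ n y, b₂ < y → σ n y = b₂ := by
    intro n y hy
    have hne : ¬ ∃ i, y ≤ e₂ n i := by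
      rintro ⟨i, hi⟩
      exact absurd (le_trans hi (hTf₂mem n _ (he₂mem n i)).2) (not_le.2 hy)
    show rPt (e₂ n) (m₂ n) y = b₂
    unfold rPt
    rw [rIdx_neg hne, he₂top n]
  have hρ_eq : ∀ n x, x ∈ Tf₁ n → ρ n x = x := fun n x hx =>
    le_antisymm (hρ_le n x x hx le_rfl) (hρ_ge n x (hTf₁mem n x hx).2)
  have hσ_eq : ∀ n y, y ∈ Tf₂ n → σ n y = y := fun n y hy =>
    le_antisymm (hσ_le n y y hy le_rfl) (hσ_ge n y (hTf₂mem n y hy).2)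
  have hρmeas : ∀ n, Measurable (ρ n) := fun n =>
    (rPt_mono (he₁mono n) (he₁le n)).measurable
  have hσmeas : ∀ n, Measurable (σ n) := fun n =>
    (rPt_mono (he₂mono n) (he₂le n)).measurable
  have hT₁ev : ∀ t ∈ T₁, ∀ᶠ n in atTop, t ∈ Tf₁ n := by
    intro t ht
    rw [hs₁] at ht
    obtain ⟨i, rfl⟩ := ht
    refine eventually_atTop.2 ⟨i + 1, fun n hn => ?_⟩
    exact Finset.mem_insert_of_mem (Finset.mem_image_of_mem _ (Finset.mem_range.2 (by omega)))
  have hT₂ev : ∀ t ∈ T₂, ∀ᶠ n in atTop, t ∈ Tf₂ n := by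
    intro t ht
    rw [hs₂] at ht
    obtain ⟨i, rfl⟩ := ht
    refine eventually_atTop.2 ⟨i + 1, fun n hn => ?_⟩
    exact Finset.mem_insert_of_mem (Finset.mem_image_of_mem _ (Finset.mem_range.2 (by omega)))
  -- good points, coordinate 1
  set Bad₁ : Set ℝ := (Icc a₁ b₁ ∩ {x | ¬ContinuousAt g₁ x}) \ T₁ with hBad₁def
  set Bad₂ : Set ℝ := (Icc a₂ b₂ ∩ {y | ¬ContinuousAt g₂ y}) \ T₂ with hBad₂def
  have hGood₁ : ∀ x, x ∉ Bad₁ → Tendsto (fun n => g₁ (ρ n x)) atTop (𝓝 (g₁ x)) := by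
    intro x hx
    by_cases hxT : x ∈ T₁
    · refine Tendsto.congr' ?_ tendsto_const_nhds
      filter_upwards [hT₁ev x hxT] with n hn
      rw [hρ_eq n x hn]
    rcases lt_or_ge x a₁ with hxa | hxa
    · have hgx : g₁ x = g₁ a₁ := hklo1 x a₂ hxa.le
      rw [hgx]
      refine Tendsto.congr' ?_ tendsto_const_nhds
      filter_upwards [hT₁ev a₁ ha₁T] with n hn
      rw [le_antisymm (hρ_le n x a₁ hn hxa.le) (hρ_mem n x).1]
    rcases le_or_gt x b₁ with hxb | hxb
    · have hxIcc : x ∈ Icc a₁ b₁ := ⟨hxa, hxb⟩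
      have hcont : ContinuousAt g₁ x := by
        by_contra hnc
        exact hx ⟨⟨hxIcc, hnc⟩, hxT⟩
      have hxb' : x < b₁ := lt_of_le_of_ne hxb fun he => hxT (he ▸ hb₁T)
      have hρto : Tendsto (fun n => ρ n x) atTop (𝓝 x) := by
        rw [Metric.tendsto_atTop]
        intro ε hε
        obtain ⟨qr, hq1, hq2⟩ := exists_rat_btwn (lt_min (by linarith : x < x + ε) hxb')
        have hqT : (qr : ℝ) ∈ T₁ := Or.inl (Or.inr
          ⟨⟨le_trans hxa hq1.le, (lt_of_lt_of_le hq2 (min_le_right _ _)).le⟩, ⟨qr, rfl⟩⟩)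
        obtain ⟨N, hN⟩ := eventually_atTop.1 (hT₁ev _ hqT)
        refine ⟨N, fun n hn => ?_⟩
        have h1 : x ≤ ρ n x := hρ_ge n x hxb
        have h2 : ρ n x ≤ qr := hρ_le n x _ (hN n hn) hq1.le
        have h3 : (qr : ℝ) < x + ε := lt_of_lt_of_le hq2 (min_le_left _ _)
        rw [Real.dist_eq, abs_of_nonneg (by linarith)]
        linarith
      exact hcont.tendsto.comp hρto
    · have hgx : g₁ x = g₁ b₁ := by
        show k x a₂ = k b₁ a₂
        rw [hktop1 x a₂ hxb.le, hktop1 b₁ a₂ le_rfl]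
      rw [hgx]
      refine Tendsto.congr' ?_ tendsto_const_nhds
      refine Eventually.of_forall fun n => ?_
      show g₁ b₁ = g₁ (ρ n x)
      rw [hρ_junk n x hxb]
  have hGood₂ : ∀ y, y ∉ Bad₂ → Tendsto (fun n => g₂ (σ n y)) atTop (𝓝 (g₂ y)) := by
    intro y hy
    by_cases hyT : y ∈ T₂
    · refine Tendsto.congr' ?_ tendsto_const_nhds
      filter_upwards [hT₂ev y hyT] with n hn
      rw [hσ_eq n y hn]
    rcases lt_or_ge y a₂ with hya | hya
    · have hgy : g₂ y = g₂ a₂ := hklo2 a₁ y hya.le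
      rw [hgy]
      refine Tendsto.congr' ?_ tendsto_const_nhds
      filter_upwards [hT₂ev a₂ ha₂T] with n hn
      rw [le_antisymm (hσ_le n y a₂ hn hya.le) (hσ_mem n y).1]
    rcases le_or_gt y b₂ with hyb | hyb
    · have hyIcc : y ∈ Icc a₂ b₂ := ⟨hya, hyb⟩
      have hcont : ContinuousAt g₂ y := by
        by_contra hnc
        exact hy ⟨⟨hyIcc, hnc⟩, hyT⟩
      have hyb' : y < b₂ := lt_of_le_of_ne hyb fun he => hyT (he ▸ hb₂T)
      have hσto : Tendsto (fun n => σ n y) atTop (𝓝 y) := by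
        rw [Metric.tendsto_atTop]
        intro ε hε
        obtain ⟨qr, hq1, hq2⟩ := exists_rat_btwn (lt_min (by linarith : y < y + ε) hyb')
        have hqT : (qr : ℝ) ∈ T₂ := Or.inl (Or.inr
          ⟨⟨le_trans hya hq1.le, (lt_of_lt_of_le hq2 (min_le_right _ _)).le⟩, ⟨qr, rfl⟩⟩)
        obtain ⟨N, hN⟩ := eventually_atTop.1 (hT₂ev _ hqT)
        refine ⟨N, fun n hn => ?_⟩
        have h1 : y ≤ σ n y := hσ_ge n y hyb
        have h2 : σ n y ≤ qr := hσ_le n y _ (hN n hn) hq1.le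
        have h3 : (qr : ℝ) < y + ε := lt_of_lt_of_le hq2 (min_le_left _ _)
        rw [Real.dist_eq, abs_of_nonneg (by linarith)]
        linarith
      exact hcont.tendsto.comp hσto
    · have hgy : g₂ y = g₂ b₂ := by
        show k a₁ y = k a₁ b₂
        rw [hktop2 a₁ y hyb.le, hktop2 a₁ b₂ le_rfl]
      rw [hgy]
      refine Tendsto.congr' ?_ tendsto_const_nhds
      refine Eventually.of_forall fun n => ?_
      show g₂ b₂ = g₂ (σ n y)
      rw [hσ_junk n y hyb]
  -- pointwise convergence off the bad lines
  have hconv : ∀ x y, x ∉ Bad₁ → y ∉ Bad₂ →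
      Tendsto (fun n => k (ρ n x) (σ n y)) atTop (𝓝 (k x y)) := by
    intro x y hx hy
    rcases le_or_gt x b₁ with hxb | hxb
    · rcases le_or_gt y b₂ with hyb | hyb
      · have h1 := hGood₁ x hx
        have h2 := hGood₂ y hy
        have hdiff : Tendsto (fun n => k x y - k (ρ n x) (σ n y)) atTop (𝓝 0) := by
          have hb : Tendsto (fun n => (g₁ x - g₁ (ρ n x)) + (g₂ y - g₂ (σ n y))) atTop (𝓝 0) := by
            have hb1 : Tendsto (fun n => g₁ x - g₁ (ρ n x)) atTop (𝓝 (g₁ x - g₁ x)) :=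
              tendsto_const_nhds.sub h1
            have hb2 : Tendsto (fun n => g₂ y - g₂ (σ n y)) atTop (𝓝 (g₂ y - g₂ y)) :=
              tendsto_const_nhds.sub h2
            have := hb1.add hb2
            simpa using this
          refine squeeze_zero (fun n => ?_) (fun n => ?_) hb
          · have ha : k (ρ n x) y ≤ k x y := hkanti1 x (ρ n x) y (hρ_ge n x hxb)
            have hb' : k (ρ n x) (σ n y) ≤ k (ρ n x) y :=
              hkanti2 (ρ n x) y (σ n y) (hσ_ge n y hyb)
            linarith
          · have ha : k x y - k (ρ n x) y ≤ g₁ x - g₁ (ρ n x) :=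
              hg1bd x (ρ n x) y (hρ_ge n x hxb)
            have hb' : k (ρ n x) y - k (ρ n x) (σ n y) ≤ g₂ y - g₂ (σ n y) :=
              hg2bd (ρ n x) y (σ n y) (hσ_ge n y hyb)
            linarith
        have hfin : Tendsto (fun n => k x y - (k x y - k (ρ n x) (σ n y))) atTop
            (𝓝 (k x y - 0)) := Tendsto.sub tendsto_const_nhds hdiff
        simpa using hfin
      · have hz : ∀ n, k (ρ n x) (σ n y) = 0 := fun n => by
          rw [hσ_junk n y hyb]; exact hktop2 _ _ le_rfl
        rw [show k x y = 0 from hktop2 x y hyb.le]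
        exact Tendsto.congr (fun n => (hz n).symm) tendsto_const_nhds
    · have hz : ∀ n, k (ρ n x) (σ n y) = 0 := fun n => by
        rw [hρ_junk n x hxb]; exact hktop1 _ _ le_rfl
      rw [show k x y = 0 from hktop1 x y hxb.le]
      exact Tendsto.congr (fun n => (hz n).symm) tendsto_const_nhds
  -- bad sets are null
  have hBad₁c : Bad₁.Countable :=
    Set.Countable.mono (fun x hx => hx.1.2) hg₁anti.countable_not_continuousAt
  have hBad₂c : Bad₂.Countable :=
    Set.Countable.mono (fun y hy => hy.1.2) hg₂anti.countable_not_continuousAt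
  have hBad₁null : μ₁ Bad₁ = 0 := by
    rw [← biUnion_of_singleton Bad₁]
    refine (measure_biUnion_null_iff hBad₁c).2 fun x hx => ?_
    by_contra hatom
    exact hx.2 (Or.inr ⟨hx.1.2, hatom⟩)
  have hBad₂null : μ₂ Bad₂ = 0 := by
    rw [← biUnion_of_singleton Bad₂]
    refine (measure_biUnion_null_iff hBad₂c).2 fun y hy => ?_
    by_contra hatom
    exact hy.2 (Or.inr ⟨hy.1.2, hatom⟩)
  -- a.e. convergence for any coupling with these marginals
  have haeconv : ∀ γ : Measure (ℝ × ℝ), γ.map Prod.fst = μ₁ → γ.map Prod.snd = μ₂ →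
      ∀ᵐ p ∂γ, Tendsto (fun n => k (ρ n p.1) (σ n p.2)) atTop (𝓝 (k p.1 p.2)) := by
    intro γ hγ1 hγ2
    have hnull : γ (Prod.fst ⁻¹' Bad₁ ∪ Prod.snd ⁻¹' Bad₂) = 0 := by
      refine measure_union_null ?_ ?_
      · have he : γ (Prod.fst ⁻¹' Bad₁) = μ₁ Bad₁ := by
          rw [← hγ1, Measure.map_apply measurable_fst hBad₁c.measurableSet]
        rw [he]; exact hBad₁null
      · have he : γ (Prod.snd ⁻¹' Bad₂) = μ₂ Bad₂ := by
          rw [← hγ2, Measure.map_apply measurable_snd hBad₂c.measurableSet]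
        rw [he]; exact hBad₂null
    rw [ae_iff]
    refine measure_mono_null (fun p hp => ?_) hnull
    simp only [mem_setOf_eq] at hp
    by_contra hmem
    simp only [mem_union, mem_preimage] at hmem
    push_neg at hmem
    exact hp (hconv p.1 p.2 hmem.1 hmem.2)
  -- integral convergence
  have hγlim : ∀ γ : Measure (ℝ × ℝ), IsProbabilityMeasure γ →
      γ.map Prod.fst = μ₁ → γ.map Prod.snd = μ₂ →
      Tendsto (fun n => ∫ p, k (ρ n p.1) (σ n p.2) ∂γ) atTop (𝓝 (∫ p, k p.1 p.2 ∂γ)) := by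
    intro γ hγP hγ1 hγ2
    haveI := hγP
    refine tendsto_integral_of_dominated_convergence (fun _ => 4 * C) ?_
      (integrable_const _) ?_ (haeconv γ hγ1 hγ2)
    · intro n
      exact (hkmeas.comp (((hρmeas n).comp measurable_fst).prodMk
        ((hσmeas n).comp measurable_snd))).aestronglyMeasurable
    · intro n
      exact Eventually.of_forall fun p => by rw [Real.norm_eq_abs]; exact hkbd _ _
  have hklim : ∫ p, k p.1 p.2 ∂μ ≤ ∫ p, k p.1 p.2 ∂M := by
    refine le_of_tendsto_of_tendsto' (hγlim μ hμP hμ1 hμ2) (hγlim M hMP hmap1 hmap2) fun n => ?_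
    exact step_le k (e₁ n) (e₂ n) (m₁ n) (m₂ n) (he₁mono n) (he₂mono n) (he₁le n) (he₂le n)
      (fun y => by rw [he₁top n]; exact hktop1 b₁ y le_rfl)
      (fun x => by rw [he₂top n]; exact hktop2 x b₂ le_rfl)
      hkrect μ M hμle
  -- support of M
  have hMsupp : M (Icc ((a₁, a₂) : ℝ × ℝ) (b₁, b₂))ᶜ = 0 := by
    rw [hM, Measure.map_apply hΦm measurableSet_Icc.compl,
      Measure.restrict_apply (hΦm measurableSet_Icc.compl), meas_inter_Icc]
    have hempty : (fun u => (q₁ u, q₂ u)) ⁻¹' (Icc ((a₁, a₂) : ℝ × ℝ) (b₁, b₂))ᶜ ∩ Ioc 0 1 = ∅ := by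
      refine eq_empty_iff_forall_notMem.2 fun u hu => ?_
      rcases hu with ⟨hu1, hu2⟩
      refine hu1 ?_
      rw [mem_Icc]
      have hq1b : q₁ u ≤ b₁ := (q_le_iff hsupp₁ hF₁ hq₁ hu2.1 hu2.2 b₁).2
        (by rw [Fone hsupp₁ hF₁ le_rfl]; exact hu2.2)
      have hq2b : q₂ u ≤ b₂ := (q_le_iff hsupp₂ hF₂ hq₂ hu2.1 hu2.2 b₂).2
        (by rw [Fone hsupp₂ hF₂ le_rfl]; exact hu2.2)
      have hq1a : a₁ ≤ q₁ u := q_ge hsupp₁ hF₁ hq₁ hu2.1 hu2.2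
      have hq2a : a₂ ≤ q₂ u := q_ge hsupp₂ hF₂ hq₂ hu2.1 hu2.2
      exact ⟨⟨hq1a, hq2a⟩, ⟨hq1b, hq2b⟩⟩
    rw [hempty, measure_empty]
  -- integrability helper
  have hintegrable : ∀ (γ : Measure (ℝ × ℝ)), IsProbabilityMeasure γ →
      ∀ (f : ℝ × ℝ → ℝ) (c : ℝ), Measurable f → (∀ p, |f p| ≤ c) → Integrable f γ := by
    intro γ hγP f c hf hc
    haveI := hγP
    exact Integrable.mono' (integrable_const c) hf.aestronglyMeasurable
      (Eventually.of_forall fun p => by rw [Real.norm_eq_abs]; exact hc p)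
  -- decomposition of ∫ H
  have hφ₁meas : Measurable (fun x : ℝ => H (x, b₂)) :=
    hHmeas.comp (measurable_id.prodMk measurable_const)
  have hφ₂meas : Measurable (fun y : ℝ => H (b₁, y)) :=
    hHmeas.comp (measurable_const.prodMk measurable_id)
  have hdecomp : ∀ γ : Measure (ℝ × ℝ), IsProbabilityMeasure γ →
      γ.map Prod.fst = μ₁ → γ.map Prod.snd = μ₂ →
      ∫ p, H p ∂γ = ∫ p, k p.1 p.2 ∂γ
        + (∫ x, H (x, b₂) ∂μ₁ + ∫ y, H (b₁, y) ∂μ₂ - H (b₁, b₂)) := by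
    intro γ hγP hγ1 hγ2
    haveI := hγP
    have e1 : ∫ p, H p ∂γ
        = ∫ p, (k p.1 p.2 + (H (p.1, b₂) + H (b₁, p.2) - H (b₁, b₂))) ∂γ := by
      refine integral_congr_ae (Eventually.of_forall fun p => ?_)
      simp only [hkdef]
      rw [show H (p.1, p.2) = H p from by rw [Prod.mk.eta]]
      ring
    rw [e1]
    have i1 : Integrable (fun p : ℝ × ℝ => k p.1 p.2) γ :=
      hintegrable γ hγP _ (4 * C) hkmeas fun p => hkbd _ _
    have i2 : Integrable (fun p : ℝ × ℝ => H (p.1, b₂)) γ :=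
      hintegrable γ hγP _ C (hφ₁meas.comp measurable_fst) fun p => hHbd _
    have i3 : Integrable (fun p : ℝ × ℝ => H (b₁, p.2)) γ :=
      hintegrable γ hγP _ C (hφ₂meas.comp measurable_snd) fun p => hHbd _
    have key : ∫ p, (k p.1 p.2 + (H (p.1, b₂) + H (b₁, p.2) - H (b₁, b₂))) ∂γ
        = (∫ p, k p.1 p.2 ∂γ) + ∫ p, (H (p.1, b₂) + H (b₁, p.2) - H (b₁, b₂)) ∂γ :=
      integral_add i1 ((i2.add i3).sub (integrable_const _))
    have key2 : ∫ p, (H (p.1, b₂) + H (b₁, p.2) - H (b₁, b₂)) ∂γ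
        = (∫ p, (H (p.1, b₂) + H (b₁, p.2)) ∂γ) - ∫ _p : ℝ × ℝ, H (b₁, b₂) ∂γ :=
      integral_sub (i2.add i3) (integrable_const _)
    have key3 : ∫ p, (H (p.1, b₂) + H (b₁, p.2)) ∂γ
        = (∫ p, H (p.1, b₂) ∂γ) + ∫ p, H (b₁, p.2) ∂γ := integral_add i2 i3
    have key4 : ∫ _p : ℝ × ℝ, H (b₁, b₂) ∂γ = H (b₁, b₂) := by
      rw [integral_const, probReal_univ, one_smul]
    rw [key, key2, key3, key4]
    have hι1 : ∫ p : ℝ × ℝ, H (p.1, b₂) ∂γ = ∫ x, H (x, b₂) ∂μ₁ := by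
      rw [← hγ1]
      exact (integral_map measurable_fst.aemeasurable hφ₁meas.aestronglyMeasurable).symm
    have hι2 : ∫ p : ℝ × ℝ, H (b₁, p.2) ∂γ = ∫ y, H (b₁, y) ∂μ₂ := by
      rw [← hγ2]
      exact (integral_map measurable_snd.aemeasurable hφ₂meas.aestronglyMeasurable).symm
    rw [hι1, hι2]
  -- h agrees with H a.e. for measures supported on the box
  have hHh : ∀ γ : Measure (ℝ × ℝ), γ (Icc ((a₁, a₂) : ℝ × ℝ) (b₁, b₂))ᶜ = 0 →
      ∫ p, h p ∂γ = ∫ p, H p ∂γ := by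
    intro γ hγs
    refine integral_congr_ae ?_
    rw [Filter.EventuallyEq, ae_iff]
    refine measure_mono_null (fun p hp => ?_) hγs
    simp only [mem_setOf_eq] at hp
    by_contra hmem
    simp only [mem_compl_iff, not_not] at hmem
    rw [mem_Icc] at hmem
    refine hp ?_
    simp only [hHdef]
    rw [hcl₁id p.1 ⟨hmem.1.1, hmem.2.1⟩, hcl₂id p.2 ⟨hmem.1.2, hmem.2.2⟩, Prod.mk.eta]
  calc ∫ p, h p ∂μ = ∫ p, H p ∂μ := hHh μ hμsupp
    _ = ∫ p, k p.1 p.2 ∂μ + (∫ x, H (x, b₂) ∂μ₁ + ∫ y, H (b₁, y) ∂μ₂ - H (b₁, b₂)) :=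
        hdecomp μ hμP hμ1 hμ2
    _ ≤ ∫ p, k p.1 p.2 ∂M + (∫ x, H (x, b₂) ∂μ₁ + ∫ y, H (b₁, y) ∂μ₂ - H (b₁, b₂)) := by
        linarith
    _ = ∫ p, H p ∂M := (hdecomp M hMP hmap1 hmap2).symm
    _ = ∫ p, h p ∂M := (hHh M hMsupp).symm
end

section
/- Let X, X′ be independent bounded real random variables and Y, Y′ be independent bounded real random variables. If X second-order stochastically dominates Y and X′ second-order stochastically dominates Y′, then X + X′ second-order stochastically dominates Y + Y′. -/
open MeasureTheory ProbabilityTheory ENNReal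

/-- The CDF of a real random variable `X` under `P`. -/
noncomputable def rvCdf {Ω : Type*} [MeasurableSpace Ω] (P : Measure Ω) (X : Ω → ℝ) : ℝ → ℝ :=
  fun x => (P {ω | X ω ≤ x}).toReal

/-- Second-order stochastic dominance: `X ≿_SOSD Y` iff the integrated CDF of `X`
is everywhere below that of `Y`. -/
def SOSD {Ω : Type*} [MeasurableSpace Ω] (P : Measure Ω) (X Y : Ω → ℝ) : Prop :=
  ∀ t : ℝ, ∫ x in Set.Iic t, rvCdf P X x ≤ ∫ x in Set.Iic t, rvCdf P Y x

lemma lintegral_cdf_eq {Ω : Type*} [MeasurableSpace Ω] (P : Measure Ω) [IsFiniteMeasure P]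
    (X : Ω → ℝ) (hX : Measurable X) (t : ℝ) :
    ∫⁻ x in Set.Iic t, P {ω | X ω ≤ x} = ∫⁻ ω, ENNReal.ofReal (t - X ω) ∂P := by
  have hS : MeasurableSet {p : ℝ × Ω | X p.2 ≤ p.1} :=
    measurableSet_le (hX.comp measurable_snd) measurable_fst
  set f : ℝ → Ω → ℝ≥0∞ := fun x ω => Set.indicator {p : ℝ × Ω | X p.2 ≤ p.1} 1 (x, ω) with hf
  have huncurry : Measurable (Function.uncurry f) := by
    have : Function.uncurry f = Set.indicator {p : ℝ × Ω | X p.2 ≤ p.1} 1 := rfl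
    rw [this]
    exact measurable_one.indicator hS
  have h1 : ∀ x : ℝ, P {ω | X ω ≤ x} = ∫⁻ ω, f x ω ∂P := by
    intro x
    have : (fun ω => f x ω) = Set.indicator {ω | X ω ≤ x} (fun _ => (1:ℝ≥0∞)) := by
      funext ω
      simp [hf, Set.indicator_apply]
    rw [this, lintegral_indicator_const (show MeasurableSet {ω | X ω ≤ x} from hX measurableSet_Iic), one_mul]
  have h2 : ∀ ω : Ω, ∫⁻ x in Set.Iic t, f x ω = ENNReal.ofReal (t - X ω) := by
    intro ω
    have : (fun x => f x ω) = Set.indicator (Set.Ici (X ω)) (fun _ => (1:ℝ≥0∞)) := by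
      funext x
      simp [hf, Set.indicator_apply]
    rw [this, lintegral_indicator_const measurableSet_Ici, one_mul,
      Measure.restrict_apply measurableSet_Ici, Set.Ici_inter_Iic, Real.volume_Icc]
  calc ∫⁻ x in Set.Iic t, P {ω | X ω ≤ x}
      = ∫⁻ x in Set.Iic t, ∫⁻ ω, f x ω ∂P := by simp_rw [h1]
    _ = ∫⁻ ω, (∫⁻ x in Set.Iic t, f x ω) ∂P :=
        lintegral_lintegral_swap huncurry.aemeasurable
    _ = ∫⁻ ω, ENNReal.ofReal (t - X ω) ∂P := by simp_rw [h2]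

lemma integral_rvCdf_eq {Ω : Type*} [MeasurableSpace Ω] (P : Measure Ω) [IsProbabilityMeasure P]
    (X : Ω → ℝ) (hX : Measurable X) (t : ℝ) :
    ∫ x in Set.Iic t, rvCdf P X x = (∫⁻ ω, ENNReal.ofReal (t - X ω) ∂P).toReal := by
  rw [← lintegral_cdf_eq P X hX t]
  have hmono : Monotone (fun x : ℝ => P {ω | X ω ≤ x}) := by
    intro a b hab
    exact measure_mono (fun ω h => le_trans h hab)
  exact integral_toReal (hmono.measurable.aemeasurable)
    (Filter.Eventually.of_forall (fun x => (prob_le_one).trans_lt ENNReal.one_lt_top))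

lemma lint_ne_top {Ω : Type*} [MeasurableSpace Ω] (P : Measure Ω) [IsProbabilityMeasure P]
    (X : Ω → ℝ) (C : ℝ) (hb : ∀ ω, |X ω| ≤ C) (t : ℝ) :
    ∫⁻ ω, ENNReal.ofReal (t - X ω) ∂P ≠ ⊤ := by
  have h : ∀ ω, ENNReal.ofReal (t - X ω) ≤ ENNReal.ofReal (t + C) := fun ω =>
    ENNReal.ofReal_le_ofReal (by have := abs_le.1 (hb ω); linarith)
  refine ((lintegral_mono h).trans_lt ?_).ne
  simp [lintegral_const]

lemma sosd_lintegral {Ω : Type*} [MeasurableSpace Ω] (P : Measure Ω) [IsProbabilityMeasure P]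
    (X Y : Ω → ℝ) (hX : Measurable X) (hY : Measurable Y)
    (hbX : ∃ C, ∀ ω, |X ω| ≤ C) (hbY : ∃ C, ∀ ω, |Y ω| ≤ C)
    (h : SOSD P X Y) (t : ℝ) :
    ∫⁻ y, ENNReal.ofReal (t - y) ∂(P.map X) ≤ ∫⁻ y, ENNReal.ofReal (t - y) ∂(P.map Y) := by
  obtain ⟨C, hC⟩ := hbX
  obtain ⟨C', hC'⟩ := hbY
  have hm : Measurable fun y : ℝ => ENNReal.ofReal (t - y) :=
    (measurable_const.sub measurable_id).ennreal_ofReal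
  rw [lintegral_map hm hX, lintegral_map hm hY]
  have h1 := h t
  rw [integral_rvCdf_eq P X hX t, integral_rvCdf_eq P Y hY t] at h1
  exact (ENNReal.toReal_le_toReal (lint_ne_top P X C hC t) (lint_ne_top P Y C' hC' t)).mp h1

/-- If `X, X′` are independent, `Y, Y′` are independent, all bounded,
`X ≿_SOSD Y` and `X′ ≿_SOSD Y′`, then `X + X′ ≿_SOSD Y + Y′`. -/
theorem sosd_add_of_indep
    {Ω : Type*} [MeasurableSpace Ω] (P : Measure Ω) [IsProbabilityMeasure P]
    (X X' Y Y' : Ω → ℝ)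
    (hX : Measurable X) (hX' : Measurable X') (hY : Measurable Y) (hY' : Measurable Y')
    (hbX : ∃ C, ∀ ω, |X ω| ≤ C) (hbX' : ∃ C, ∀ ω, |X' ω| ≤ C)
    (hbY : ∃ C, ∀ ω, |Y ω| ≤ C) (hbY' : ∃ C, ∀ ω, |Y' ω| ≤ C)
    (hindX : IndepFun X X' P) (hindY : IndepFun Y Y' P)
    (h₁ : SOSD P X Y) (h₂ : SOSD P X' Y') :
    SOSD P (fun ω => X ω + X' ω) (fun ω => Y ω + Y' ω) := by
  intro t
  obtain ⟨CY, hCY⟩ := id hbY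
  obtain ⟨CY', hCY'⟩ := id hbY'
  set μ := P.map X
  set μ' := P.map X'
  set ν := P.map Y
  set ν' := P.map Y'
  have hμ : IsProbabilityMeasure μ := Measure.isProbabilityMeasure_map hX.aemeasurable
  have hμ' : IsProbabilityMeasure μ' := Measure.isProbabilityMeasure_map hX'.aemeasurable
  have hν : IsProbabilityMeasure ν := Measure.isProbabilityMeasure_map hY.aemeasurable
  have hν' : IsProbabilityMeasure ν' := Measure.isProbabilityMeasure_map hY'.aemeasurable
  have hg : ∀ s : ℝ, Measurable (fun p : ℝ × ℝ => ENNReal.ofReal (s - (p.1 + p.2))) := fun s =>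
    ENNReal.measurable_ofReal.comp (measurable_const.sub (measurable_fst.add measurable_snd))
  -- express both sides as double lintegrals over product of marginals
  have key : ∀ (Z Z' : Ω → ℝ), Measurable Z → Measurable Z' → IndepFun Z Z' P →
      ∫⁻ ω, ENNReal.ofReal (t - (Z ω + Z' ω)) ∂P
        = ∫⁻ x, ∫⁻ x', ENNReal.ofReal (t - (x + x')) ∂(P.map Z') ∂(P.map Z) := by
    intro Z Z' hZ hZ' hind
    have hmap : P.map (fun ω => (Z ω, Z' ω)) = (P.map Z).prod (P.map Z') :=
      (indepFun_iff_map_prod_eq_prod_map_map hZ.aemeasurable hZ'.aemeasurable).mp hind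
    have hpm : IsProbabilityMeasure (P.map Z) := Measure.isProbabilityMeasure_map hZ.aemeasurable
    have hpm' : IsProbabilityMeasure (P.map Z') := Measure.isProbabilityMeasure_map hZ'.aemeasurable
    calc ∫⁻ ω, ENNReal.ofReal (t - (Z ω + Z' ω)) ∂P
        = ∫⁻ p, ENNReal.ofReal (t - (p.1 + p.2)) ∂(P.map (fun ω => (Z ω, Z' ω))) :=
          (lintegral_map (hg t) (hZ.prodMk hZ')).symm
      _ = ∫⁻ p, ENNReal.ofReal (t - (p.1 + p.2)) ∂((P.map Z).prod (P.map Z')) := by rw [hmap]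
      _ = ∫⁻ x, ∫⁻ x', ENNReal.ofReal (t - (x + x')) ∂(P.map Z') ∂(P.map Z) :=
          lintegral_prod _ (hg t).aemeasurable
  rw [integral_rvCdf_eq P (fun ω => X ω + X' ω) (hX.add hX') t, integral_rvCdf_eq P (fun ω => Y ω + Y' ω) (hY.add hY') t]
  refine ENNReal.toReal_mono
    (lint_ne_top P _ (CY + CY') (fun ω => (abs_add_le _ _).trans (add_le_add (hCY ω) (hCY' ω))) t) ?_
  rw [key X X' hX hX' hindX, key Y Y' hY hY' hindY]
  have swap1 : ∫⁻ x, ∫⁻ y', ENNReal.ofReal (t - (x + y')) ∂ν' ∂μ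
      = ∫⁻ y', ∫⁻ x, ENNReal.ofReal (t - (x + y')) ∂μ ∂ν' :=
    lintegral_lintegral_swap (hg t).aemeasurable
  have swap2 : ∫⁻ y', ∫⁻ y, ENNReal.ofReal (t - (y + y')) ∂ν ∂ν'
      = ∫⁻ y, ∫⁻ y', ENNReal.ofReal (t - (y + y')) ∂ν' ∂ν :=
    (lintegral_lintegral_swap (hg t).aemeasurable).symm
  calc ∫⁻ x, ∫⁻ x', ENNReal.ofReal (t - (x + x')) ∂μ' ∂μ
      ≤ ∫⁻ x, ∫⁻ y', ENNReal.ofReal (t - (x + y')) ∂ν' ∂μ := by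
        refine lintegral_mono fun x => ?_
        have := sosd_lintegral P X' Y' hX' hY' hbX' hbY' h₂ (t - x)
        simpa [sub_add_eq_sub_sub] using this
    _ = ∫⁻ y', ∫⁻ x, ENNReal.ofReal (t - (x + y')) ∂μ ∂ν' := swap1
    _ ≤ ∫⁻ y', ∫⁻ y, ENNReal.ofReal (t - (y + y')) ∂ν ∂ν' := by
        refine lintegral_mono fun y' => ?_
        have := sosd_lintegral P X Y hX hY hbX hbY h₁ (t - y')
        have e : ∀ (z : ℝ), t - (z + y') = (t - y') - z := by intro z; ring
        simpa [e] using this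
    _ = ∫⁻ y, ∫⁻ y', ENNReal.ofReal (t - (y + y')) ∂ν' ∂ν := swap2
end
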